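/- arXiv:1605.09179 — 6 statements merged into one kernel-verified Lean document; each statement's English description precedes it below -/
import Mathlib

section
/- For any prime p > 3, the sum over k from 0 to p-1 of binom(2k,k)^2/16^k is congruent to (-1)^((p-1)/2) modulo p^2. -/
open Finset Polynomial

lemma idA (k : ℕ) : (k.factorial : ℤ) * ((2*k).choose k) = 2^k * ∏ j ∈ range k, (2*(j:ℤ)+1) := by
  induction k with
  | zero => simp
  | succ k ih =>
    have h := Nat.succ_mul_centralBinom_succ k
    have h' : ((k+1 : ℕ) : ℤ) * ((2*(k+1)).choose (k+1)) = 2 * (2*k+1) * ((2*k).choose k) := by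
      have : (2*(k+1)).choose (k+1) = (k+1).centralBinom := by
        simp [Nat.centralBinom]
      rw [this]
      exact_mod_cast congrArg (Nat.cast : ℕ → ℤ) h
    rw [prod_range_succ, Nat.factorial_succ]
    push_cast
    push_cast at ih h'
    linear_combination (k.factorial:ℤ) * h' + 2*(2*(k:ℤ)+1) * ih

lemma idB (m : ℕ) : ∀ k : ℕ, k ≤ m →
    ((k.factorial : ℤ))^2 * 4^k * (-1)^k * (m.choose k) * ((m+k).choose k)
      = ∏ j ∈ range k, ((2*(j:ℤ)+1)^2 - (2*m+1)^2) := by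
  intro k
  induction k with
  | zero => simp
  | succ k ih =>
    intro hk1
    have hk : k ≤ m := Nat.le_of_succ_le hk1
    have IH := ih hk
    have e1 : ((k:ℤ)+1) * (m.choose (k+1)) = (m.choose k) * ((m:ℤ) - k) := by
      have := Nat.choose_succ_right_eq m k
      have h2 : ((m.choose (k+1) * (k+1) : ℕ) : ℤ) = ((m.choose k * (m - k) : ℕ) : ℤ) := by
        exact congrArg (Nat.cast : ℕ → ℤ) this
      push_cast [Nat.cast_sub hk] at h2
      linarith
    have e2 : ((k:ℤ)+1) * ((m+k+1).choose (k+1)) = ((m:ℤ)+k+1) * ((m+k).choose k) := by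
      have := Nat.add_one_mul_choose_eq (m+k) k
      have h2 : (((m+k+1) * (m+k).choose k : ℕ) : ℤ) = (((m+k+1).choose (k+1) * (k+1) : ℕ) : ℤ) := by
        exact congrArg (Nat.cast : ℕ → ℤ) this
      push_cast at h2
      linarith
    rw [prod_range_succ, Nat.factorial_succ]
    push_cast
    push_cast at IH
    have hm : (m.choose (k+1) : ℤ) * ((m+(k+1)).choose (k+1)) * ((k:ℤ)+1)^2
        = (m.choose k) * ((m:ℤ)-k) * (((m:ℤ)+k+1) * ((m+k).choose k)) := by
      have : ((m+(k+1)).choose (k+1) : ℤ) = ((m+k+1).choose (k+1) : ℤ) := by norm_num [add_assoc]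
      rw [this]
      linear_combination (((m:ℤ)+k+1) * ((m+k).choose k)) * e1 + ((m.choose (k+1):ℤ) * ((k:ℤ)+1)) * e2
    linear_combination (-4*((k.factorial:ℤ))^2*4^k*(-1)^k) * hm
      + ((-4)*((m:ℤ)-k)*((m:ℤ)+k+1)) * IH

lemma idC (m : ℕ) :
    ∑ k ∈ range (m+1), (-1:ℤ)^k * (m.choose k) * ((m+k).choose k) = (-1)^m := by
  have key : ∑ k ∈ range (m+1), (C ((-1:ℤ)^k * (m.choose k))) * (X+1)^(m+k)
      = (X+1)^m * (-X)^m := by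
    have hb : ((-(X+1)) + 1 : Polynomial ℤ)^m
        = ∑ k ∈ range (m+1), (-(X+1))^k * 1^(m-k) * (m.choose k) := add_pow _ _ _
    have hx : ((-(X+1)) + 1 : Polynomial ℤ) = -X := by ring
    rw [← hx, hb, mul_sum]
    refine sum_congr rfl fun k hk => ?_
    rw [C_mul, map_natCast, show ((-1:ℤ)^k) = ((-1:ℤ))^k from rfl, map_pow, map_neg, map_one]
    rw [one_pow, mul_one, pow_add, show (-(X+1) : Polynomial ℤ) = (-1) * (X+1) by ring, mul_pow]
    ring
  have hc := congrArg (fun q => q.coeff m) key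
  simp only [finset_sum_coeff, coeff_C_mul] at hc
  have hl : ∀ k ∈ range (m+1), (-1:ℤ)^k * (m.choose k) * (((X+1):Polynomial ℤ)^(m+k)).coeff m
      = (-1:ℤ)^k * (m.choose k) * ((m+k).choose k) := by
    intro k hk
    rw [coeff_X_add_one_pow, Nat.choose_symm_add]
  rw [sum_congr rfl hl] at hc
  rw [hc]
  have h2 : ((X+1:Polynomial ℤ)^m * (-X)^m) = C ((-1)^m) * (X^m * (X+1)^m) := by
    rw [neg_pow]
    simp [C_pow]
    ring
  have h3 := coeff_X_pow_mul ((X+1:Polynomial ℤ)^m) m 0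
  rw [zero_add] at h3
  rw [h2, coeff_C_mul, h3, coeff_X_add_one_pow]
  simp

lemma term_eq (p m k : ℕ) (hp : p.Prime) (h3 : 3 < p) (hpm : p = 2*m+1) (hk : k ≤ m) :
    (((2*k).choose k : ZMod (p^2)))^2 * ((16 : ZMod (p^2))^k)⁻¹
      = (((-1:ℤ)^k * (m.choose k) * ((m+k).choose k) : ℤ) : ZMod (p^2)) := by
  have hp0 : ((p : ZMod (p^2)))^2 = 0 := by
    have := ZMod.natCast_self (p^2)
    push_cast at this
    exact this
  have hcop16 : Nat.Coprime 16 (p^2) := by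
    apply Nat.Coprime.pow_right
    rw [Nat.coprime_comm]
    apply (Nat.Prime.coprime_iff_not_dvd hp).mpr
    intro h
    have h2 : p ∣ 2 := hp.dvd_of_dvd_pow (n := 4) (by norm_num; exact_mod_cast h)
    have := Nat.le_of_dvd (by norm_num) h2
    omega
  have hu16 : IsUnit ((16 : ZMod (p^2))) := by
    have := (ZMod.isUnit_iff_coprime 16 (p^2)).mpr hcop16
    simpa using this
  have hu16k : IsUnit ((16 : ZMod (p^2))^k) := hu16.pow k
  have hfu : IsUnit ((k.factorial : ZMod (p^2))) := by
    apply (ZMod.isUnit_iff_coprime _ _).mpr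
    apply Nat.Coprime.pow_right
    rw [Nat.coprime_comm]
    apply (Nat.Prime.coprime_iff_not_dvd hp).mpr
    rw [Nat.Prime.dvd_factorial hp]
    omega
  have key : (((2*k).choose k : ZMod (p^2)))^2
      = (((-1:ℤ)^k * (m.choose k) * ((m+k).choose k) : ℤ) : ZMod (p^2)) * (16 : ZMod (p^2))^k := by
    apply (hfu.pow 2).mul_left_cancel
    have hA := congrArg (Int.cast : ℤ → ZMod (p^2)) (idA k)
    have hB := congrArg (Int.cast : ℤ → ZMod (p^2)) (idB m k hk)
    push_cast at hA hB
    have hprod : (∏ j ∈ range k, ((2*(j:ZMod (p^2))+1)^2 - (2*(m:ZMod (p^2))+1)^2))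
        = ∏ j ∈ range k, (2*(j:ZMod (p^2))+1)^2 := by
      refine prod_congr rfl fun j _ => ?_
      have : (2*(m:ZMod (p^2))+1) = (p : ZMod (p^2)) := by
        rw [hpm]; push_cast; ring
      rw [this, hp0, sub_zero]
    rw [hprod] at hB
    have h2 : ((4 : ZMod (p^2)))^k = ((2:ZMod (p^2))^k)^2 := by
      rw [show (4 : ZMod (p^2)) = 2^2 by norm_num, ← pow_mul, ← pow_mul, Nat.mul_comm]
    have h16 : ((16 : ZMod (p^2)))^k = ((2:ZMod (p^2))^k)^4 := by
      rw [show (16 : ZMod (p^2)) = 2^4 by norm_num, ← pow_mul, ← pow_mul, Nat.mul_comm]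
    rw [h2] at hB
    rw [h16]
    rw [prod_pow] at hB
    push_cast
    set t := (2:ZMod (p^2))^k with ht
    set P := ∏ j ∈ range k, (2*(j:ZMod (p^2))+1) with hP
    set F := (k.factorial : ZMod (p^2)) with hF
    set c := (((2*k).choose k : ℕ) : ZMod (p^2)) with hc
    linear_combination (F*c + t*P) * hA - t^2 * hB
  rw [key, mul_assoc, ZMod.mul_inv_of_unit _ hu16k, mul_one]

theorem sum_central_binom_sq (p : ℕ) (hp : p.Prime) (h3 : 3 < p) :
    ∑ k ∈ Finset.range p,
        ((Nat.choose (2*k) k : ZMod (p^2))^2 * ((16 : ZMod (p^2))^k)⁻¹)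
      = (-1)^((p-1)/2) := by
  obtain ⟨m, hpm⟩ : ∃ m, p = 2*m+1 := by
    rcases hp.odd_of_ne_two (by omega) with ⟨m, hm⟩
    exact ⟨m, by omega⟩
  have hmp : m + 1 ≤ p := by omega
  rw [Finset.range_eq_Ico, ← Finset.sum_Ico_consecutive _ (Nat.zero_le (m+1)) hmp]
  have hzero : ∑ k ∈ Finset.Ico (m+1) p,
      ((Nat.choose (2*k) k : ZMod (p^2))^2 * ((16 : ZMod (p^2))^k)⁻¹) = 0 := by
    apply Finset.sum_eq_zero
    intro k hk
    rw [Finset.mem_Ico] at hk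
    have hd : p ∣ (2*k).choose k := by
      apply hp.dvd_choose (by omega : k < p) (by omega : 2*k - k < p) (by omega : p ≤ 2*k)
    obtain ⟨t, ht⟩ := hd
    have : ((2*k).choose k : ZMod (p^2)) ^ 2 = 0 := by
      rw [ht]
      push_cast
      rw [mul_pow]
      have hp0 : ((p : ZMod (p^2)))^2 = 0 := by
        have := ZMod.natCast_self (p^2)
        push_cast at this
        exact this
      rw [hp0, zero_mul]
    rw [this, zero_mul]
  rw [hzero, add_zero]
  have hIco : Finset.Ico 0 (m+1) = Finset.range (m+1) := by
    rw [Finset.range_eq_Ico]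
  rw [hIco]
  have hterms : ∀ k ∈ Finset.range (m+1),
      ((Nat.choose (2*k) k : ZMod (p^2))^2 * ((16 : ZMod (p^2))^k)⁻¹)
        = (((-1:ℤ)^k * (m.choose k) * ((m+k).choose k) : ℤ) : ZMod (p^2)) := by
    intro k hk
    rw [Finset.mem_range] at hk
    exact term_eq p m k hp h3 hpm (by omega)
  rw [Finset.sum_congr rfl hterms, ← Int.cast_sum, idC m]
  have : (p-1)/2 = m := by omega
  rw [this]
  push_cast
  ring
end

section
/- For any prime p > 3, the sum over k from 0 to p-1 of binom(2k,k)·binom(3k,k)/27^k is congruent to the Legendre symbol (-3/p) modulo p^2. -/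
open Finset Polynomial

namespace SB

/-- falling-type product: ∏_{i<n} (z - i) -/
def Q (z : ℤ) (n : ℕ) : ℤ := ∏ i ∈ Finset.range n, (z - (i:ℤ))

def Pk (k : ℕ) (y : ℤ) : ℤ := Q y k * Q (y + k) k

def dk (p k : ℕ) : ℕ := ∏ i ∈ Finset.range (p - 1 - k), (k + 1 + i)

def s (p k : ℕ) : ℤ := (-1)^k * (dk p k : ℤ)^2

def f (p : ℕ) (y : ℤ) : ℤ := ∑ k ∈ Finset.range p, s p k * Pk k y

lemma Q_zero (z : ℤ) : Q z 0 = 1 := by simp [Q]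

lemma Q_top (z : ℤ) (n : ℕ) : Q z (n+1) = Q z n * (z - n) := by
  simp [Q, Finset.prod_range_succ]

lemma Q_bot (z : ℤ) (n : ℕ) : Q z (n+1) = z * Q (z-1) n := by
  rw [Q, Finset.prod_range_succ']
  simp only [Nat.cast_add, Nat.cast_one, Nat.cast_zero, sub_zero]
  rw [mul_comm, Q]
  congr 1
  apply Finset.prod_congr rfl
  intro i _
  ring

lemma Q_eq_zero {z : ℤ} {n j : ℕ} (hj : j < n) (hz : z = j) : Q z n = 0 := by
  apply Finset.prod_eq_zero (Finset.mem_range.mpr hj)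
  rw [hz, sub_self]

/-- the per-k three term identity -/
lemma perk (k : ℕ) (hk : 1 ≤ k) (y : ℤ) :
    (y+1) * Pk k (y+1) - (2*y+1) * Pk k y + y * Pk k (y-1)
      = 2*(2*y+1)*(k:ℤ)^2 * Pk (k-1) y := by
  match k, hk with
  | 1, _ =>
    simp only [Pk, Q, Finset.prod_range_one, Finset.prod_range_zero, Nat.cast_one,
      Nat.cast_zero, sub_zero]
    ring
  | (j+2), _ =>
    set W : ℤ := Q (y-1) j with hW
    set V : ℤ := Q (y+j+1) j with hV
    have c2 : ((j+2:ℕ) : ℤ) = (j:ℤ)+2 := by push_cast; ring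
    have c1 : ((j+1:ℕ) : ℤ) = (j:ℤ)+1 := by push_cast; ring
    have e1 : Q (y+1) (j+2) = (y+1)*y*W := by
      rw [show j+2 = (j+1)+1 from rfl, Q_bot, show y+1-1 = y from by ring, Q_bot]; ring
    have e2 : Q y (j+2) = y*W*(y-1-j) := by
      rw [show j+2 = (j+1)+1 from rfl, Q_bot, Q_top]; ring
    have e3 : Q (y-1) (j+2) = W*(y-1-j)*(y-2-j) := by
      rw [show j+2 = (j+1)+1 from rfl, Q_top, Q_top, c1]; ring
    have e4 : Q (y+1+(j+2:ℕ)) (j+2) = (y+j+3)*(y+j+2)*V := by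
      rw [c2, show y+1+((j:ℤ)+2) = (y+j+2)+1 from by ring, show j+2 = (j+1)+1 from rfl,
        Q_bot, show y+(j:ℤ)+2+1-1 = (y+j+1)+1 from by ring, Q_bot,
        show y+(j:ℤ)+1+1-1 = y+j+1 from by ring]
      ring
    have e5 : Q (y+(j+2:ℕ)) (j+2) = (y+j+2)*V*(y+1) := by
      rw [c2, show y+((j:ℤ)+2) = (y+j+1)+1 from by ring, show j+2 = (j+1)+1 from rfl,
        Q_bot, show y+(j:ℤ)+1+1-1 = y+j+1 from by ring, Q_top]
      ring
    have e6 : Q (y-1+(j+2:ℕ)) (j+2) = V*(y+1)*y := by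
      rw [c2, show y-1+((j:ℤ)+2) = (y+j+1) from by ring, show j+2 = (j+1)+1 from rfl,
        Q_top, Q_top]
      rw [← hV]; push_cast; ring
    have e7 : Q y (j+1) = y*W := by rw [Q_bot]
    have e8 : Q (y+(j+1:ℕ)) (j+1) = V*(y+1) := by
      rw [c1, show y+((j:ℤ)+1) = y+j+1 from by ring, Q_top]
      rw [← hV]; push_cast; ring
    show (y+1) * Pk (j+2) (y+1) - (2*y+1) * Pk (j+2) y + y * Pk (j+2) (y-1)
      = 2*(2*y+1)*((j+2:ℕ):ℤ)^2 * Pk (j+1) y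
    rw [Pk, Pk, Pk, Pk, e1, e2, e3, e4, e5, e6, e7, e8, c2]
    ring



lemma dk_top (p : ℕ) : dk p (p-1) = 1 := by
  simp [dk]

lemma dk_step (p k : ℕ) (h : k + 1 ≤ p - 1) : dk p k = (k+1) * dk p (k+1) := by
  have h2 : p - 1 - k = (p - 1 - (k+1)) + 1 := by omega
  rw [dk, h2, Finset.prod_range_succ', dk]
  simp only [Nat.add_zero]
  rw [mul_comm]
  congr 1
  apply Finset.prod_congr rfl
  intro i _
  omega

lemma dk_factorial (p : ℕ) : ∀ j, j ≤ p - 1 → (p-1-j).factorial * dk p (p-1-j) = (p-1).factorial := by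
  intro j
  induction j with
  | zero => simp [dk_top]
  | succ n ih =>
    intro hn
    have h1 : p - 1 - (n+1) + 1 = p - 1 - n := by omega
    have h2 : p - 1 - (n+1) + 1 ≤ p - 1 := by omega
    have := dk_step p (p-1-(n+1)) (by omega)
    rw [this, h1]
    have : (p-1-(n+1)).factorial * ((p-1-(n+1)+1) * dk p (p-1-(n+1)+1)) =
        (p-1-(n+1)+1).factorial * dk p (p-1-(n+1)+1) := by
      rw [Nat.factorial_succ]; ring
    rw [h1] at this
    rw [this]
    exact ih (by omega)

lemma dk_fact (p k : ℕ) (h : k ≤ p - 1) : k.factorial * dk p k = (p-1).factorial := by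
  have := dk_factorial p (p-1-k) (by omega)
  rwa [show p-1-(p-1-k) = k by omega] at this

lemma dk_zero (p : ℕ) : dk p 0 = (p-1).factorial := by
  have := dk_fact p 0 (Nat.zero_le _)
  simpa using this

lemma s_succ (p k : ℕ) (h : k + 1 ≤ p - 1) : ((k:ℤ)+1)^2 * s p (k+1) = - s p k := by
  rw [s, s, dk_step p k h]
  push_cast
  ring

/-- master three-term identity for f -/
lemma masterf (p : ℕ) (hp : 2 ≤ p) (hodd : p % 2 = 1) (y : ℤ) :
    (y+1) * f p (y+1) + (2*y+1) * f p y + y * f p (y-1)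
      = 2*(2*y+1) * Pk (p-1) y := by
  obtain ⟨n, rfl⟩ : ∃ n, p = n + 1 := ⟨p-1, by omega⟩
  simp only [Nat.add_sub_cancel]
  have key : (y+1) * f (n+1) (y+1) - (2*y+1) * f (n+1) y + y * f (n+1) (y-1)
      = ∑ k ∈ Finset.range (n+1), s (n+1) k * ((y+1) * Pk k (y+1) - (2*y+1) * Pk k y + y * Pk k (y-1)) := by
    rw [f, f, f, Finset.mul_sum, Finset.mul_sum, Finset.mul_sum, ← Finset.sum_sub_distrib,
      ← Finset.sum_add_distrib]
    apply Finset.sum_congr rfl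
    intro k _
    ring
  have step2 : ∑ k ∈ Finset.range (n+1), s (n+1) k * ((y+1) * Pk k (y+1) - (2*y+1) * Pk k y + y * Pk k (y-1))
      = ∑ k ∈ Finset.range n, s (n+1) (k+1) * (2*(2*y+1)*((k:ℤ)+1)^2 * Pk k y) := by
    rw [Finset.sum_range_succ']
    have h0 : s (n+1) 0 * ((y+1) * Pk 0 (y+1) - (2*y+1) * Pk 0 y + y * Pk 0 (y-1)) = 0 := by
      simp only [Pk, Q_zero, mul_one, one_mul]
      ring
    rw [h0, add_zero]
    apply Finset.sum_congr rfl
    intro k _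
    congr 1
    rw [perk (k+1) (by omega) y]
    push_cast
    ring
  have step3 : ∑ k ∈ Finset.range n, s (n+1) (k+1) * (2*(2*y+1)*((k:ℤ)+1)^2 * Pk k y)
      = -2*(2*y+1) * ∑ k ∈ Finset.range n, s (n+1) k * Pk k y := by
    rw [Finset.mul_sum]
    apply Finset.sum_congr rfl
    intro k hk
    have hk' : k + 1 ≤ (n+1) - 1 := by simp at hk; omega
    have hs := s_succ (n+1) k hk'
    calc s (n+1) (k+1) * (2*(2*y+1)*((k:ℤ)+1)^2 * Pk k y)
        = 2*(2*y+1) * (((k:ℤ)+1)^2 * s (n+1) (k+1)) * Pk k y := by ring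
      _ = 2*(2*y+1) * (- s (n+1) k) * Pk k y := by rw [hs]
      _ = -2*(2*y+1) * (s (n+1) k * Pk k y) := by ring
  have spm : s (n+1) n = 1 := by
    have hd : dk (n+1) n = 1 := by
      have := dk_top (n+1); simpa using this
    rw [s, hd]
    have hev : Even n := by rw [Nat.even_iff]; omega
    rw [hev.neg_one_pow]
    simp
  have fsplit : ∑ k ∈ Finset.range n, s (n+1) k * Pk k y = f (n+1) y - Pk n y := by
    have hf : f (n+1) y = ∑ k ∈ Finset.range n, s (n+1) k * Pk k y + s (n+1) n * Pk n y := by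
      rw [f, Finset.sum_range_succ]
    rw [hf, spm]; ring
  have main := key.trans (step2.trans (step3.trans (by rw [fsplit])))
  linarith [main]

lemma Pk_nat_zero (p : ℕ) {m : ℕ} (hm : m < p - 1) : Pk (p-1) (m:ℤ) = 0 := by
  rw [Pk, Q_eq_zero hm rfl, zero_mul]

lemma f_zero (p : ℕ) (hp : 1 ≤ p) : f p 0 = ((p-1).factorial : ℤ)^2 := by
  rw [f, Finset.sum_eq_single_of_mem 0 (Finset.mem_range.mpr (by omega))]
  · simp [s, Pk, Q_zero, dk_zero]
  · intro b _ hb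
    have : Q 0 b = 0 := Q_eq_zero (Nat.pos_of_ne_zero hb) (by simp)
    rw [Pk, this, zero_mul, mul_zero]

lemma f_neg_one (p : ℕ) (hp : 1 ≤ p) : f p (-1) = ((p-1).factorial : ℤ)^2 := by
  rw [f, Finset.sum_eq_single_of_mem 0 (Finset.mem_range.mpr (by omega))]
  · simp [s, Pk, Q_zero, dk_zero]
  · intro b _ hb
    have hb1 : 1 ≤ b := Nat.pos_of_ne_zero hb
    have : Q (-1 + b) b = 0 := Q_eq_zero (j := b - 1) (by omega) (by push_cast [Nat.cast_sub hb1]; ring)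
    simp [Pk, this]

lemma f_one (p : ℕ) (hp : 2 ≤ p) : f p 1 = -((p-1).factorial : ℤ)^2 := by
  have hsub : Finset.range 2 ⊆ Finset.range p := by
    intro x hx; simp at hx ⊢; omega
  have hz : ∀ x ∈ Finset.range p, x ∉ Finset.range 2 → s p x * Pk x 1 = 0 := by
    intro b _ hb
    simp only [Finset.mem_range, not_lt] at hb
    have : Q 1 b = 0 := Q_eq_zero (j := 1) (by omega) (by simp)
    rw [Pk, this, zero_mul, mul_zero]
  rw [f, ← Finset.sum_subset hsub hz]
  rw [Finset.sum_range_succ, Finset.sum_range_one]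
  have d1 : (dk p 1 : ℤ) = ((p-1).factorial : ℤ) := by
    have := dk_fact p 1 (by omega)
    simp [Nat.factorial] at this
    exact_mod_cast congrArg (Nat.cast : ℕ → ℤ) this
  simp only [s, Pk, Q_zero, dk_zero, pow_zero, pow_one, one_mul, mul_one]
  rw [d1]
  have : Q 1 1 * Q (1 + (1:ℕ)) 1 = 2 := by
    simp [Q, Finset.prod_range_one]
  rw [this]
  ring

lemma fval (p : ℕ) (hp : 2 ≤ p) (hodd : p % 2 = 1) :
    ∀ m : ℕ, m ≤ p - 1 → f p (m:ℤ) = (-1)^m * ((p-1).factorial : ℤ)^2 := by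
  intro m
  induction m using Nat.strong_induction_on with
  | _ m ih =>
    match m with
    | 0 => intro _; simpa using f_zero p (by omega)
    | 1 => intro _; simpa using f_one p hp
    | (t+2) =>
      intro hm
      have h1 := ih (t+1) (by omega) (by omega)
      have h0 := ih t (by omega) (by omega)
      have e := masterf p hp hodd ((t+1:ℕ):ℤ)
      have hP : Pk (p-1) (((t+1:ℕ):ℤ)) = 0 := Pk_nat_zero p (by omega)
      rw [hP, mul_zero] at e
      have c2 : ((t+1:ℕ):ℤ)+1 = ((t+2:ℕ):ℤ) := by push_cast; ring
      have c1 : ((t+1:ℕ):ℤ)-1 = ((t:ℕ):ℤ) := by push_cast; ring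
      rw [c2, c1, h1, h0] at e
      have hA : (((t+2:ℕ)):ℤ) ≠ 0 := by positivity
      apply mul_left_cancel₀ hA
      push_cast at e ⊢
      linear_combination e

noncomputable def AX (n : ℕ) : Polynomial ℤ := ∏ i ∈ Finset.range n, (X - C (i:ℤ))
noncomputable def BX (n : ℕ) : Polynomial ℤ := ∏ i ∈ Finset.range n, (X + C (n:ℤ) - C (i:ℤ))
noncomputable def FX (p : ℕ) : Polynomial ℤ := ∑ k ∈ Finset.range p, C (s p k) * (AX k * BX k)
noncomputable def GX (p : ℕ) : Polynomial ℤ := AX (p-1) * BX (p-1)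

lemma evalAX (y : ℤ) (n : ℕ) : eval y (AX n) = Q y n := by
  simp [AX, Q, eval_prod]

lemma evalBX (y : ℤ) (n : ℕ) : eval y (BX n) = Q (y + n) n := by
  simp [BX, Q, eval_prod]

lemma evalFX (p : ℕ) (y : ℤ) : eval y (FX p) = f p y := by
  simp [FX, f, eval_finset_sum, evalAX, evalBX, Pk]

lemma evalGX (p : ℕ) (y : ℤ) : eval y (GX p) = Pk (p-1) y := by
  simp [GX, evalAX, evalBX, Pk]

lemma masterFX (p : ℕ) (hp : 2 ≤ p) (hodd : p % 2 = 1) :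
    (X + C 1) * (FX p).comp (X + C 1) + (C 2 * X + C 1) * FX p + X * (FX p).comp (X - C 1)
      = C 2 * (C 2 * X + C 1) * GX p := by
  apply Polynomial.funext
  intro y
  simp only [eval_add, eval_mul, eval_comp, eval_X, eval_C, eval_sub, evalFX, evalGX]
  have := masterf p hp hodd y
  linear_combination this

lemma DIX (p : ℕ) (hp : 2 ≤ p) (hodd : p % 2 = 1) (y : ℤ) :
    f p (y+1) + (y+1) * eval (y+1) (derivative (FX p)) + 2 * f p y
      + (2*y+1) * eval y (derivative (FX p))
      + f p (y-1) + y * eval (y-1) (derivative (FX p))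
      = 4 * Pk (p-1) y + 2*(2*y+1) * eval y (derivative (GX p)) := by
  have h := congrArg (fun q => eval y (derivative q)) (masterFX p hp hodd)
  simp only [derivative_add, derivative_sub, derivative_mul, derivative_comp, derivative_X,
    derivative_C, derivative_one, eval_zero, eval_add, eval_mul, eval_comp, eval_X, eval_C, eval_sub, eval_one,
    evalFX, evalGX, zero_mul, mul_zero, add_zero, zero_add, mul_one, one_mul] at h
  linear_combination h

lemma Q_self : ∀ n : ℕ, Q (n:ℤ) n = (n.factorial : ℤ)
  | 0 => by simp [Q_zero]
  | (n+1) => by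
    rw [Q_bot, show ((n+1:ℕ):ℤ) - 1 = (n:ℤ) by push_cast; ring, Q_self n]
    push_cast [Nat.factorial_succ]
    try ring

lemma AX_succ (j : ℕ) : AX (j+1) = X * ∏ i ∈ Finset.range j, (X - C ((i:ℤ)+1)) := by
  rw [AX, Finset.prod_range_succ']
  have h : ∀ i ∈ Finset.range j, (X - C (((i+1:ℕ)):ℤ)) = (X - C ((i:ℤ)+1)) := by
    intro i _
    norm_num
  rw [Finset.prod_congr rfl h, show C ((0:ℕ):ℤ) = 0 by simp, sub_zero, mul_comm]

lemma eval0_deriv_Xmul (M : Polynomial ℤ) : eval 0 (derivative (X * M)) = eval 0 M := by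
  simp [derivative_mul]

lemma eval_prod_neg (j : ℕ) :
    (∏ i ∈ Finset.range j, ((0:ℤ) - ((i:ℤ)+1))) = (-1)^j * (j.factorial : ℤ) := by
  induction j with
  | zero => simp
  | succ n ih =>
    rw [Finset.prod_range_succ, ih]
    push_cast [Nat.factorial_succ]
    ring

lemma neg_one_sq_pow (j : ℕ) : ((-1:ℤ))^j * (-1)^j = 1 := by
  rw [← pow_add]
  exact Even.neg_one_pow ⟨j, rfl⟩

lemma dFX_zero (p : ℕ) (hp : 2 ≤ p) :
    eval 0 (derivative (FX p)) = ∑ j ∈ Finset.range (p-1),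
      -(((p-1).factorial : ℤ) * ((dk p (j+1) : ℤ) * (j.factorial : ℤ))) := by
  obtain ⟨n, rfl⟩ : ∃ n, p = n + 1 := ⟨p-1, by omega⟩
  simp only [Nat.add_sub_cancel]
  rw [FX, derivative_sum, eval_finset_sum, Finset.sum_range_succ']
  have h0 : eval 0 (derivative (C (s (n+1) 0) * (AX 0 * BX 0))) = 0 := by
    simp [AX, BX]
  rw [h0, add_zero]
  apply Finset.sum_congr rfl
  intro j hj
  have hj' : j + 1 ≤ n := by simp at hj; omega
  rw [derivative_C_mul, eval_mul, eval_C, AX_succ j, mul_assoc, eval0_deriv_Xmul, eval_mul,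
    evalBX, eval_prod, zero_add]
  have hQ : Q ((j+1:ℕ):ℤ) (j+1) = ((j+1).factorial : ℤ) := Q_self (j+1)
  rw [hQ]
  have hev : ∀ i ∈ Finset.range j, eval 0 (X - C ((i:ℤ)+1)) = (0:ℤ) - ((i:ℤ)+1) := by
    intro i _; simp
  rw [Finset.prod_congr rfl hev, eval_prod_neg]
  have hfact : ((j+1).factorial : ℤ) * (dk (n+1) (j+1) : ℤ) = (n.factorial : ℤ) := by
    have := dk_fact (n+1) (j+1) (by simpa using hj')
    simp only [Nat.add_sub_cancel] at this
    exact_mod_cast congrArg (Nat.cast : ℕ → ℤ) this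
  calc s (n+1) (j+1) * ((-1)^j * (j.factorial:ℤ) * ((j+1).factorial:ℤ))
      = -(((-1:ℤ)^j * (-1)^j) * ((dk (n+1) (j+1):ℤ)^2 * (j.factorial:ℤ) * ((j+1).factorial:ℤ))) := by
        rw [s, pow_succ]; ring
    _ = -((((j+1).factorial:ℤ) * (dk (n+1) (j+1):ℤ)) * ((dk (n+1) (j+1):ℤ) * (j.factorial:ℤ))) := by
        rw [neg_one_sq_pow]; ring
    _ = -((n.factorial:ℤ) * ((dk (n+1) (j+1):ℤ) * (j.factorial:ℤ))) := by rw [hfact]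

lemma p_dvd_dFX0 (p : ℕ) (hpp : p.Prime) (hodd : p % 2 = 1) (hp : 2 ≤ p) :
    (p:ℤ) ∣ eval 0 (derivative (FX p)) := by
  haveI : Fact p.Prime := ⟨hpp⟩
  rw [dFX_zero p hp]
  have : ∑ j ∈ Finset.range (p-1),
      -(((p-1).factorial : ℤ) * ((dk p (j+1) : ℤ) * (j.factorial : ℤ)))
      = -(((∑ j ∈ Finset.range (p-1), (p-1).factorial * (dk p (j+1) * j.factorial) : ℕ)) : ℤ) := by
    push_cast
    rw [← Finset.sum_neg_distrib]
  rw [this, dvd_neg, Int.natCast_dvd_natCast]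
  rw [← ZMod.natCast_eq_zero_iff _ p]
  push_cast
  rw [← Finset.mul_sum]
  have hsum : ∑ j ∈ Finset.range (p-1), ((dk p (j+1) : ZMod p) * (j.factorial : ZMod p)) = 0 := by
    apply Finset.sum_involution (fun j _ => p - 2 - j)
    · intro j hj
      simp only [Finset.mem_range] at hj
      have h1 : (j+1) * (dk p (j+1) * j.factorial) = (p-1).factorial := by
        rw [show (j+1) * (dk p (j+1) * j.factorial) = (j+1).factorial * dk p (j+1) by
          rw [Nat.factorial_succ]; ring]
        exact dk_fact p (j+1) (by omega)
      have h2 : (p-1-j) * (dk p (p-2-j+1) * (p-2-j).factorial) = (p-1).factorial := by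
        rw [show p-2-j+1 = p-1-j by omega]
        rw [show (p-1-j) * (dk p (p-1-j) * (p-2-j).factorial) = (p-1-j).factorial * dk p (p-1-j) by
          rw [show p-1-j = (p-2-j)+1 by omega, Nat.factorial_succ]; ring]
        exact dk_fact p (p-1-j) (by omega)
      have ha : ((j+1 : ℕ) : ZMod p) ≠ 0 := by
        rw [Ne, ZMod.natCast_eq_zero_iff]
        intro hdvd
        have := Nat.le_of_dvd (by omega) hdvd
        omega
      have hb : ((p-1-j : ℕ) : ZMod p) = -((j:ZMod p)+1) := by
        have hsum2 : ((p-1-j) + (j+1) : ℕ) = p := by omega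
        have := congrArg (Nat.cast : ℕ → ZMod p) hsum2
        push_cast at this
        rw [ZMod.natCast_self] at this
        linear_combination this
      have hc1 := congrArg (Nat.cast : ℕ → ZMod p) h1
      have hc2 := congrArg (Nat.cast : ℕ → ZMod p) h2
      push_cast at hc1 hc2
      rw [hb] at hc2
      have key : ((j+1 : ℕ) : ZMod p) *
          ((dk p (j+1) : ZMod p) * (j.factorial : ZMod p)
            + (dk p (p-2-j+1) : ZMod p) * ((p-2-j).factorial : ZMod p)) = 0 := by
        rw [mul_add]
        push_cast
        linear_combination hc1 - hc2
      rcases mul_eq_zero.mp key with h | h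
      · exact absurd h ha
      · exact h
    · intro j hj _
      simp only [Finset.mem_range] at hj
      omega
    · intro j hj
      simp only [Finset.mem_range] at hj ⊢
      omega
    · intro j hj
      simp only [Finset.mem_range] at hj
      omega
  rw [hsum, mul_zero]

lemma dGX_zero (p : ℕ) (hp : 2 ≤ p) :
    eval 0 (derivative (GX p)) = (-1)^(p-2) * ((p-2).factorial : ℤ) * ((p-1).factorial : ℤ) := by
  obtain ⟨j, hj⟩ : ∃ j, p - 1 = j + 1 := ⟨p-2, by omega⟩
  have hj2 : j = p - 2 := by omega
  rw [GX, hj, AX_succ, mul_assoc, eval0_deriv_Xmul, eval_mul, evalBX, zero_add, eval_prod]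
  have hev : ∀ i ∈ Finset.range j, eval 0 (X - C ((i:ℤ)+1)) = (0:ℤ) - ((i:ℤ)+1) := by
    intro i _; simp
  rw [Finset.prod_congr rfl hev, eval_prod_neg, Q_self, hj2]

lemma p_dvd_dFX1 (p : ℕ) (hpp : p.Prime) (hodd : p % 2 = 1) (hp : 3 ≤ p) :
    (p:ℤ) ∣ eval 1 (derivative (FX p)) := by
  have hp2 : 2 ≤ p := by omega
  have e := DIX p hp2 hodd 0
  norm_num at e
  rw [f_one p hp2, f_zero p (by omega), f_neg_one p (by omega), dGX_zero p hp2] at e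
  have hPk : Pk (p-1) (0:ℤ) = 0 := by
    have := Pk_nat_zero p (m := 0) (by omega)
    simpa using this
  rw [hPk] at e
  have hneg : ((-1:ℤ))^(p-2) = -1 := by
    apply Odd.neg_one_pow
    rw [Nat.odd_iff]; omega
  rw [hneg] at e
  set a : ℤ := ((p-2).factorial : ℤ) with ha
  have hfac : ((p-1).factorial : ℤ) = ((p:ℤ)-1) * a := by
    rw [show p-1 = (p-2)+1 from by omega, Nat.factorial_succ]
    push_cast [Nat.cast_sub (show 2 ≤ p from hp2)]
    ring
  have hg0 := p_dvd_dFX0 p hpp hodd hp2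
  -- from e : -a² stuff + eval 1 ... + eval 0 ... = rhs, solve for eval 1
  have he1 : eval 1 (derivative (FX p)) =
      2 * (-1 * a * (((p:ℤ)-1)*a)) - 2 * (((p:ℤ)-1)*a)^2 - eval 0 (derivative (FX p)) := by
    rw [← hfac]
    linarith [e]
  rw [he1]
  have hd : 2 * (-1 * a * (((p:ℤ)-1)*a)) - 2 * (((p:ℤ)-1)*a)^2 = (p:ℤ) * (-2*((p:ℤ)-1)*a^2) := by
    ring
  rw [hd]
  exact dvd_sub (Dvd.intro _ rfl) hg0

lemma cast_eval (p : ℕ) (q : Polynomial ℤ) (z : ℤ) :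
    ((eval z q : ℤ) : ZMod p) = eval ((z : ZMod p)) (q.map (Int.castRingHom (ZMod p))) := by
  rw [Polynomial.eval_map]
  exact (Polynomial.eval₂_at_apply (Int.castRingHom (ZMod p)) z).symm

lemma deriv_eval_zero_of_sq_dvd {K : Type*} [CommRing K] {q : Polynomial K} {a : K}
    (h : (X - C a)^2 ∣ q) : eval a (derivative q) = 0 := by
  obtain ⟨r, rfl⟩ := h
  simp [derivative_mul, derivative_pow]

lemma p_dvd_dGX (p : ℕ) (hpp : p.Prime) (hp : 3 ≤ p) {m : ℕ} (h1 : 1 ≤ m) (h2 : m ≤ p - 2) :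
    (p:ℤ) ∣ eval (m:ℤ) (derivative (GX p)) := by
  haveI : Fact p.Prime := ⟨hpp⟩
  rw [← ZMod.intCast_zmod_eq_zero_iff_dvd, cast_eval, ← Polynomial.derivative_map]
  apply deriv_eval_zero_of_sq_dvd (a := (((m:ℤ)) : ZMod p))
  rw [GX, Polynomial.map_mul, AX, BX, Polynomial.map_prod, Polynomial.map_prod, sq]
  apply mul_dvd_mul
  · have hmem : m ∈ Finset.range (p-1) := Finset.mem_range.mpr (by omega)
    have := Finset.dvd_prod_of_mem
      (fun i => Polynomial.map (Int.castRingHom (ZMod p)) (X - C ((i:ℕ):ℤ))) hmem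
    simpa using this
  · have hmem : m - 1 ∈ Finset.range (p-1) := Finset.mem_range.mpr (by omega)
    have hdvd := Finset.dvd_prod_of_mem
      (fun i => Polynomial.map (Int.castRingHom (ZMod p)) (X + C (((p-1:ℕ)):ℤ) - C ((i:ℕ):ℤ))) hmem
    have hfact : Polynomial.map (Int.castRingHom (ZMod p)) (X + C (((p-1:ℕ)):ℤ) - C (((m-1:ℕ)):ℤ))
        = X - C (((m:ℤ)) : ZMod p) := by
      have hc : (((((p-1:ℕ)):ℤ) : ZMod p)) - ((((m-1:ℕ)):ℤ) : ZMod p) = -(((m:ℤ)) : ZMod p) := by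
        have e1 : (((p-1:ℕ) : ℤ) : ZMod p) = ((p:ZMod p)) - 1 := by
          push_cast [Nat.cast_sub (show 1 ≤ p by omega)]; ring
        have e2 : (((m-1:ℕ) : ℤ) : ZMod p) = ((m:ZMod p)) - 1 := by
          push_cast [Nat.cast_sub h1]; ring
        rw [e1, e2, ZMod.natCast_self]
        push_cast
        ring
      simp only [Polynomial.map_sub, Polynomial.map_add, Polynomial.map_X, Polynomial.map_C]
      have hC : C ((Int.castRingHom (ZMod p)) (((p-1:ℕ)):ℤ)) - C ((Int.castRingHom (ZMod p)) (((m-1:ℕ)):ℤ))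
          = - C (((m:ℤ)) : ZMod p) := by
        rw [← C_sub, ← C_neg]
        exact congrArg C hc
      linear_combination hC
    rw [← hfact]
    exact hdvd

lemma p_dvd_dFX (p : ℕ) (hpp : p.Prime) (hodd : p % 2 = 1) (hp : 3 ≤ p) :
    ∀ m : ℕ, m ≤ p - 1 → (p:ℤ) ∣ eval (m:ℤ) (derivative (FX p)) := by
  intro m
  induction m using Nat.strong_induction_on with
  | _ m ih =>
    match m with
    | 0 => intro _; exact_mod_cast p_dvd_dFX0 p hpp hodd (by omega)
    | 1 => intro _; exact_mod_cast p_dvd_dFX1 p hpp hodd hp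
    | (t+2) =>
      intro hm
      have h1 := ih (t+1) (by omega) (by omega)
      have h0 := ih t (by omega) (by omega)
      have e := DIX p (by omega) hodd ((t+1:ℕ):ℤ)
      have c2 : ((t+1:ℕ):ℤ)+1 = ((t+2:ℕ):ℤ) := by push_cast; ring
      have c1 : ((t+1:ℕ):ℤ)-1 = ((t:ℕ):ℤ) := by push_cast; ring
      rw [c2, c1] at e
      rw [fval p (by omega) hodd (t+2) (by omega), fval p (by omega) hodd (t+1) (by omega),
          fval p (by omega) hodd t (by omega)] at e
      rw [Pk_nat_zero p (by omega)] at e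
      have hG := p_dvd_dGX p hpp hp (m := t+1) (by omega) (by omega)
      set g2 := eval ((t+2:ℕ):ℤ) (derivative (FX p)) with hg2
      set g1 := eval ((t+1:ℕ):ℤ) (derivative (FX p)) with hg1
      set g0 := eval ((t:ℕ):ℤ) (derivative (FX p)) with hg0
      set dG := eval ((t+1:ℕ):ℤ) (derivative (GX p)) with hdG
      have hs2 : ((-1:ℤ))^(t+2) = (-1)^t := by rw [pow_succ, pow_succ]; ring
      have hs1 : ((-1:ℤ))^(t+1) = -(-1)^t := by rw [pow_succ]; ring
      rw [hs2, hs1] at e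
      have key : (((t+2:ℕ)):ℤ) * g2
          = 2*(2*((t+1:ℕ):ℤ)+1) * dG - (2*((t+1:ℕ):ℤ)+1)*g1 - ((t+1:ℕ):ℤ)*g0 := by
        push_cast at e ⊢
        linear_combination e
      have hdvd : (p:ℤ) ∣ (((t+2:ℕ)):ℤ) * g2 := by
        rw [key]
        exact dvd_sub (dvd_sub (Dvd.dvd.mul_left hG _) (Dvd.dvd.mul_left h1 _))
          (Dvd.dvd.mul_left h0 _)
      have hip : Prime ((p:ℤ)) := by
        rw [Int.prime_iff_natAbs_prime]; simpa using hpp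
      rcases (hip.dvd_mul.mp hdvd) with h | h
      · exfalso
        rw [Int.natCast_dvd_natCast] at h
        have := Nat.le_of_dvd (by omega) h
        omega
      · exact h

lemma choose_fact (k : ℕ) :
    Nat.choose (2*k) k * Nat.choose (3*k) k * (k.factorial)^3 = (3*k).factorial := by
  have h1 : Nat.choose (3*k) k * k.factorial * (2*k).factorial = (3*k).factorial := by
    have := Nat.choose_mul_factorial_mul_factorial (show k ≤ 3*k by omega)
    rwa [show 3*k - k = 2*k by omega] at this
  have h2 : Nat.choose (2*k) k * k.factorial * k.factorial = (2*k).factorial := by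
    have := Nat.choose_mul_factorial_mul_factorial (show k ≤ 2*k by omega)
    rwa [show 2*k - k = k by omega] at this
  calc Nat.choose (2*k) k * Nat.choose (3*k) k * (k.factorial)^3
      = (Nat.choose (3*k) k * k.factorial) * (Nat.choose (2*k) k * k.factorial * k.factorial) := by ring
    _ = (Nat.choose (3*k) k * k.factorial) * (2*k).factorial := by rw [h2]
    _ = (3*k).factorial := by rw [← h1]; try ring

lemma triple_fact (k : ℕ) :
    (3*k).factorial = 3^k * k.factorial * ∏ i ∈ Finset.range k, ((3*i+1)*(3*i+2)) := by
  induction k with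
  | zero => simp
  | succ n ih =>
    have h1 : 3*(n+1) = (3*n+2)+1 := by omega
    rw [h1, Nat.factorial_succ, show 3*n+2 = (3*n+1)+1 by omega, Nat.factorial_succ,
      show 3*n+1 = (3*n)+1 by omega, Nat.factorial_succ, ih, Finset.prod_range_succ,
      Nat.factorial_succ]
    ring

lemma step3 (k : ℕ) :
    Nat.choose (2*k) k * Nat.choose (3*k) k * (k.factorial)^2
      = 3^k * ∏ i ∈ Finset.range k, ((3*i+1)*(3*i+2)) := by
  have hpos : 0 < k.factorial := Nat.factorial_pos k
  apply Nat.eq_of_mul_eq_mul_right hpos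
  calc Nat.choose (2*k) k * Nat.choose (3*k) k * (k.factorial)^2 * k.factorial
      = Nat.choose (2*k) k * Nat.choose (3*k) k * (k.factorial)^3 := by ring
    _ = (3*k).factorial := choose_fact k
    _ = 3^k * k.factorial * ∏ i ∈ Finset.range k, ((3*i+1)*(3*i+2)) := triple_fact k
    _ = 3^k * (∏ i ∈ Finset.range k, ((3*i+1)*(3*i+2))) * k.factorial := by ring

lemma leg32 : legendreSym 3 (((2:ℕ)):ℤ) = -1 := by decide

lemma legval (p : ℕ) [Fact p.Prime] (h3 : 3 < p) :
    legendreSym p (-3) = if p % 3 = 1 then 1 else -1 := by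
  haveI : Fact (Nat.Prime 3) := ⟨by norm_num⟩
  have hpp : p.Prime := Fact.out
  have hp2 : p ≠ 2 := by omega
  have hp3 : p ≠ 3 := by omega
  have hodd : p % 2 = 1 := Nat.odd_iff.mp (hpp.odd_of_ne_two hp2)
  have hndvd : ¬ (3 ∣ p) := by
    intro h
    have := (Nat.prime_dvd_prime_iff_eq (by norm_num) hpp).mp h
    omega
  have hmul : legendreSym p (-3) = legendreSym p (-1) * legendreSym p 3 := by
    rw [show (-3 : ℤ) = -1 * 3 by norm_num, legendreSym.mul]
  have hrec := legendreSym.quadratic_reciprocity (p := 3) (q := p) (by norm_num) hp2 (by omega)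
  simp only [Nat.cast_ofNat] at hrec
  -- hrec : legendreSym p 3 * legendreSym 3 p = (-1)^(3/2 * (p/2))
  have hneg1 : legendreSym p (-1) = (-1)^(p/2) := by
    rw [legendreSym.at_neg_one hp2, ZMod.χ₄_eq_neg_one_pow hodd]
  have hsq3 : legendreSym 3 (p:ℤ) * legendreSym 3 (p:ℤ) = 1 := by
    have h := legendreSym.sq_one 3 (a := (p:ℤ)) (by
      rw [Ne, ZMod.intCast_zmod_eq_zero_iff_dvd]
      exact_mod_cast hndvd)
    rw [sq] at h
    exact h
  have hLp3 : legendreSym p 3 = (-1)^(p/2) * legendreSym 3 (p:ℤ) := by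
    have h := congrArg (· * legendreSym 3 (p:ℤ)) hrec
    rw [mul_assoc, hsq3, mul_one] at h
    rw [h, show (3/2 : ℕ) = 1 by norm_num, one_mul]
  have hfin : legendreSym p (-3) = legendreSym 3 (p:ℤ) := by
    rw [hmul, hneg1, hLp3, ← mul_assoc, ← pow_add]
    have : Even (p/2 + p/2) := ⟨p/2, rfl⟩
    rw [this.neg_one_pow, one_mul]
  rw [hfin, legendreSym.mod]
  have hcast : ((p:ℤ) % ((3:ℕ):ℤ)) = ((p % 3 : ℕ) : ℤ) := by
    push_cast
    omega
  rw [hcast]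
  rcases (show p % 3 = 1 ∨ p % 3 = 2 by omega) with h | h
  · rw [h, if_pos rfl]
    norm_num
  · rw [h, if_neg (by omega)]
    exact leg32

theorem main (p : ℕ) [Fact p.Prime] (h3 : 3 < p) :
    ∑ k ∈ Finset.range p,
        ((Nat.choose (2*k) k : ZMod (p^2)) * (Nat.choose (3*k) k : ZMod (p^2))
          * ((27 : ZMod (p^2))^k)⁻¹)
      = (legendreSym p (-3) : ZMod (p^2)) := by
  have hpp : p.Prime := Fact.out
  have hodd : p % 2 = 1 := Nat.odd_iff.mp (hpp.odd_of_ne_two (by omega))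
  have hndvd : ¬ (3 ∣ p) := by
    intro h
    have := (Nat.prime_dvd_prime_iff_eq (by norm_num) hpp).mp h
    omega
  have hmod3 : p % 3 = 1 ∨ p % 3 = 2 := by omega
  have h1p2 : 1 ≤ p^2 := Nat.one_le_pow _ _ (by omega)
  have hsqm : p^2 % 3 = 1 := by
    rw [Nat.pow_mod]
    rcases hmod3 with h | h <;> rw [h] <;> norm_num
  have h3dvd : 3 ∣ p^2 - 1 := by omega
  obtain ⟨A, hA3⟩ : ∃ A, 3 * A = p^2 - 1 := ⟨(p^2-1)/3, Nat.mul_div_cancel' h3dvd⟩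
  set b := A % p with hbdef
  set c := A / p with hcdef
  have hbc : A = p * c + b := (Nat.div_add_mod A p).symm
  have hblt : b < p := Nat.mod_lt _ (by omega)
  have hp20 : ((p:ZMod (p^2)))^2 = 0 := by
    have := ZMod.natCast_self (p^2)
    push_cast at this
    exact this
  have h3A : (3 : ZMod (p^2)) * ((A : ℕ) : ZMod (p^2)) = -1 := by
    have h1 := congrArg (Nat.cast : ℕ → ZMod (p^2)) hA3
    rw [Nat.cast_sub h1p2] at h1
    push_cast at h1
    rw [hp20] at h1
    linear_combination h1
  have hcopf : Nat.Coprime p ((p-1).factorial) :=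
    (Nat.Prime.coprime_iff_not_dvd hpp).mpr (by rw [Nat.Prime.dvd_factorial hpp]; omega)
  have hDunit : IsUnit ((((p-1).factorial^2 : ℕ)) : ZMod (p^2)) := by
    rw [ZMod.isUnit_iff_coprime]
    exact Nat.Coprime.pow _ _ hcopf.symm
  have h27unit : IsUnit ((27 : ZMod (p^2))) := by
    have h27 : ((27:ℕ) : ZMod (p^2)) = (27 : ZMod (p^2)) := by norm_num
    rw [← h27]
    rw [ZMod.isUnit_iff_coprime]
    have h3p : Nat.Coprime 3 p := (Nat.coprime_primes (by norm_num) hpp).mpr (by omega)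
    have h27c : Nat.Coprime (3^3) (p^2) := Nat.Coprime.pow _ _ h3p
    have h33 : (27:ℕ) = 3^3 := by norm_num
    rw [h33]
    exact h27c
  -- per-term identity
  have hterm : ∀ k ∈ Finset.range p,
      ((Nat.choose (2*k) k : ZMod (p^2)) * (Nat.choose (3*k) k : ZMod (p^2))
          * ((27 : ZMod (p^2))^k)⁻¹) * ((((p-1).factorial^2 : ℕ)) : ZMod (p^2))
        = (((s p k * Pk k ((A:ℕ):ℤ)) : ℤ) : ZMod (p^2)) := by
    intro k hk
    have hkle : k ≤ p - 1 := by
      simp only [Finset.mem_range] at hk; omega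
    have hNat : Nat.choose (2*k) k * Nat.choose (3*k) k * ((p-1).factorial^2)
        = 3^k * (∏ i ∈ Finset.range k, ((3*i+1)*(3*i+2))) * (dk p k)^2 := by
      calc Nat.choose (2*k) k * Nat.choose (3*k) k * ((p-1).factorial^2)
          = Nat.choose (2*k) k * Nat.choose (3*k) k * ((k.factorial * dk p k)^2) := by
            rw [dk_fact p k hkle]
        _ = (Nat.choose (2*k) k * Nat.choose (3*k) k * (k.factorial)^2) * (dk p k)^2 := by ring
        _ = (3^k * ∏ i ∈ Finset.range k, ((3*i+1)*(3*i+2))) * (dk p k)^2 := by rw [step3]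
        _ = 3^k * (∏ i ∈ Finset.range k, ((3*i+1)*(3*i+2))) * (dk p k)^2 := by ring
    have hcast := congrArg (Nat.cast : ℕ → ZMod (p^2)) hNat
    push_cast at hcast
    -- R-identity
    set a : ZMod (p^2) := ((A : ℕ) : ZMod (p^2)) with hadef
    have hR : ((3:ZMod (p^2)))^k
          * (∏ i ∈ Finset.range k, ((3*(i:ZMod (p^2))+1)*(3*(i:ZMod (p^2))+2)))
        = (27:ZMod (p^2))^k * (((((-1:ℤ))^k * Pk k ((A:ℕ):ℤ)) : ℤ) : ZMod (p^2)) := by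
      have hPkc : (((((-1:ℤ))^k * Pk k ((A:ℕ):ℤ)) : ℤ) : ZMod (p^2))
          = (-1)^k * (∏ i ∈ Finset.range k, (a - (i:ZMod (p^2))))
            * (∏ i ∈ Finset.range k, (a + (k:ZMod (p^2)) - (i:ZMod (p^2)))) := by
        rw [Pk, Q, Q]
        push_cast
        ring
      rw [hPkc]
      have hsplit : ∏ i ∈ Finset.range k, ((3*(i:ZMod (p^2))+1)*(3*(i:ZMod (p^2))+2))
          = (∏ i ∈ Finset.range k, (3*(i:ZMod (p^2))+1))
            * (∏ i ∈ Finset.range k, (3*(i:ZMod (p^2))+2)) := Finset.prod_mul_distrib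
      have e1 : ∏ i ∈ Finset.range k, (3*(i:ZMod (p^2))+1)
          = ∏ i ∈ Finset.range k, ((-3) * (a - (i:ZMod (p^2)))) := by
        apply Finset.prod_congr rfl
        intro i _
        linear_combination h3A
      have e2 : ∏ i ∈ Finset.range k, (3*(i:ZMod (p^2))+2)
          = ∏ i ∈ Finset.range k, (3 * (a + (k:ZMod (p^2)) - (i:ZMod (p^2)))) := by
        rw [← Finset.prod_range_reflect (fun i => (3*(i:ZMod (p^2))+2)) k]
        apply Finset.prod_congr rfl
        intro j hj
        simp only [Finset.mem_range] at hj
        have hc : ((k - 1 - j : ℕ) : ZMod (p^2)) = (k:ZMod (p^2)) - 1 - (j:ZMod (p^2)) := by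
          have hkj : k - 1 - j = k - (1+j) := by omega
          rw [hkj, Nat.cast_sub (by omega : 1 + j ≤ k)]
          push_cast
          ring
        rw [hc]
        linear_combination -h3A
      have e3 : ∏ i ∈ Finset.range k, ((-3) * (a - (i:ZMod (p^2))))
          = (-3)^k * ∏ i ∈ Finset.range k, (a - (i:ZMod (p^2))) := by
        rw [Finset.prod_mul_distrib, Finset.prod_const, Finset.card_range]
      have e4 : ∏ i ∈ Finset.range k, (3 * (a + (k:ZMod (p^2)) - (i:ZMod (p^2))))
          = 3^k * ∏ i ∈ Finset.range k, (a + (k:ZMod (p^2)) - (i:ZMod (p^2))) := by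
        rw [Finset.prod_mul_distrib, Finset.prod_const, Finset.card_range]
      rw [hsplit, e1, e2, e3, e4]
      have hscal : ((3:ZMod (p^2)))^k * ((-3)^k * (3:ZMod (p^2))^k)
          = (27:ZMod (p^2))^k * (-1)^k := by
        rw [← mul_pow, ← mul_pow, ← mul_pow]
        try norm_num
      linear_combination (∏ i ∈ Finset.range k, (a - (i:ZMod (p^2))))
        * (∏ i ∈ Finset.range k, (a + (k:ZMod (p^2)) - (i:ZMod (p^2)))) * hscal
    have hinv : (27:ZMod (p^2))^k * ((27:ZMod (p^2))^k)⁻¹ = 1 :=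
      ZMod.mul_inv_of_unit _ (h27unit.pow k)
    calc ((Nat.choose (2*k) k : ZMod (p^2)) * (Nat.choose (3*k) k : ZMod (p^2))
          * ((27 : ZMod (p^2))^k)⁻¹) * ((((p-1).factorial^2 : ℕ)) : ZMod (p^2))
        = ((Nat.choose (2*k) k : ZMod (p^2)) * (Nat.choose (3*k) k : ZMod (p^2))
            * (((p-1).factorial:ZMod (p^2))^2)) * ((27 : ZMod (p^2))^k)⁻¹ := by
          push_cast
          ring
      _ = ((3:ZMod (p^2))^k
            * (∏ i ∈ Finset.range k, ((3*(i:ZMod (p^2))+1)*(3*(i:ZMod (p^2))+2)))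
            * ((dk p k : ZMod (p^2)))^2) * ((27 : ZMod (p^2))^k)⁻¹ := by
          rw [← hcast]
      _ = ((27:ZMod (p^2))^k * (((((-1:ℤ))^k * Pk k ((A:ℕ):ℤ)) : ℤ) : ZMod (p^2))
            * ((dk p k : ZMod (p^2)))^2) * ((27 : ZMod (p^2))^k)⁻¹ := by
          rw [← hR]
          try ring
      _ = ((27:ZMod (p^2))^k * ((27 : ZMod (p^2))^k)⁻¹)
            * ((((((-1:ℤ))^k * Pk k ((A:ℕ):ℤ)) : ℤ) : ZMod (p^2))
              * ((dk p k : ZMod (p^2)))^2) := by ring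
      _ = (((((-1:ℤ))^k * Pk k ((A:ℕ):ℤ)) : ℤ) : ZMod (p^2))
            * ((dk p k : ZMod (p^2)))^2 := by rw [hinv, one_mul]
      _ = (((s p k * Pk k ((A:ℕ):ℤ)) : ℤ) : ZMod (p^2)) := by
          rw [s]
          push_cast
          ring
  -- sum
  have hsum : (∑ k ∈ Finset.range p,
        ((Nat.choose (2*k) k : ZMod (p^2)) * (Nat.choose (3*k) k : ZMod (p^2))
          * ((27 : ZMod (p^2))^k)⁻¹)) * ((((p-1).factorial^2 : ℕ)) : ZMod (p^2))
      = ((f p ((A:ℕ):ℤ) : ℤ) : ZMod (p^2)) := by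
    rw [Finset.sum_mul, f, Int.cast_sum]
    exact Finset.sum_congr rfl hterm
  -- Taylor
  obtain ⟨kk, hkk⟩ := Polynomial.binomExpansion (FX p) ((b:ℕ):ℤ) ((p:ℤ)*((c:ℕ):ℤ))
  have hAZ : ((A:ℕ):ℤ) = ((b:ℕ):ℤ) + ((p:ℤ)*((c:ℕ):ℤ)) := by
    push_cast [hbc]
    ring
  obtain ⟨t0, ht0⟩ := p_dvd_dFX p hpp hodd (by omega) b (by omega)
  have hfb := fval p (by omega) hodd b (by omega)
  have hfA2 : f p ((A:ℕ):ℤ) = (-1)^b * ((p-1).factorial:ℤ)^2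
      + (p:ℤ)^2 * (t0*((c:ℕ):ℤ) + kk*((c:ℕ):ℤ)^2) := by
    have h1 : f p ((A:ℕ):ℤ) = Polynomial.eval ((b:ℕ):ℤ) (FX p)
        + Polynomial.eval ((b:ℕ):ℤ) (Polynomial.derivative (FX p)) * ((p:ℤ)*((c:ℕ):ℤ))
        + kk * ((p:ℤ)*((c:ℕ):ℤ))^2 := by
      rw [← evalFX, hAZ]
      exact hkk
    rw [evalFX, hfb, ht0] at h1
    linear_combination h1
  have hcastA : ((f p ((A:ℕ):ℤ) : ℤ) : ZMod (p^2))
      = (-1)^b * ((((p-1).factorial^2 : ℕ)) : ZMod (p^2)) := by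
    rw [hfA2]
    push_cast
    rw [hp20]
    ring
  -- conclude sum value
  have hS : (∑ k ∈ Finset.range p,
        ((Nat.choose (2*k) k : ZMod (p^2)) * (Nat.choose (3*k) k : ZMod (p^2))
          * ((27 : ZMod (p^2))^k)⁻¹)) = (-1)^b := by
    apply hDunit.mul_right_cancel
    rw [hsum, hcastA]
  rw [hS]
  -- legendre value
  rw [legval p h3]
  rcases hmod3 with h | h
  · rw [if_pos h]
    obtain ⟨u, hu⟩ : ∃ u, 3*u = p - 1 := ⟨(p-1)/3, by omega⟩
    have h3AZ : (3:ℤ)*((A:ℕ):ℤ) = (p:ℤ)^2 - 1 := by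
      have := congrArg (Nat.cast : ℕ → ℤ) hA3
      rw [Nat.cast_sub h1p2] at this
      push_cast at this
      exact this
    have huZ : (3:ℤ)*((u:ℕ):ℤ) = (p:ℤ) - 1 := by
      have := congrArg (Nat.cast : ℕ → ℤ) hu
      rw [Nat.cast_sub (by omega)] at this
      push_cast at this
      exact this
    have hAu : A = p*u + u := by
      have hZ : (3:ℤ)*((A:ℕ):ℤ) = 3*((p:ℤ)*((u:ℕ):ℤ) + ((u:ℕ):ℤ)) := by
        rw [h3AZ]
        linear_combination (-(p:ℤ)-1) * huZ
      have := mul_left_cancel₀ (show (3:ℤ) ≠ 0 by norm_num) hZ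
      exact_mod_cast this
    have hbu : b = u := by
      rw [hbdef, hAu, Nat.mul_add_mod]
      exact Nat.mod_eq_of_lt (by omega)
    have hbeven : Even b := by
      rw [hbu, Nat.even_iff]
      omega
    rw [hbeven.neg_one_pow]
    norm_num
  · rw [if_neg (by omega)]
    obtain ⟨u, hu⟩ : ∃ u, 3*u = 2*p - 1 := ⟨(2*p-1)/3, by omega⟩
    obtain ⟨v, hv⟩ : ∃ v, 3*v = p - 2 := ⟨(p-2)/3, by omega⟩
    have h3AZ : (3:ℤ)*((A:ℕ):ℤ) = (p:ℤ)^2 - 1 := by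
      have := congrArg (Nat.cast : ℕ → ℤ) hA3
      rw [Nat.cast_sub h1p2] at this
      push_cast at this
      exact this
    have huZ : (3:ℤ)*((u:ℕ):ℤ) = 2*(p:ℤ) - 1 := by
      have := congrArg (Nat.cast : ℕ → ℤ) hu
      rw [Nat.cast_sub (by omega)] at this
      push_cast at this
      exact this
    have hvZ : (3:ℤ)*((v:ℕ):ℤ) = (p:ℤ) - 2 := by
      have := congrArg (Nat.cast : ℕ → ℤ) hv
      rw [Nat.cast_sub (by omega)] at this
      push_cast at this
      exact this
    have hAu : A = p*v + u := by
      have hZ : (3:ℤ)*((A:ℕ):ℤ) = 3*((p:ℤ)*((v:ℕ):ℤ) + ((u:ℕ):ℤ)) := by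
        rw [h3AZ]
        linear_combination (-(p:ℤ)) * hvZ - huZ
      have := mul_left_cancel₀ (show (3:ℤ) ≠ 0 by norm_num) hZ
      exact_mod_cast this
    have hbu : b = u := by
      rw [hbdef, hAu, Nat.mul_add_mod]
      exact Nat.mod_eq_of_lt (by omega)
    have hbodd : Odd b := by
      rw [hbu, Nat.odd_iff]
      omega
    rw [hbodd.neg_one_pow]
    norm_num

end SB

theorem sum_binom_2k_3k (p : ℕ) [Fact p.Prime] (h3 : 3 < p) :
    ∑ k ∈ Finset.range p,
        ((Nat.choose (2*k) k : ZMod (p^2)) * (Nat.choose (3*k) k : ZMod (p^2))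
          * ((27 : ZMod (p^2))^k)⁻¹)
      = (legendreSym p (-3) : ZMod (p^2)) := by
  exact SB.main p h3
end

section
/- For any prime p > 3, the sum over k from 0 to p-1 of binom(2k,k)·binom(4k,2k)/64^k is congruent to the Legendre symbol (-2/p) modulo p^2. -/
open Finset

namespace SumBinomAux

variable {R : Type*} [CommRing R]

/-- In a commutative ring, expand a product of `u i + ε * w` where `ε^2 = 0`. -/
lemma eps_prod {ι : Type*} [DecidableEq ι] (s : Finset ι) (u : ι → R) (ε w : R)
    (hε : ε * ε = 0) :
    ∏ i ∈ s, (u i + ε * w) =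
      (∏ i ∈ s, u i) + ε * w * ∑ j ∈ s, ∏ i ∈ s.erase j, u i := by
  classical
  induction s using Finset.induction_on with
  | empty => simp
  | @insert a s ha ih =>
    rw [prod_insert ha, prod_insert ha, ih]
    have herase : ∀ j ∈ s, (insert a s).erase j = insert a (s.erase j) := by
      intro j hj
      exact Finset.erase_insert_of_ne (fun h => ha (h ▸ hj))
    have hsum : ∑ j ∈ insert a s, ∏ i ∈ (insert a s).erase j, u i
        = (∏ i ∈ s, u i) + u a * ∑ j ∈ s, ∏ i ∈ s.erase j, u i := by
      rw [Finset.sum_insert ha, Finset.erase_insert ha, Finset.mul_sum]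
      congr 1
      refine Finset.sum_congr rfl fun j hj => ?_
      rw [herase j hj, Finset.prod_insert (fun h => ha (Finset.mem_of_mem_erase h))]
    rw [hsum]
    linear_combination (w * w * ∑ j ∈ s, ∏ i ∈ s.erase j, u i) * hε


lemma descFactorial_cast (n k : ℕ) :
    ((n.descFactorial k : ℕ) : R) = ∏ j ∈ range k, ((n : R) - (j : R)) := by
  rcases le_or_gt k n with h | h
  · rw [Nat.descFactorial_eq_prod_range]
    push_cast
    refine Finset.prod_congr rfl fun j hj => ?_
    rw [Nat.cast_sub (le_trans (le_of_lt (Finset.mem_range.mp hj)) h)]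
  · rw [Nat.descFactorial_of_lt h, Nat.cast_zero]
    symm
    apply Finset.prod_eq_zero (Finset.mem_range.mpr h)
    rw [sub_self]

lemma factorial_mul_choose (n k : ℕ) : Nat.factorial k * n.choose k = n.descFactorial k := by
  rw [Nat.choose_eq_descFactorial_div_factorial]
  exact Nat.mul_div_cancel' (Nat.factorial_dvd_descFactorial n k)

lemma cast_factorial_mul_choose (n k : ℕ) :
    ((Nat.factorial k : ℕ) : R) * (n.choose k : R) = ∏ j ∈ range k, ((n : R) - (j : R)) := by
  rw [← Nat.cast_mul, factorial_mul_choose, descFactorial_cast]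

/-- Diagonal form of Vandermonde's identity. -/
lemma vand_diag (m n N : ℕ) (hn : n ≤ N) :
    ∑ k ∈ range (N + 1), m.choose k * n.choose k = (m + n).choose n := by
  calc ∑ k ∈ range (N + 1), m.choose k * n.choose k
      = ∑ k ∈ range (n + 1), m.choose k * n.choose k := by
        refine (Finset.sum_subset (Finset.range_subset_range.mpr (Nat.succ_le_succ hn)) ?_).symm
        intro k hk hk2
        have : n < k := by
          simp only [Finset.mem_range] at hk hk2; omega
        rw [Nat.choose_eq_zero_of_lt this, Nat.mul_zero]
    _ = ∑ k ∈ range (n + 1), m.choose k * n.choose (n - k) := by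
        refine Finset.sum_congr rfl fun k hk => ?_
        rw [Nat.choose_symm (by simp only [Finset.mem_range] at hk; omega)]
    _ = (m + n).choose n := by
        rw [Nat.add_choose_eq, Finset.Nat.sum_antidiagonal_eq_sum_range_succ_mk]

lemma prod_neg_one_sub (mm : ℕ) :
    ∏ j ∈ range mm, (-((j : R) + 1)) = (-1) ^ mm * ((Nat.factorial mm : ℕ) : R) := by
  induction mm with
  | zero => simp
  | succ n ih =>
    rw [Finset.prod_range_succ, ih, Nat.factorial_succ]
    push_cast
    ring


def Qr (R : Type*) [CommRing R] (c k : ℕ) : R := ∏ j ∈ range k, ((c : R) - (j : R))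

def Wr (R : Type*) [CommRing R] (c k : ℕ) : R :=
  ∑ j ∈ range k, ∏ i ∈ (range k).erase j, ((c : R) - (i : R))

def Wneg (R : Type*) [CommRing R] (m : ℕ) : R :=
  ∑ j ∈ range m, ∏ i ∈ (range m).erase j, (-((i : R) + 1))

section Prime

variable (p : ℕ) [hp : Fact p.Prime]

def Hs (m : ℕ) : ZMod p := ∑ j ∈ range m, ((j : ZMod p) + 1)⁻¹

def chi : ZMod (p^2) →+* ZMod p := ZMod.castHom (dvd_pow_self p two_ne_zero) (ZMod p)

lemma eps_sq : (p : ZMod (p^2)) * (p : ZMod (p^2)) = 0 := by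
  rw [← Nat.cast_mul, ← pow_two, ZMod.natCast_self]

lemma chi_eps_zero_iff (x : ZMod (p^2)) : chi p x = 0 ↔ (p : ZMod (p^2)) * x = 0 := by
  haveI : NeZero (p^2) := ⟨pow_ne_zero 2 hp.out.ne_zero⟩
  have h1 : chi p x = ((x.val : ZMod p)) := by
    conv_lhs => rw [← ZMod.natCast_zmod_val x]
    rw [map_natCast]
  have h2 : (p : ZMod (p^2)) * x = ((p * x.val : ℕ) : ZMod (p^2)) := by
    conv_lhs => rw [← ZMod.natCast_zmod_val x]
    push_cast
    ring
  rw [h1, h2, ZMod.natCast_eq_zero_iff, ZMod.natCast_eq_zero_iff]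
  obtain ⟨n, hnv⟩ : ∃ n, x.val = n := ⟨x.val, rfl⟩
  rw [hnv]
  constructor
  · rintro ⟨c, hc⟩
    exact ⟨c, by rw [hc]; ring⟩
  · rintro ⟨c, hc⟩
    exact ⟨c, Nat.eq_of_mul_eq_mul_left hp.out.pos (by rw [hc]; ring)⟩

lemma eps_mul_eq_iff (x y : ZMod (p^2)) :
    (p : ZMod (p^2)) * x = (p : ZMod (p^2)) * y ↔ chi p x = chi p y := by
  rw [← sub_eq_zero, ← mul_sub, ← chi_eps_zero_iff, map_sub, sub_eq_zero]

lemma not_dvd_factorial {k : ℕ} (hk : k < p) : ¬ p ∣ Nat.factorial k := by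
  intro h
  have := (Nat.Prime.dvd_factorial hp.out).mp h
  omega

lemma isUnit_cast_factorial {k : ℕ} (hk : k < p) :
    IsUnit ((Nat.factorial k : ℕ) : ZMod (p^2)) := by
  rw [ZMod.isUnit_iff_coprime]
  apply Nat.Coprime.pow_right
  rw [Nat.coprime_comm]
  exact (Nat.Prime.coprime_iff_not_dvd hp.out).mpr (not_dvd_factorial p hk)

lemma cast_factorial_ne_zero {k : ℕ} (hk : k < p) :
    ((Nat.factorial k : ℕ) : ZMod p) ≠ 0 := by
  rw [Ne, ZMod.natCast_eq_zero_iff]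
  exact not_dvd_factorial p hk

lemma chi_inv (x : ZMod (p^2)) (h : IsUnit x) : chi p (x⁻¹) = (chi p x)⁻¹ := by
  have h1 : chi p x * chi p (x⁻¹) = 1 := by
    rw [← map_mul, ZMod.mul_inv_of_unit x h, map_one]
  exact (inv_eq_of_mul_eq_one_right h1).symm

lemma chi_Qr (c k : ℕ) : chi p (Qr (ZMod (p^2)) c k) = Qr (ZMod p) c k := by
  simp [Qr, map_prod, map_sub, map_natCast]

lemma chi_Wr (c k : ℕ) : chi p (Wr (ZMod (p^2)) c k) = Wr (ZMod p) c k := by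
  simp [Wr, map_sum, map_prod, map_sub, map_natCast]

lemma chi_Wneg (m : ℕ) : chi p (Wneg (ZMod (p^2)) m) = Wneg (ZMod p) m := by
  simp [Wneg, map_sum, map_prod, map_natCast]

lemma cast_choose_eps {R : Type*} [CommRing R] (hpz : (p : R) * (p : R) = 0)
    (c₁ c₀ n k : ℕ) (hn : n = c₁ * p + c₀) :
    ((Nat.factorial k : ℕ) : R) * (n.choose k : R)
      = Qr R c₀ k + (p : R) * ((c₁ : R) * Wr R c₀ k) := by
  rw [cast_factorial_mul_choose]
  have hfac : ∀ j ∈ range k, ((n : R) - (j : R)) = (((c₀ : R) - (j : R)) + (p : R) * (c₁ : R)) := by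
    intro j hj
    subst hn
    push_cast
    ring
  rw [Finset.prod_congr rfl hfac, eps_prod _ _ _ _ hpz]
  rw [Qr, Wr]
  ring

lemma cast_choose_pm {R : Type*} [CommRing R] (hpz : (p : R) * (p : R) = 0)
    (t m : ℕ) (ht : 0 < t) :
    ((Nat.factorial m : ℕ) : R) * ((t * p - 1).choose m : R)
      = (-1) ^ m * ((Nat.factorial m : ℕ) : R) + (p : R) * ((t : R) * Wneg R m) := by
  rw [cast_factorial_mul_choose]
  have hfac : ∀ j ∈ range m, (((t * p - 1 : ℕ) : R) - (j : R))
      = ((-((j : R) + 1)) + (p : R) * (t : R)) := by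
    intro j hj
    have h1 : 1 ≤ t * p := Nat.mul_pos ht hp.out.pos
    rw [Nat.cast_sub h1]
    push_cast
    ring
  rw [Finset.prod_congr rfl hfac, eps_prod _ _ _ _ hpz, prod_neg_one_sub]
  rw [Wneg]
  ring


lemma Hs_p_sub_one (hodd : p % 2 = 1) (hp1 : 1 < p) : Hs p (p - 1) = 0 := by
  rw [Hs]
  refine Finset.sum_involution (fun a _ => p - 2 - a) ?_ ?_ ?_ ?_
  · intro a ha
    have ha' : a < p - 1 := Finset.mem_range.mp ha
    show ((a : ZMod p) + 1)⁻¹ + (((p - 2 - a : ℕ) : ZMod p) + 1)⁻¹ = 0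
    have hcast : (((p - 2 - a : ℕ)) : ZMod p) = -2 - (a : ZMod p) := by
      have h1 : ((p - 2 - a : ℕ) : ZMod p) = ((p - (2 + a) : ℕ) : ZMod p) := by
        congr 1
        omega
      rw [h1, Nat.cast_sub (by omega)]
      push_cast
      rw [ZMod.natCast_self]
      ring
    rw [hcast]
    have h2 : -2 - (a : ZMod p) + 1 = -((a : ZMod p) + 1) := by ring
    rw [h2, inv_neg]
    ring
  · intro a ha _
    have ha' : a < p - 1 := Finset.mem_range.mp ha
    show p - 2 - a ≠ a
    omega
  · intro a ha
    have ha' : a < p - 1 := Finset.mem_range.mp ha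
    show p - 2 - a ∈ range (p - 1)
    exact Finset.mem_range.mpr (by omega)
  · intro a ha
    have ha' : a < p - 1 := Finset.mem_range.mp ha
    show p - 2 - (p - 2 - a) = a
    omega

lemma Hs_reflect (hodd : p % 2 = 1) (hp1 : 1 < p) (c : ℕ) (hc : c ≤ p - 1) :
    Hs p (p - 1 - c) = Hs p c := by
  have h0 := Hs_p_sub_one p hodd hp1
  have hsplit : Hs p (p - 1 - c + c) = Hs p (p - 1 - c)
      + ∑ j ∈ range c, ((((p - 1 - c) + j : ℕ) : ZMod p) + 1)⁻¹ := by
    rw [Hs, Hs, Finset.sum_range_add]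
  have hcc : p - 1 - c + c = p - 1 := by omega
  rw [hcc] at hsplit
  have hsecond : ∑ j ∈ range c, ((((p - 1 - c) + j : ℕ) : ZMod p) + 1)⁻¹ = - Hs p c := by
    have hterm : ∀ j ∈ range c, ((((p - 1 - c) + j : ℕ) : ZMod p) + 1)⁻¹
        = -((((c - j : ℕ) : ZMod p))⁻¹) := by
      intro j hj
      have hj' : j < c := Finset.mem_range.mp hj
      have h1 : ((((p - 1 - c) + j : ℕ) : ZMod p) + 1) = -(((c - j : ℕ) : ZMod p)) := by
        have e1 : ((p - 1 - c + j : ℕ) : ZMod p) = ((p - (1 + (c - j)) : ℕ) : ZMod p) := by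
          congr 1
          omega
        rw [e1, Nat.cast_sub (by omega)]
        push_cast [ZMod.natCast_self]
        rw [Nat.cast_sub (by omega)]
        push_cast
        ring
      rw [h1, inv_neg]
    rw [Finset.sum_congr rfl hterm]
    have hrefl : ∑ j ∈ range c, (((c - j : ℕ) : ZMod p))⁻¹ = Hs p c := by
      rw [← Finset.sum_range_reflect (fun j => (((c - j : ℕ) : ZMod p))⁻¹) c]
      rw [Hs]
      refine Finset.sum_congr rfl fun j hj => ?_
      have hj' : j < c := Finset.mem_range.mp hj
      have h2 : c - (c - 1 - j) = j + 1 := by omega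
      rw [h2]
      push_cast
      rfl
    rw [Finset.sum_neg_distrib, hrefl]
  rw [hsecond, h0] at hsplit
  linear_combination -hsplit

lemma Wneg_eval (m : ℕ) (hm : m < p) :
    Wneg (ZMod p) m = -(-1) ^ m * ((Nat.factorial m : ℕ) : ZMod p) * Hs p m := by
  rw [Wneg]
  have hterm : ∀ j ∈ range m, (∏ i ∈ (range m).erase j, (-((i : ZMod p) + 1)))
      = (((j : ZMod p) + 1)⁻¹) * (-(-1) ^ m * ((Nat.factorial m : ℕ) : ZMod p)) := by
    intro j hj
    have hfull := Finset.mul_prod_erase (range m) (fun i => -((i : ZMod p) + 1)) hj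
    rw [prod_neg_one_sub] at hfull
    have hnz : ((j : ZMod p) + 1) ≠ 0 := by
      have hj' : j < m := Finset.mem_range.mp hj
      have hne : (((j + 1 : ℕ)) : ZMod p) ≠ 0 := by
        rw [Ne, ZMod.natCast_eq_zero_iff]
        intro hdvd
        have := Nat.le_of_dvd (by omega) hdvd
        omega
      push_cast at hne
      exact hne
    have hnz2 : (-((j : ZMod p) + 1)) ≠ 0 := neg_ne_zero.mpr hnz
    have hP : ∏ i ∈ (range m).erase j, (-((i : ZMod p) + 1))
        = (-((j : ZMod p) + 1))⁻¹ * ((-1) ^ m * ((Nat.factorial m : ℕ) : ZMod p)) := by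
      rw [← hfull, ← mul_assoc, inv_mul_cancel₀ hnz2, one_mul]
    rw [hP, inv_neg]
    ring
  rw [Finset.sum_congr rfl hterm, ← Finset.sum_mul, Hs]
  ring


lemma core (hp3 : 3 < p) (c d : ℕ) (hcd : c + d = p - 1) :
    ∑ k ∈ range p, ((Nat.factorial k : ℕ) : ZMod p)⁻¹ * ((Nat.factorial k : ℕ) : ZMod p)⁻¹
        * Wr (ZMod p) c k * Qr (ZMod p) d k
      = -(-1) ^ d * Hs p d := by
  have hodd : p % 2 = 1 := Nat.odd_iff.mp (hp.out.odd_of_ne_two (by omega))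
  have hd : d < p := by omega
  have hc : c < p := by omega
  have hpz : (p : ZMod (p^2)) * (p : ZMod (p^2)) = 0 := eps_sq p
  -- ℕ-level Vandermonde instances
  have v1 : ∑ k ∈ range (d+1), (c+p).choose k * d.choose k = (2*p - 1).choose d := by
    have h := vand_diag (c+p) d d le_rfl
    rw [show c + p + d = 2*p - 1 by omega] at h
    exact h
  have v2 : ∑ k ∈ range (d+1), c.choose k * d.choose k = (p - 1).choose d := by
    have h := vand_diag c d d le_rfl
    rw [hcd] at h
    exact h
  have v1R : ∑ k ∈ range (d+1), ((c+p).choose k : ZMod (p^2)) * (d.choose k : ZMod (p^2))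
      = ((2*p - 1).choose d : ZMod (p^2)) := by
    exact_mod_cast congrArg (fun n : ℕ => (n : ZMod (p^2))) v1
  have v2R : ∑ k ∈ range (d+1), (c.choose k : ZMod (p^2)) * (d.choose k : ZMod (p^2))
      = ((p - 1).choose d : ZMod (p^2)) := by
    exact_mod_cast congrArg (fun n : ℕ => (n : ZMod (p^2))) v2
  -- rewrite each summand of v1R
  have hsummand : ∀ k ∈ range (d+1),
      ((c+p).choose k : ZMod (p^2)) * (d.choose k : ZMod (p^2))
      = (c.choose k : ZMod (p^2)) * (d.choose k : ZMod (p^2))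
        + (p : ZMod (p^2)) * (((Nat.factorial k : ℕ) : ZMod (p^2))⁻¹
            * Wr (ZMod (p^2)) c k * (d.choose k : ZMod (p^2))) := by
    intro k hk
    have hk' : k < p := by have := Finset.mem_range.mp hk; omega
    have hu := isUnit_cast_factorial p hk'
    have hinv : ((Nat.factorial k : ℕ) : ZMod (p^2))⁻¹ * ((Nat.factorial k : ℕ) : ZMod (p^2)) = 1 :=
      ZMod.inv_mul_of_unit _ hu
    have he := cast_choose_eps p hpz 1 c (c+p) k (by ring)
    have hq : Qr (ZMod (p^2)) c k
        = ((Nat.factorial k : ℕ) : ZMod (p^2)) * (c.choose k : ZMod (p^2)) := by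
      rw [Qr]
      exact (cast_factorial_mul_choose c k).symm
    have he2 : ((c+p).choose k : ZMod (p^2))
        = ((Nat.factorial k : ℕ) : ZMod (p^2))⁻¹
            * (Qr (ZMod (p^2)) c k + (p : ZMod (p^2)) * (((1:ℕ) : ZMod (p^2)) * Wr (ZMod (p^2)) c k)) := by
      rw [← he, ← mul_assoc, hinv, one_mul]
    rw [he2, hq]
    have expand : ((Nat.factorial k : ℕ) : ZMod (p^2))⁻¹
          * (((Nat.factorial k : ℕ) : ZMod (p^2)) * (c.choose k : ZMod (p^2))
            + (p : ZMod (p^2)) * (((1:ℕ) : ZMod (p^2)) * Wr (ZMod (p^2)) c k))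
          * (d.choose k : ZMod (p^2))
        = (((Nat.factorial k : ℕ) : ZMod (p^2))⁻¹ * ((Nat.factorial k : ℕ) : ZMod (p^2)))
            * ((c.choose k : ZMod (p^2)) * (d.choose k : ZMod (p^2)))
          + (p : ZMod (p^2)) * (((Nat.factorial k : ℕ) : ZMod (p^2))⁻¹
              * Wr (ZMod (p^2)) c k * (d.choose k : ZMod (p^2))) := by
      push_cast
      ring
    rw [expand, hinv, one_mul]
  -- extract the ε-part
  have hX : (p : ZMod (p^2)) * (∑ k ∈ range (d+1), ((Nat.factorial k : ℕ) : ZMod (p^2))⁻¹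
        * Wr (ZMod (p^2)) c k * (d.choose k : ZMod (p^2)))
      = ((2*p - 1).choose d : ZMod (p^2)) - ((p - 1).choose d : ZMod (p^2)) := by
    rw [Finset.mul_sum, ← v1R, ← v2R, Finset.sum_congr rfl hsummand, Finset.sum_add_distrib]
    ring
  -- evaluate the choose differences
  have hud := isUnit_cast_factorial p hd
  have hinvd : ((Nat.factorial d : ℕ) : ZMod (p^2))⁻¹ * ((Nat.factorial d : ℕ) : ZMod (p^2)) = 1 :=
    ZMod.inv_mul_of_unit _ hud
  have e2 := cast_choose_pm p hpz 2 d (by omega)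
  have e1 := cast_choose_pm p hpz 1 d (by omega)
  rw [one_mul] at e1
  have h2c : ((2*p - 1).choose d : ZMod (p^2))
      = ((Nat.factorial d : ℕ) : ZMod (p^2))⁻¹
          * ((-1) ^ d * ((Nat.factorial d : ℕ) : ZMod (p^2))
            + (p : ZMod (p^2)) * (((2:ℕ) : ZMod (p^2)) * Wneg (ZMod (p^2)) d)) := by
    rw [← e2, ← mul_assoc, hinvd, one_mul]
  have h1c : ((p - 1).choose d : ZMod (p^2))
      = ((Nat.factorial d : ℕ) : ZMod (p^2))⁻¹
          * ((-1) ^ d * ((Nat.factorial d : ℕ) : ZMod (p^2))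
            + (p : ZMod (p^2)) * (((1:ℕ) : ZMod (p^2)) * Wneg (ZMod (p^2)) d)) := by
    rw [← e1, ← mul_assoc, hinvd, one_mul]
  have hXfinal : (p : ZMod (p^2)) * (∑ k ∈ range (d+1), ((Nat.factorial k : ℕ) : ZMod (p^2))⁻¹
        * Wr (ZMod (p^2)) c k * (d.choose k : ZMod (p^2)))
      = (p : ZMod (p^2)) * (((Nat.factorial d : ℕ) : ZMod (p^2))⁻¹ * Wneg (ZMod (p^2)) d) := by
    rw [hX, h2c, h1c]
    push_cast
    ring
  have hchi := (eps_mul_eq_iff p _ _).mp hXfinal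
  -- push chi inside
  have hchiL : chi p (∑ k ∈ range (d+1), ((Nat.factorial k : ℕ) : ZMod (p^2))⁻¹
        * Wr (ZMod (p^2)) c k * (d.choose k : ZMod (p^2)))
      = ∑ k ∈ range (d+1), ((Nat.factorial k : ℕ) : ZMod p)⁻¹
          * Wr (ZMod p) c k * (d.choose k : ZMod p) := by
    rw [map_sum]
    refine Finset.sum_congr rfl fun k hk => ?_
    have hk' : k < p := by have := Finset.mem_range.mp hk; omega
    rw [map_mul, map_mul, chi_inv p _ (isUnit_cast_factorial p hk'), map_natCast, chi_Wr,
      map_natCast]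
  have hchiR : chi p (((Nat.factorial d : ℕ) : ZMod (p^2))⁻¹ * Wneg (ZMod (p^2)) d)
      = -(-1) ^ d * Hs p d := by
    rw [map_mul, chi_inv p _ hud, map_natCast, chi_Wneg, Wneg_eval p d hd]
    have hfd := cast_factorial_ne_zero p hd
    field_simp
  rw [hchiL, hchiR] at hchi
  -- convert target sum to the established one
  rw [← hchi]
  have hzero : ∀ k ∈ range p, k ∉ range (d+1) →
      ((Nat.factorial k : ℕ) : ZMod p)⁻¹ * ((Nat.factorial k : ℕ) : ZMod p)⁻¹
        * Wr (ZMod p) c k * Qr (ZMod p) d k = 0 := by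
    intro k hk hk2
    have hdk : d < k := by
      have := Finset.mem_range.mp hk
      simp only [Finset.mem_range] at hk2
      omega
    have : Qr (ZMod p) d k = 0 := by
      rw [Qr, ← descFactorial_cast, Nat.descFactorial_of_lt hdk, Nat.cast_zero]
    rw [this, mul_zero]
  rw [← Finset.sum_subset (Finset.range_subset_range.mpr (by omega : d + 1 ≤ p)) hzero]
  refine Finset.sum_congr rfl fun k hk => ?_
  have hk' : k < p := by have := Finset.mem_range.mp hk; omega
  have hfk := cast_factorial_ne_zero p hk'
  have hq : Qr (ZMod p) d k = ((Nat.factorial k : ℕ) : ZMod p) * (d.choose k : ZMod p) := by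
    rw [Qr]
    exact (cast_factorial_mul_choose d k).symm
  rw [hq]
  field_simp


lemma fourfac (k : ℕ) : Nat.factorial (4*k)
    = 4^k * Nat.factorial (2*k) * ∏ j ∈ range k, ((4*j+1)*(4*j+3)) := by
  induction k with
  | zero => simp
  | succ n ih =>
    have h1 : 4*(n+1) = (4*n+3)+1 := by omega
    have h2 : 4*n+3 = (4*n+2)+1 := by omega
    have h3 : 4*n+2 = (4*n+1)+1 := by omega
    have h4 : 4*n+1 = (4*n)+1 := by omega
    rw [h1, Nat.factorial_succ, h2, Nat.factorial_succ, h3, Nat.factorial_succ, h4,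
      Nat.factorial_succ, ih]
    have h5 : 2*(n+1) = (2*n+1)+1 := by omega
    have h6 : 2*n+1 = (2*n)+1 := by omega
    rw [h5, Nat.factorial_succ, h6, Nat.factorial_succ, Finset.prod_range_succ, pow_succ]
    ring

lemma nat_key (k : ℕ) : (2*k).choose k * (4*k).choose (2*k)
    * (Nat.factorial k * Nat.factorial k)
    = 4^k * ∏ j ∈ range k, ((4*j+1)*(4*j+3)) := by
  have e1 : (2*k).choose k * Nat.factorial k * Nat.factorial k = Nat.factorial (2*k) := by
    have h := Nat.choose_mul_factorial_mul_factorial (show k ≤ 2*k by omega)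
    rwa [show 2*k - k = k by omega] at h
  have e2 : (4*k).choose (2*k) * Nat.factorial (2*k) * Nat.factorial (2*k)
      = Nat.factorial (4*k) := by
    have h := Nat.choose_mul_factorial_mul_factorial (show 2*k ≤ 4*k by omega)
    rwa [show 4*k - 2*k = 2*k by omega] at h
  apply Nat.eq_of_mul_eq_mul_right (Nat.factorial_pos (2*k))
  apply Nat.eq_of_mul_eq_mul_right (Nat.factorial_pos (2*k))
  calc (2*k).choose k * (4*k).choose (2*k) * (Nat.factorial k * Nat.factorial k)
        * Nat.factorial (2*k) * Nat.factorial (2*k)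
      = ((2*k).choose k * Nat.factorial k * Nat.factorial k)
          * ((4*k).choose (2*k) * Nat.factorial (2*k) * Nat.factorial (2*k)) := by ring
    _ = Nat.factorial (2*k) * Nat.factorial (4*k) := by rw [e1, e2]
    _ = Nat.factorial (2*k) * (4^k * Nat.factorial (2*k)
          * ∏ j ∈ range k, ((4*j+1)*(4*j+3))) := by rw [fourfac]
    _ = (4^k * ∏ j ∈ range k, ((4*j+1)*(4*j+3))) * Nat.factorial (2*k)
          * Nat.factorial (2*k) := by ring


lemma step1 (hp3 : 3 < p) (A B : ℕ)
    (h4A : 4*A + 1 = p^2) (h4B : 4*B + 3 = 3*p^2) (k : ℕ) (hk : k < p) :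
    ((2*k).choose k : ZMod (p^2)) * ((4*k).choose (2*k) : ZMod (p^2))
        * ((64 : ZMod (p^2))^k)⁻¹
      = (A.choose k : ZMod (p^2)) * (B.choose k : ZMod (p^2)) := by
  have hfk := isUnit_cast_factorial p hk
  have h2p : Nat.Coprime 64 p := by
    have h2 : Nat.Coprime 2 p := (Nat.coprime_primes Nat.prime_two hp.out).mpr (by omega)
    have h64 : (64:ℕ) = 2^6 := by norm_num
    rw [h64]
    exact Nat.Coprime.pow_left 6 h2
  have hu64 : IsUnit ((64 : ZMod (p^2))) := by
    have hc : ((64:ℕ) : ZMod (p^2)) = (64 : ZMod (p^2)) := by push_cast; ring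
    rw [← hc, ZMod.isUnit_iff_coprime]
    exact Nat.Coprime.pow_right 2 h2p
  have h64k : IsUnit ((64 : ZMod (p^2))^k) := hu64.pow k
  have hU : IsUnit ((64 : ZMod (p^2))^k
      * (((Nat.factorial k : ℕ) : ZMod (p^2)) * ((Nat.factorial k : ℕ) : ZMod (p^2)))) :=
    h64k.mul (hfk.mul hfk)
  apply hU.mul_right_cancel
  have hLHS : ((2*k).choose k : ZMod (p^2)) * ((4*k).choose (2*k) : ZMod (p^2))
        * ((64 : ZMod (p^2))^k)⁻¹
        * ((64 : ZMod (p^2))^k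
          * (((Nat.factorial k : ℕ) : ZMod (p^2)) * ((Nat.factorial k : ℕ) : ZMod (p^2))))
      = ((4^k * ∏ j ∈ range k, ((4*j+1)*(4*j+3)) : ℕ) : ZMod (p^2)) := by
    have hre : ((2*k).choose k : ZMod (p^2)) * ((4*k).choose (2*k) : ZMod (p^2))
          * ((64 : ZMod (p^2))^k)⁻¹
          * ((64 : ZMod (p^2))^k
            * (((Nat.factorial k : ℕ) : ZMod (p^2)) * ((Nat.factorial k : ℕ) : ZMod (p^2))))
        = ((2*k).choose k : ZMod (p^2)) * ((4*k).choose (2*k) : ZMod (p^2))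
            * (((Nat.factorial k : ℕ) : ZMod (p^2)) * ((Nat.factorial k : ℕ) : ZMod (p^2)))
          * (((64 : ZMod (p^2))^k)⁻¹ * (64 : ZMod (p^2))^k) := by ring
    rw [hre, ZMod.inv_mul_of_unit _ h64k, mul_one, ← nat_key]
    push_cast
    ring
  rw [hLHS]
  symm
  -- now the RHS
  have hqA : ((Nat.factorial k : ℕ) : ZMod (p^2)) * (A.choose k : ZMod (p^2))
      = ∏ j ∈ range k, ((A : ZMod (p^2)) - (j : ZMod (p^2))) := cast_factorial_mul_choose A k
  have hqB : ((Nat.factorial k : ℕ) : ZMod (p^2)) * (B.choose k : ZMod (p^2))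
      = ∏ j ∈ range k, ((B : ZMod (p^2)) - (j : ZMod (p^2))) := cast_factorial_mul_choose B k
  have h4Ac : (4 : ZMod (p^2)) * (A : ZMod (p^2)) = -1 := by
    have hc : ((4*A + 1 : ℕ) : ZMod (p^2)) = ((p^2 : ℕ) : ZMod (p^2)) := by rw [h4A]
    rw [ZMod.natCast_self] at hc
    push_cast at hc
    linear_combination hc
  have h4Bc : (4 : ZMod (p^2)) * (B : ZMod (p^2)) = -3 := by
    have hc : ((4*B + 3 : ℕ) : ZMod (p^2)) = ((3*p^2 : ℕ) : ZMod (p^2)) := by rw [h4B]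
    have hz : ((p^2 : ℕ) : ZMod (p^2)) = 0 := ZMod.natCast_self _
    push_cast [hz] at hc
    linear_combination hc
  have hc4 : (4 : ZMod (p^2))^k = ∏ _j ∈ range k, (4 : ZMod (p^2)) := by
    rw [Finset.prod_const, Finset.card_range]
  have hA4 : (∏ j ∈ range k, ((A : ZMod (p^2)) - (j : ZMod (p^2)))) * (4 : ZMod (p^2))^k
      = ∏ j ∈ range k, (-1 - 4*(j : ZMod (p^2))) := by
    rw [hc4, ← Finset.prod_mul_distrib]
    refine Finset.prod_congr rfl fun j hj => ?_
    linear_combination h4Ac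
  have hB4 : (∏ j ∈ range k, ((B : ZMod (p^2)) - (j : ZMod (p^2)))) * (4 : ZMod (p^2))^k
      = ∏ j ∈ range k, (-3 - 4*(j : ZMod (p^2))) := by
    rw [hc4, ← Finset.prod_mul_distrib]
    refine Finset.prod_congr rfl fun j hj => ?_
    linear_combination h4Bc
  have hprod : (∏ j ∈ range k, (-1 - 4*(j : ZMod (p^2))))
        * (∏ j ∈ range k, (-3 - 4*(j : ZMod (p^2))))
      = ((∏ j ∈ range k, ((4*j+1)*(4*j+3)) : ℕ) : ZMod (p^2)) := by
    rw [← Finset.prod_mul_distrib]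
    push_cast
    refine Finset.prod_congr rfl fun j hj => ?_
    ring
  calc (A.choose k : ZMod (p^2)) * (B.choose k : ZMod (p^2))
        * ((64 : ZMod (p^2))^k
          * (((Nat.factorial k : ℕ) : ZMod (p^2)) * ((Nat.factorial k : ℕ) : ZMod (p^2))))
      = (((Nat.factorial k : ℕ) : ZMod (p^2)) * (A.choose k : ZMod (p^2)))
          * (((Nat.factorial k : ℕ) : ZMod (p^2)) * (B.choose k : ZMod (p^2)))
          * (64 : ZMod (p^2))^k := by ring
    _ = (∏ j ∈ range k, ((A : ZMod (p^2)) - (j : ZMod (p^2))))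
          * (∏ j ∈ range k, ((B : ZMod (p^2)) - (j : ZMod (p^2))))
          * (64 : ZMod (p^2))^k := by rw [hqA, hqB]
    _ = ((∏ j ∈ range k, ((A : ZMod (p^2)) - (j : ZMod (p^2)))) * (4 : ZMod (p^2))^k)
          * ((∏ j ∈ range k, ((B : ZMod (p^2)) - (j : ZMod (p^2)))) * (4 : ZMod (p^2))^k)
          * (4 : ZMod (p^2))^k := by
        rw [show (64 : ZMod (p^2)) = 4*(4*4) by norm_num, mul_pow, mul_pow]
        ring
    _ = (∏ j ∈ range k, (-1 - 4*(j : ZMod (p^2))))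
          * (∏ j ∈ range k, (-3 - 4*(j : ZMod (p^2)))) * (4 : ZMod (p^2))^k := by
        rw [hA4, hB4]
    _ = ((∏ j ∈ range k, ((4*j+1)*(4*j+3)) : ℕ) : ZMod (p^2)) * (4 : ZMod (p^2))^k := by
        rw [hprod]
    _ = ((4^k * ∏ j ∈ range k, ((4*j+1)*(4*j+3)) : ℕ) : ZMod (p^2)) := by
        push_cast
        ring


lemma split_k (A a₁ a₀ B b₁ b₀ : ℕ) (hA : A = a₁ * p + a₀) (hB : B = b₁ * p + b₀)
    (k : ℕ) (hk : k < p) :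
    (A.choose k : ZMod (p^2)) * (B.choose k : ZMod (p^2))
      = (a₀.choose k : ZMod (p^2)) * (b₀.choose k : ZMod (p^2))
        + (p : ZMod (p^2)) * (((Nat.factorial k : ℕ) : ZMod (p^2))⁻¹
            * ((Nat.factorial k : ℕ) : ZMod (p^2))⁻¹
            * ((a₁ : ZMod (p^2)) * Wr (ZMod (p^2)) a₀ k * Qr (ZMod (p^2)) b₀ k
              + (b₁ : ZMod (p^2)) * Wr (ZMod (p^2)) b₀ k * Qr (ZMod (p^2)) a₀ k)) := by
  have hpz : (p : ZMod (p^2)) * (p : ZMod (p^2)) = 0 := eps_sq p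
  have hfk := isUnit_cast_factorial p hk
  have hinvk : ((Nat.factorial k : ℕ) : ZMod (p^2))⁻¹ * ((Nat.factorial k : ℕ) : ZMod (p^2)) = 1 :=
    ZMod.inv_mul_of_unit _ hfk
  have heA := cast_choose_eps p hpz a₁ a₀ A k hA
  have heB := cast_choose_eps p hpz b₁ b₀ B k hB
  have hqa : Qr (ZMod (p^2)) a₀ k
      = ((Nat.factorial k : ℕ) : ZMod (p^2)) * (a₀.choose k : ZMod (p^2)) := by
    rw [Qr]
    exact (cast_factorial_mul_choose a₀ k).symm
  have hqb : Qr (ZMod (p^2)) b₀ k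
      = ((Nat.factorial k : ℕ) : ZMod (p^2)) * (b₀.choose k : ZMod (p^2)) := by
    rw [Qr]
    exact (cast_factorial_mul_choose b₀ k).symm
  apply (hfk.mul hfk).mul_left_cancel
  have hstep : (((Nat.factorial k : ℕ) : ZMod (p^2)) * ((Nat.factorial k : ℕ) : ZMod (p^2)))
        * ((A.choose k : ZMod (p^2)) * (B.choose k : ZMod (p^2)))
      = Qr (ZMod (p^2)) a₀ k * Qr (ZMod (p^2)) b₀ k
        + (p : ZMod (p^2)) * ((a₁ : ZMod (p^2)) * Wr (ZMod (p^2)) a₀ k * Qr (ZMod (p^2)) b₀ k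
            + (b₁ : ZMod (p^2)) * Wr (ZMod (p^2)) b₀ k * Qr (ZMod (p^2)) a₀ k) := by
    calc (((Nat.factorial k : ℕ) : ZMod (p^2)) * ((Nat.factorial k : ℕ) : ZMod (p^2)))
          * ((A.choose k : ZMod (p^2)) * (B.choose k : ZMod (p^2)))
        = (((Nat.factorial k : ℕ) : ZMod (p^2)) * (A.choose k : ZMod (p^2)))
            * (((Nat.factorial k : ℕ) : ZMod (p^2)) * (B.choose k : ZMod (p^2))) := by ring
      _ = (Qr (ZMod (p^2)) a₀ k + (p : ZMod (p^2)) * ((a₁ : ZMod (p^2)) * Wr (ZMod (p^2)) a₀ k))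
            * (Qr (ZMod (p^2)) b₀ k
              + (p : ZMod (p^2)) * ((b₁ : ZMod (p^2)) * Wr (ZMod (p^2)) b₀ k)) := by
          rw [heA, heB]
      _ = Qr (ZMod (p^2)) a₀ k * Qr (ZMod (p^2)) b₀ k
            + (p : ZMod (p^2)) * ((a₁ : ZMod (p^2)) * Wr (ZMod (p^2)) a₀ k * Qr (ZMod (p^2)) b₀ k
                + (b₁ : ZMod (p^2)) * Wr (ZMod (p^2)) b₀ k * Qr (ZMod (p^2)) a₀ k) := by
          linear_combination ((a₁ : ZMod (p^2)) * Wr (ZMod (p^2)) a₀ k)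
            * ((b₁ : ZMod (p^2)) * Wr (ZMod (p^2)) b₀ k) * hpz
  rw [hstep]
  have hcanc : (((Nat.factorial k : ℕ) : ZMod (p^2)) * ((Nat.factorial k : ℕ) : ZMod (p^2)))
        * (((Nat.factorial k : ℕ) : ZMod (p^2))⁻¹ * ((Nat.factorial k : ℕ) : ZMod (p^2))⁻¹
          * ((a₁ : ZMod (p^2)) * Wr (ZMod (p^2)) a₀ k * Qr (ZMod (p^2)) b₀ k
            + (b₁ : ZMod (p^2)) * Wr (ZMod (p^2)) b₀ k * Qr (ZMod (p^2)) a₀ k))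
      = ((a₁ : ZMod (p^2)) * Wr (ZMod (p^2)) a₀ k * Qr (ZMod (p^2)) b₀ k
          + (b₁ : ZMod (p^2)) * Wr (ZMod (p^2)) b₀ k * Qr (ZMod (p^2)) a₀ k) := by
    calc (((Nat.factorial k : ℕ) : ZMod (p^2)) * ((Nat.factorial k : ℕ) : ZMod (p^2)))
          * (((Nat.factorial k : ℕ) : ZMod (p^2))⁻¹ * ((Nat.factorial k : ℕ) : ZMod (p^2))⁻¹
            * ((a₁ : ZMod (p^2)) * Wr (ZMod (p^2)) a₀ k * Qr (ZMod (p^2)) b₀ k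
              + (b₁ : ZMod (p^2)) * Wr (ZMod (p^2)) b₀ k * Qr (ZMod (p^2)) a₀ k))
        = (((Nat.factorial k : ℕ) : ZMod (p^2))⁻¹ * ((Nat.factorial k : ℕ) : ZMod (p^2)))
            * (((Nat.factorial k : ℕ) : ZMod (p^2))⁻¹ * ((Nat.factorial k : ℕ) : ZMod (p^2)))
            * ((a₁ : ZMod (p^2)) * Wr (ZMod (p^2)) a₀ k * Qr (ZMod (p^2)) b₀ k
              + (b₁ : ZMod (p^2)) * Wr (ZMod (p^2)) b₀ k * Qr (ZMod (p^2)) a₀ k) := by ring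
      _ = _ := by rw [hinvk]; ring
  linear_combination (Qr (ZMod (p^2)) b₀ k) * hqa
    + (((Nat.factorial k : ℕ) : ZMod (p^2)) * (a₀.choose k : ZMod (p^2))) * hqb
    - (p : ZMod (p^2)) * hcanc

end Prime

end SumBinomAux

open Finset SumBinomAux

theorem sum_binom_2k_4k (p : ℕ) [Fact p.Prime] (h3 : 3 < p) :
    ∑ k ∈ Finset.range p,
        ((Nat.choose (2*k) k : ZMod (p^2)) * (Nat.choose (4*k) (2*k) : ZMod (p^2))
          * ((64 : ZMod (p^2))^k)⁻¹)
      = (legendreSym p (-2) : ZMod (p^2)) := by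
  classical
  have hp : p.Prime := Fact.out
  have hodd : p % 2 = 1 := Nat.odd_iff.mp (hp.odd_of_ne_two (by omega))
  obtain ⟨m, hm⟩ : ∃ m, p = 2*m + 1 := ⟨p/2, by omega⟩
  set A : ℕ := m*(m+1) with hA_def
  set B : ℕ := 3*(m*(m+1)) with hB_def
  set a₀ : ℕ := A % p with ha0_def
  set a₁ : ℕ := A / p with ha1_def
  set b₀ : ℕ := B % p with hb0_def
  set b₁ : ℕ := B / p with hb1_def
  have h4A : 4*A + 1 = p^2 := by rw [hA_def, hm]; ring
  have h4B : 4*B + 3 = 3*p^2 := by rw [hB_def, hm]; ring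
  have hA : A = a₁ * p + a₀ := by
    rw [ha1_def, ha0_def]
    exact ((Nat.mod_add_div' A p).symm.trans (Nat.add_comm _ _))
  have hB : B = b₁ * p + b₀ := by
    rw [hb1_def, hb0_def]
    exact ((Nat.mod_add_div' B p).symm.trans (Nat.add_comm _ _))
  have ha0 : a₀ < p := Nat.mod_lt _ hp.pos
  have hb0 : b₀ < p := Nat.mod_lt _ hp.pos
  have hABsum : A + B + 1 = p^2 := by rw [hA_def, hB_def, hm]; ring
  have hpp : (p-1)*p + (p-1) + 1 = p^2 := by
    obtain ⟨q, hq⟩ : ∃ q, p = q + 1 := ⟨p-1, by omega⟩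
    rw [hq, Nat.add_sub_cancel]
    ring
  have hab0 : a₀ + b₀ = p - 1 := by
    have h1 : (A + B) % p = p - 1 := by
      have hAB2 : A + B = p*(p-1) + (p-1) := by
        have e : p*(p-1) = (p-1)*p := Nat.mul_comm _ _
        omega
      rw [hAB2, Nat.mul_add_mod, Nat.mod_eq_of_lt (by omega)]
    have h2 : (a₀ + b₀) % p = p - 1 := by
      rw [ha0_def, hb0_def, ← Nat.add_mod]
      exact h1
    rcases Nat.lt_or_ge (a₀ + b₀) p with h | h
    · rwa [Nat.mod_eq_of_lt h] at h2
    · rw [Nat.mod_eq_sub_mod h, Nat.mod_eq_of_lt (by omega)] at h2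
      omega
  have hab1 : a₁ + b₁ = p - 1 := by
    have e0 : (a₁ + b₁) * p = a₁ * p + b₁ * p := Nat.add_mul _ _ _
    have e1 : (a₁ + b₁) * p = (p-1) * p := by omega
    exact Nat.eq_of_mul_eq_mul_right hp.pos e1
  -- Step 1 : rewrite the summands
  have hstep1 : ∀ k ∈ Finset.range p,
      ((Nat.choose (2*k) k : ZMod (p^2)) * (Nat.choose (4*k) (2*k) : ZMod (p^2))
        * ((64 : ZMod (p^2))^k)⁻¹)
      = (A.choose k : ZMod (p^2)) * (B.choose k : ZMod (p^2)) := fun k hk =>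
    SumBinomAux.step1 p h3 A B h4A h4B k (Finset.mem_range.mp hk)
  rw [Finset.sum_congr rfl hstep1]
  rw [Finset.sum_congr rfl (fun k hk =>
    SumBinomAux.split_k p A a₁ a₀ B b₁ b₀ hA hB k (Finset.mem_range.mp hk))]
  rw [Finset.sum_add_distrib, ← Finset.mul_sum]
  have hmain : ∑ k ∈ Finset.range p, (a₀.choose k : ZMod (p^2)) * (b₀.choose k : ZMod (p^2))
      = ((p-1).choose b₀ : ZMod (p^2)) := by
    have hnat : ∑ k ∈ Finset.range p, a₀.choose k * b₀.choose k = (p-1).choose b₀ := by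
      have h := SumBinomAux.vand_diag a₀ b₀ (p-1) (by omega)
      rw [show p - 1 + 1 = p by omega, hab0] at h
      exact h
    exact_mod_cast congrArg (fun n : ℕ => (n : ZMod (p^2))) hnat
  rw [hmain]
  have hpz := SumBinomAux.eps_sq p
  have hub := SumBinomAux.isUnit_cast_factorial p hb0
  have hinvb : ((Nat.factorial b₀ : ℕ) : ZMod (p^2))⁻¹
      * ((Nat.factorial b₀ : ℕ) : ZMod (p^2)) = 1 := ZMod.inv_mul_of_unit _ hub
  have e1b := SumBinomAux.cast_choose_pm p hpz 1 b₀ one_pos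
  rw [one_mul] at e1b
  have hPB : ((p - 1).choose b₀ : ZMod (p^2))
      = (-1)^b₀ + (p : ZMod (p^2)) * (((Nat.factorial b₀ : ℕ) : ZMod (p^2))⁻¹
          * (((1:ℕ) : ZMod (p^2)) * Wneg (ZMod (p^2)) b₀)) := by
    have h2 : ((p-1).choose b₀ : ZMod (p^2))
        = ((Nat.factorial b₀ : ℕ) : ZMod (p^2))⁻¹
            * ((-1)^b₀ * ((Nat.factorial b₀ : ℕ) : ZMod (p^2))
              + (p : ZMod (p^2)) * (((1:ℕ) : ZMod (p^2)) * Wneg (ZMod (p^2)) b₀)) := by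
      rw [← e1b, ← mul_assoc, hinvb, one_mul]
    rw [h2]
    linear_combination ((-1 : ZMod (p^2))^b₀) * hinvb
  rw [hPB]
  -- the Legendre symbol value
  have hLeg : ((legendreSym p (-2) : ℤ) : ZMod (p^2)) = (-1 : ZMod (p^2))^b₀ := by
    have hL2 : legendreSym p (-2) = ZMod.χ₈' (p : ZMod 8) := legendreSym.at_neg_two (by omega)
    have hb0eq : ∀ (Q T : ℕ), B = p * Q + T → T < p → b₀ = T := by
      intro Q T hQT hT
      rw [hb0_def, hQT, Nat.mul_add_mod, Nat.mod_eq_of_lt hT]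
    have hcase : p % 8 = 1 ∨ p % 8 = 3 ∨ p % 8 = 5 ∨ p % 8 = 7 := by omega
    rcases hcase with h8 | h8 | h8 | h8
    · obtain ⟨u, hu⟩ : ∃ u, p = 8*u+1 := ⟨p/8, by omega⟩
      have hmu : m = 4*u := by omega
      have hb0v : b₀ = 6*u := hb0eq (6*u) (6*u) (by rw [hB_def, hmu, hu]; ring) (by omega)
      have hval : legendreSym p (-2) = 1 := by
        rw [hL2, ZMod.χ₈'_nat_eq_if_mod_eight, if_neg (by omega), if_pos (Or.inl h8)]
      rw [hval, hb0v, (show Even (6*u) from ⟨3*u, by ring⟩).neg_one_pow]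
      norm_num
    · obtain ⟨u, hu⟩ : ∃ u, p = 8*u+3 := ⟨p/8, by omega⟩
      have hmu : m = 4*u+1 := by omega
      have hb0v : b₀ = 2*u := hb0eq (6*u+2) (2*u) (by rw [hB_def, hmu, hu]; ring) (by omega)
      have hval : legendreSym p (-2) = 1 := by
        rw [hL2, ZMod.χ₈'_nat_eq_if_mod_eight, if_neg (by omega), if_pos (Or.inr h8)]
      rw [hval, hb0v, (show Even (2*u) from ⟨u, by ring⟩).neg_one_pow]
      norm_num
    · obtain ⟨u, hu⟩ : ∃ u, p = 8*u+5 := ⟨p/8, by omega⟩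
      have hmu : m = 4*u+2 := by omega
      have hb0v : b₀ = 6*u+3 := hb0eq (6*u+3) (6*u+3) (by rw [hB_def, hmu, hu]; ring) (by omega)
      have hval : legendreSym p (-2) = -1 := by
        rw [hL2, ZMod.χ₈'_nat_eq_if_mod_eight, if_neg (by omega), if_neg (by omega)]
      rw [hval, hb0v, (show Odd (6*u+3) from ⟨3*u+1, by ring⟩).neg_one_pow]
      norm_num
    · obtain ⟨u, hu⟩ : ∃ u, p = 8*u+7 := ⟨p/8, by omega⟩
      have hmu : m = 4*u+3 := by omega
      have hb0v : b₀ = 2*u+1 := hb0eq (6*u+5) (2*u+1) (by rw [hB_def, hmu, hu]; ring) (by omega)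
      have hval : legendreSym p (-2) = -1 := by
        rw [hL2, ZMod.χ₈'_nat_eq_if_mod_eight, if_neg (by omega), if_neg (by omega)]
      rw [hval, hb0v, (show Odd (2*u+1) from ⟨u, by ring⟩).neg_one_pow]
      norm_num
  rw [hLeg]
  -- it remains to kill the p-multiples
  have hEG : (p : ZMod (p^2)) * (((Nat.factorial b₀ : ℕ) : ZMod (p^2))⁻¹
        * (((1:ℕ) : ZMod (p^2)) * Wneg (ZMod (p^2)) b₀)
      + ∑ k ∈ Finset.range p, (((Nat.factorial k : ℕ) : ZMod (p^2))⁻¹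
          * ((Nat.factorial k : ℕ) : ZMod (p^2))⁻¹
          * ((a₁ : ZMod (p^2)) * Wr (ZMod (p^2)) a₀ k * Qr (ZMod (p^2)) b₀ k
            + (b₁ : ZMod (p^2)) * Wr (ZMod (p^2)) b₀ k * Qr (ZMod (p^2)) a₀ k)))
      = 0 := by
    rw [show (0 : ZMod (p^2)) = (p : ZMod (p^2)) * 0 from (mul_zero _).symm,
      SumBinomAux.eps_mul_eq_iff p, map_zero, map_add]
    -- χ of the Wneg part
    have hχ1 : SumBinomAux.chi p (((Nat.factorial b₀ : ℕ) : ZMod (p^2))⁻¹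
          * (((1:ℕ) : ZMod (p^2)) * Wneg (ZMod (p^2)) b₀))
        = -(-1)^b₀ * Hs p b₀ := by
      rw [map_mul, map_mul, SumBinomAux.chi_inv p _ hub, map_natCast, map_natCast,
        SumBinomAux.chi_Wneg, SumBinomAux.Wneg_eval p b₀ hb0]
      have hfb := SumBinomAux.cast_factorial_ne_zero p hb0
      field_simp
      ring
    -- χ of the sum
    have hterm : ∀ k ∈ Finset.range p,
        SumBinomAux.chi p (((Nat.factorial k : ℕ) : ZMod (p^2))⁻¹
          * ((Nat.factorial k : ℕ) : ZMod (p^2))⁻¹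
          * ((a₁ : ZMod (p^2)) * Wr (ZMod (p^2)) a₀ k * Qr (ZMod (p^2)) b₀ k
            + (b₁ : ZMod (p^2)) * Wr (ZMod (p^2)) b₀ k * Qr (ZMod (p^2)) a₀ k))
        = (a₁ : ZMod p) * (((Nat.factorial k : ℕ) : ZMod p)⁻¹ * ((Nat.factorial k : ℕ) : ZMod p)⁻¹
            * Wr (ZMod p) a₀ k * Qr (ZMod p) b₀ k)
          + (b₁ : ZMod p) * (((Nat.factorial k : ℕ) : ZMod p)⁻¹ * ((Nat.factorial k : ℕ) : ZMod p)⁻¹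
            * Wr (ZMod p) b₀ k * Qr (ZMod p) a₀ k) := by
      intro k hk
      have hk' : k < p := Finset.mem_range.mp hk
      have huk := SumBinomAux.isUnit_cast_factorial p hk'
      rw [map_mul, map_mul, map_add, map_mul, map_mul, map_mul, map_mul,
        SumBinomAux.chi_inv p _ huk, map_natCast, map_natCast, map_natCast,
        SumBinomAux.chi_Wr, SumBinomAux.chi_Wr, SumBinomAux.chi_Qr, SumBinomAux.chi_Qr]
      ring
    rw [map_sum, Finset.sum_congr rfl hterm, Finset.sum_add_distrib,
      ← Finset.mul_sum, ← Finset.mul_sum,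
      SumBinomAux.core p h3 a₀ b₀ hab0, SumBinomAux.core p h3 b₀ a₀ (by omega), hχ1]
    -- now a pure ZMod p computation
    have hHs : Hs p a₀ = Hs p b₀ := by
      have h := SumBinomAux.Hs_reflect p hodd (by omega) b₀ (by omega)
      rwa [show p - 1 - b₀ = a₀ by omega] at h
    have hsign : ((-1 : ZMod p))^a₀ = (-1 : ZMod p)^b₀ := by
      rcases Nat.even_or_odd b₀ with hb | hb
      · have ha : Even a₀ := by
          rw [Nat.even_iff] at *
          omega
        rw [ha.neg_one_pow, hb.neg_one_pow]
      · have ha : Odd a₀ := by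
          rw [Nat.odd_iff] at *
          omega
        rw [ha.neg_one_pow, hb.neg_one_pow]
    have hab1F : (a₁ : ZMod p) + (b₁ : ZMod p) + 1 = 0 := by
      have hc : ((a₁ + b₁ : ℕ) : ZMod p) = ((p - 1 : ℕ) : ZMod p) := by rw [hab1]
      rw [Nat.cast_sub (by omega : 1 ≤ p), ZMod.natCast_self] at hc
      push_cast at hc
      linear_combination hc
    rw [hHs, hsign]
    linear_combination (-((-1 : ZMod p)^b₀) * Hs p b₀) * hab1F
  linear_combination hEG
end

section
/- For any nonnegative integer k, binom(-1/3,k)·binom(-2/3,k) = binom(2k,k)·binom(3k,k)/27^k. -/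
/-- Generalized binomial coefficient for a rational `a`. -/
def qchoose (a : ℚ) (k : ℕ) : ℚ := (∏ i ∈ Finset.range k, (a - i)) / (Nat.factorial k)

lemma prod_thirds_nat (k : ℕ) :
    (∏ i ∈ Finset.range k, ((3*i+1)*(3*i+2))) * (3^k * Nat.factorial k)
      = Nat.factorial (3*k) := by
  induction k with
  | zero => simp
  | succ n ih =>
      have hfac : Nat.factorial (3*(n+1))
          = (3*n+3) * ((3*n+2) * ((3*n+1) * Nat.factorial (3*n))) := by
        rw [show 3*(n+1) = 3*n+1+1+1 from by ring]
        simp [Nat.factorial_succ]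
      rw [Finset.prod_range_succ, hfac, ← ih, Nat.factorial_succ, pow_succ]
      ring

lemma choose_mul_nat (k : ℕ) :
    Nat.choose (2*k) k * Nat.choose (3*k) k * (Nat.factorial k)^3
      = Nat.factorial (3*k) := by
  have h1 : Nat.choose (2*k) k * Nat.factorial k * Nat.factorial (2*k - k)
      = Nat.factorial (2*k) := Nat.choose_mul_factorial_mul_factorial (by omega)
  have h2 : Nat.choose (3*k) k * Nat.factorial k * Nat.factorial (3*k - k)
      = Nat.factorial (3*k) := Nat.choose_mul_factorial_mul_factorial (by omega)
  have e1 : 2*k - k = k := by omega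
  have e2 : 3*k - k = 2*k := by omega
  rw [e1] at h1
  rw [e2] at h2
  calc Nat.choose (2*k) k * Nat.choose (3*k) k * (Nat.factorial k)^3
      = Nat.choose (3*k) k * Nat.factorial k *
          (Nat.choose (2*k) k * Nat.factorial k * Nat.factorial k) := by ring
    _ = Nat.choose (3*k) k * Nat.factorial k * Nat.factorial (2*k) := by rw [h1]
    _ = Nat.factorial (3*k) := h2

theorem qchoose_thirds (k : ℕ) :
    qchoose (-1/3) k * qchoose (-2/3) k
      = (Nat.choose (2*k) k : ℚ) * (Nat.choose (3*k) k : ℚ) / 27^k := by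
  have hprod : (∏ i ∈ Finset.range k, ((-1/3 : ℚ) - i)) *
      (∏ i ∈ Finset.range k, ((-2/3 : ℚ) - i))
      = ((∏ i ∈ Finset.range k, ((3*i+1)*(3*i+2)) : ℕ) : ℚ) / 9^k := by
    rw [← Finset.prod_mul_distrib]
    have hc : ∀ i ∈ Finset.range k,
        ((-1/3 : ℚ) - i) * ((-2/3 : ℚ) - i) = (((3*i+1)*(3*i+2) : ℕ) : ℚ) / 9 :=
      fun i _ => by push_cast; ring
    rw [Finset.prod_congr rfl hc, Finset.prod_div_distrib, Finset.prod_const,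
      Finset.card_range, Nat.cast_prod]
  have hfk : ((Nat.factorial k : ℚ)) ≠ 0 := by
    exact_mod_cast Nat.factorial_ne_zero k
  have h1q : ((∏ i ∈ Finset.range k, ((3*i+1)*(3*i+2)) : ℕ) : ℚ) * (3^k * Nat.factorial k)
      = (Nat.factorial (3*k) : ℚ) := by
    exact_mod_cast congrArg (Nat.cast : ℕ → ℚ) (prod_thirds_nat k)
  have h2q : ((Nat.choose (2*k) k : ℚ)) * (Nat.choose (3*k) k : ℚ) * (Nat.factorial k : ℚ)^3
      = (Nat.factorial (3*k) : ℚ) := by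
    exact_mod_cast congrArg (Nat.cast : ℕ → ℚ) (choose_mul_nat k)
  have key : ((∏ i ∈ Finset.range k, ((3*i+1)*(3*i+2)) : ℕ) : ℚ) * 3^k
      = (Nat.choose (2*k) k : ℚ) * (Nat.choose (3*k) k : ℚ) * (Nat.factorial k : ℚ)^2 := by
    apply mul_right_cancel₀ hfk
    rw [← h2q] at h1q
    linear_combination h1q
  have h27 : (27 : ℚ)^k = 3^k * 9^k := by
    rw [← mul_pow]; norm_num
  unfold qchoose
  rw [div_mul_div_comm, hprod, h27]
  field_simp
  push_cast at key ⊢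
  linear_combination key
end

section
/- For any nonnegative integer k, binom(-1/4,k)·binom(-3/4,k) = binom(2k,k)·binom(4k,2k)/64^k. -/
lemma qchoose_succ (a : ℚ) (n : ℕ) :
    qchoose a (n+1) = qchoose a n * (a - n) / (n+1) := by
  unfold qchoose
  rw [Finset.prod_range_succ, Nat.factorial_succ]
  push_cast
  rw [div_mul_eq_mul_div, div_div, mul_comm ((Nat.factorial n : ℚ)) ((n:ℚ)+1)]

lemma aux_fact (k : ℕ) : qchoose (-1/4) k * qchoose (-3/4) k
    = (Nat.factorial (4*k) : ℚ) / ((Nat.factorial k)^2 * Nat.factorial (2*k) * 64^k) := by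
  induction k with
  | zero => simp [qchoose]
  | succ n ih =>
    have e4 : (Nat.factorial (4*(n+1)) : ℚ)
        = (4*n+4)*(4*n+3)*(4*n+2)*(4*n+1)*Nat.factorial (4*n) := by
      rw [show 4*(n+1) = 4*n+1+1+1+1 by ring,
        Nat.factorial_succ, Nat.factorial_succ, Nat.factorial_succ, Nat.factorial_succ]
      push_cast; ring
    have e2 : (Nat.factorial (2*(n+1)) : ℚ)
        = (2*n+2)*(2*n+1)*Nat.factorial (2*n) := by
      rw [show 2*(n+1) = 2*n+1+1 by ring, Nat.factorial_succ, Nat.factorial_succ]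
      push_cast; ring
    have e1 : (Nat.factorial (n+1) : ℚ) = (n+1)*Nat.factorial n := by
      rw [Nat.factorial_succ]; push_cast; ring
    have h1 : ((Nat.factorial n : ℚ)) ≠ 0 := by exact_mod_cast (Nat.factorial_pos n).ne'
    have h2 : ((Nat.factorial (2*n) : ℚ)) ≠ 0 := by exact_mod_cast (Nat.factorial_pos _).ne'
    have h3 : (64:ℚ)^n ≠ 0 := by positivity
    have h4 : ((n:ℚ)+1) ≠ 0 := by positivity
    rw [qchoose_succ, qchoose_succ, e4, e2, e1]
    calc qchoose (-1/4) n * (-1/4 - (n:ℚ)) / ((n:ℚ)+1) *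
          (qchoose (-3/4) n * (-3/4 - (n:ℚ)) / ((n:ℚ)+1))
        = qchoose (-1/4) n * qchoose (-3/4) n *
          ((-1/4 - (n:ℚ)) * (-3/4 - (n:ℚ)) / (((n:ℚ)+1)*((n:ℚ)+1))) := by field_simp
      _ = _ := by
          rw [ih, pow_succ]
          field_simp
          ring

theorem qchoose_quarters (k : ℕ) :
    qchoose (-1/4) k * qchoose (-3/4) k
      = (Nat.choose (2*k) k : ℚ) * (Nat.choose (4*k) (2*k) : ℚ) / 64^k := by
  rw [aux_fact]
  rw [Nat.cast_choose ℚ (by omega : k ≤ 2*k), Nat.cast_choose ℚ (by omega : 2*k ≤ 4*k)]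
  rw [show 2*k - k = k by omega, show 4*k - 2*k = 2*k by omega]
  have h1 : ((Nat.factorial k : ℚ)) ≠ 0 := by exact_mod_cast (Nat.factorial_pos k).ne'
  have h2 : ((Nat.factorial (2*k) : ℚ)) ≠ 0 := by exact_mod_cast (Nat.factorial_pos _).ne'
  have h3 : (64:ℚ)^k ≠ 0 := by positivity
  field_simp
end

section
/- Let p > 3 be a prime, r an integer with 1 ≤ r ≤ p-1 and r < p/2, and t a p-adic integer. Then binom(pt+r-1, (p-1)/2)·binom(-pt-r-1, (p-1)/2) ≡ pt/r + (p^2 t / r)(2q_p(2) + H_{(p-1)/2 - r}) - p^2 t^2 / r^2 (mod p^3), where q_p(2) = (2^(p-1) - 1)/p and H_n = 1 + 1/2 + ... + 1/n (with H_0 = 0). -/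
/-- `x ≡ y (mod p^n)` in the ring of `p`-integral rationals. -/
def pcong (p n : ℕ) (x y : ℚ) : Prop := ∃ z : ℚ, ¬ (p ∣ z.den) ∧ x - y = (p:ℚ)^n * z

/-- The harmonic number `H_n`, with `H_0 = 0`. -/
def harm (n : ℕ) : ℚ := ∑ i ∈ Finset.Icc 1 n, (i:ℚ)⁻¹


/-- `x` is `p`-integral. -/
def pint (p : ℕ) (x : ℚ) : Prop := ¬ (p ∣ x.den)


namespace pint

variable {p : ℕ}

theorem intCast (hp : p.Prime) (n : ℤ) : pint p n := by
  simp only [pint, Rat.den_intCast, Nat.dvd_one]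
  exact hp.ne_one

theorem natCast (hp : p.Prime) (n : ℕ) : pint p n := by
  have := intCast hp (n : ℤ); simpa using this

theorem one (hp : p.Prime) : pint p 1 := by simpa using natCast hp 1
theorem zero (hp : p.Prime) : pint p 0 := by simpa using natCast hp 0

theorem add (hp : p.Prime) {x y : ℚ} (hx : pint p x) (hy : pint p y) : pint p (x + y) := by
  intro h
  rcases (Nat.Prime.dvd_mul hp).1 (h.trans (Rat.add_den_dvd x y)) with h' | h'
  exacts [hx h', hy h']

theorem mul (hp : p.Prime) {x y : ℚ} (hx : pint p x) (hy : pint p y) : pint p (x * y) := by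
  intro h
  rcases (Nat.Prime.dvd_mul hp).1 (h.trans (Rat.mul_den_dvd x y)) with h' | h'
  exacts [hx h', hy h']

theorem neg {x : ℚ} (hx : pint p x) : pint p (-x) := by
  simpa [pint] using hx

theorem sub (hp : p.Prime) {x y : ℚ} (hx : pint p x) (hy : pint p y) : pint p (x - y) := by
  rw [sub_eq_add_neg]; exact add hp hx (neg hy)

theorem pow (hp : p.Prime) {x : ℚ} (hx : pint p x) (n : ℕ) : pint p (x ^ n) := by
  induction n with
  | zero => simpa using one hp
  | succ n ih => rw [pow_succ]; exact mul hp ih hx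

theorem inv_int (hp : p.Prime) {k : ℤ} (hk : ¬ (p:ℤ) ∣ k) : pint p ((k:ℚ)⁻¹) := by
  have h1 : ((k:ℚ))⁻¹ = Rat.divInt 1 k := by
    rw [Rat.divInt_eq_div]; push_cast; rw [one_div]
  have h2 : ((Rat.divInt 1 k).den : ℤ) ∣ k := Rat.den_dvd 1 k
  rw [h1]
  intro h
  exact hk (dvd_trans (Int.natCast_dvd_natCast.2 h) h2)

theorem inv_nat (hp : p.Prime) {k : ℕ} (hk : ¬ p ∣ k) : pint p ((k:ℚ)⁻¹) := by
  have := inv_int hp (k := (k:ℤ)) (by exact_mod_cast hk)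
  simpa using this

theorem sum (hp : p.Prime) {ι : Type*} {s : Finset ι} {f : ι → ℚ}
    (h : ∀ i ∈ s, pint p (f i)) : pint p (∑ i ∈ s, f i) := by
  classical
  induction s using Finset.induction_on with
  | empty => simpa using zero hp
  | @insert a s' hi ih =>
    rw [Finset.sum_insert hi]
    exact add hp (h a (Finset.mem_insert_self a s'))
      (ih fun i hi' => h i (Finset.mem_insert_of_mem hi'))

theorem prod (hp : p.Prime) {ι : Type*} {s : Finset ι} {f : ι → ℚ}
    (h : ∀ i ∈ s, pint p (f i)) : pint p (∏ i ∈ s, f i) := by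
  classical
  induction s using Finset.induction_on with
  | empty => simpa using one hp
  | @insert a s' hi ih =>
    rw [Finset.prod_insert hi]
    exact mul hp (h a (Finset.mem_insert_self a s'))
      (ih fun i hi' => h i (Finset.mem_insert_of_mem hi'))

end pint

namespace pcong

variable {p : ℕ}

theorem intro {n : ℕ} {x y z : ℚ} (hz : pint p z) (h : x - y = (p:ℚ)^n * z) :
    pcong p n x y := ⟨z, hz, h⟩

theorem refl (hp : p.Prime) (n : ℕ) (x : ℚ) : pcong p n x x :=
  ⟨0, pint.zero hp, by ring⟩

theorem of_eq (hp : p.Prime) {n : ℕ} {x y : ℚ} (h : x = y) : pcong p n x y :=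
  ⟨0, pint.zero hp, by rw [h]; ring⟩

theorem symm {n : ℕ} {x y : ℚ} (h : pcong p n x y) : pcong p n y x := by
  obtain ⟨z, hz, h⟩ := h
  exact ⟨-z, pint.neg hz, by rw [← neg_sub, h]; ring⟩

theorem trans (hp : p.Prime) {n : ℕ} {x y w : ℚ} (h1 : pcong p n x y) (h2 : pcong p n y w) :
    pcong p n x w := by
  obtain ⟨z1, hz1, h1⟩ := h1
  obtain ⟨z2, hz2, h2⟩ := h2
  refine ⟨z1 + z2, pint.add hp hz1 hz2, ?_⟩
  have : x - w = (x - y) + (y - w) := by ring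
  rw [this, h1, h2]; ring

theorem add (hp : p.Prime) {n : ℕ} {x y u v : ℚ} (h1 : pcong p n x y) (h2 : pcong p n u v) :
    pcong p n (x + u) (y + v) := by
  obtain ⟨z1, hz1, h1⟩ := h1
  obtain ⟨z2, hz2, h2⟩ := h2
  refine ⟨z1 + z2, pint.add hp hz1 hz2, ?_⟩
  have : x + u - (y + v) = (x - y) + (u - v) := by ring
  rw [this, h1, h2]; ring

theorem sub (hp : p.Prime) {n : ℕ} {x y u v : ℚ} (h1 : pcong p n x y) (h2 : pcong p n u v) :
    pcong p n (x - u) (y - v) := by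
  obtain ⟨z1, hz1, h1⟩ := h1
  obtain ⟨z2, hz2, h2⟩ := h2
  refine ⟨z1 - z2, pint.sub hp hz1 hz2, ?_⟩
  have : x - u - (y - v) = (x - y) - (u - v) := by ring
  rw [this, h1, h2]; ring

theorem mul_left (hp : p.Prime) {n : ℕ} {c x y : ℚ} (hc : pint p c) (h : pcong p n x y) :
    pcong p n (c * x) (c * y) := by
  obtain ⟨z, hz, h⟩ := h
  refine ⟨c * z, pint.mul hp hc hz, ?_⟩
  have : c * x - c * y = c * (x - y) := by ring
  rw [this, h]; ring

theorem mul (hp : p.Prime) {n : ℕ} {x x' y y' : ℚ} (h1 : pcong p n x x') (h2 : pcong p n y y')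
    (hx' : pint p x') (hy : pint p y) : pcong p n (x * y) (x' * y') := by
  obtain ⟨z1, hz1, h1⟩ := h1
  obtain ⟨z2, hz2, h2⟩ := h2
  refine ⟨z1 * y + x' * z2, pint.add hp (pint.mul hp hz1 hy) (pint.mul hp hx' hz2), ?_⟩
  have : x * y - x' * y' = (x - x') * y + x' * (y - y') := by ring
  rw [this, h1, h2]; ring

theorem mono (hp : p.Prime) {n m : ℕ} (hmn : m ≤ n) {x y : ℚ} (h : pcong p n x y) :
    pcong p m x y := by
  obtain ⟨z, hz, h⟩ := h
  refine ⟨(p:ℚ)^(n-m) * z, pint.mul hp (pint.pow hp (pint.natCast hp p) _) hz, ?_⟩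
  rw [h, ← mul_assoc, ← pow_add]
  congr 2
  omega

/-- divide a congruence by an integer prime to `p` -/
theorem div_int (hp : p.Prime) {n : ℕ} {k : ℤ} (hk : ¬ (p:ℤ) ∣ k) (hk0 : k ≠ 0) {x y : ℚ}
    (h : pcong p n ((k:ℚ) * x) ((k:ℚ) * y)) : pcong p n x y := by
  obtain ⟨z, hz, h⟩ := h
  refine ⟨z * (k:ℚ)⁻¹, pint.mul hp hz (pint.inv_int hp hk), ?_⟩
  have hkQ : (k:ℚ) ≠ 0 := Int.cast_ne_zero.2 hk0
  have h2 : (k:ℚ) * (x - y) = (p:ℚ)^n * z := by rw [mul_sub]; exact h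
  have h3 : x - y = (k:ℚ)⁻¹ * ((k:ℚ) * (x - y)) := by field_simp
  rw [h3, h2]; ring

/-- multiply a congruence by `p^k * u` with `u` `p`-integral, raising the exponent. -/
theorem mul_pk (hp : p.Prime) {n k : ℕ} {u x y : ℚ} (hu : pint p u) (h : pcong p n x y) :
    pcong p (n + k) ((p:ℚ)^k * u * x) ((p:ℚ)^k * u * y) := by
  obtain ⟨z, hz, h⟩ := h
  refine ⟨u * z, pint.mul hp hu hz, ?_⟩
  have h2 : (p:ℚ)^k * u * x - (p:ℚ)^k * u * y = (p:ℚ)^k * u * (x - y) := by ring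
  rw [h2, h, pow_add]; ring

theorem sum (hp : p.Prime) {n : ℕ} {ι : Type*} {s : Finset ι} {f g : ι → ℚ}
    (h : ∀ i ∈ s, pcong p n (f i) (g i)) :
    pcong p n (∑ i ∈ s, f i) (∑ i ∈ s, g i) := by
  classical
  induction s using Finset.induction_on with
  | empty => exact pcong.refl hp n 0
  | @insert a s' hi ih =>
    rw [Finset.sum_insert hi, Finset.sum_insert hi]
    exact pcong.add hp (h a (Finset.mem_insert_self a s'))
      (ih fun i hi' => h i (Finset.mem_insert_of_mem hi'))

theorem prod (hp : p.Prime) {n : ℕ} {ι : Type*} {s : Finset ι} {f g : ι → ℚ}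
    (h : ∀ i ∈ s, pcong p n (f i) (g i)) (hf : ∀ i ∈ s, pint p (f i))
    (hg : ∀ i ∈ s, pint p (g i)) :
    pcong p n (∏ i ∈ s, f i) (∏ i ∈ s, g i) := by
  classical
  induction s using Finset.induction_on with
  | empty => exact pcong.refl hp n 1
  | @insert a s' hi ih =>
    rw [Finset.prod_insert hi, Finset.prod_insert hi]
    refine pcong.mul hp (h a (Finset.mem_insert_self a s'))
      (ih (fun i hi' => h i (Finset.mem_insert_of_mem hi'))
          (fun i hi' => hf i (Finset.mem_insert_of_mem hi'))
          (fun i hi' => hg i (Finset.mem_insert_of_mem hi')))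
      (hg a (Finset.mem_insert_self a s'))
      (pint.prod hp fun i hi' => hf i (Finset.mem_insert_of_mem hi'))

end pcong

namespace pcong
variable {p : ℕ}

theorem neg (hp : p.Prime) {n : ℕ} {x y : ℚ} (h : pcong p n x y) : pcong p n (-x) (-y) := by
  obtain ⟨z, hz, h⟩ := h
  exact ⟨-z, pint.neg hz, by rw [show -x - -y = -(x - y) by ring, h]; ring⟩

theorem div_p (hp : p.Prime) {n : ℕ} {x y : ℚ}
    (h : pcong p (n+1) ((p:ℚ)*x) ((p:ℚ)*y)) : pcong p n x y := by
  obtain ⟨z, hz, h⟩ := h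
  have hp0 : (p:ℚ) ≠ 0 := Nat.cast_ne_zero.2 hp.pos.ne'
  refine ⟨z, hz, ?_⟩
  have h2 : (p:ℚ) * (x - y) = (p:ℚ) * ((p:ℚ)^n * z) := by
    rw [mul_sub, h, pow_succ]; ring
  exact mul_left_cancel₀ hp0 h2

end pcong

theorem pint.neg_one {p : ℕ} (hp : p.Prime) : pint p (-1:ℚ) := by
  have := pint.intCast hp (-1)
  simpa using this

theorem pcong.mul_p {p : ℕ} (hp : p.Prime) {n : ℕ} {x y : ℚ} (h : pcong p n x y) :
    pcong p (n+1) ((p:ℚ)*x) ((p:ℚ)*y) := by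
  obtain ⟨z, hz, h⟩ := h
  exact ⟨z, hz, by rw [show (p:ℚ)*x - (p:ℚ)*y = (p:ℚ)*(x-y) by ring, h, pow_succ]; ring⟩

open Finset in
theorem prod_Icc_one (f : ℕ → ℚ) (n : ℕ) :
    ∏ j ∈ Finset.Icc 1 n, f j = ∏ i ∈ Finset.range n, f (i+1) := by
  induction n with
  | zero => simp
  | succ n ih => rw [Finset.prod_Icc_succ_top (by omega), ih, Finset.prod_range_succ]

open Finset in
theorem sum_Icc_one (f : ℕ → ℚ) (n : ℕ) :
    ∑ j ∈ Finset.Icc 1 n, f j = ∑ i ∈ Finset.range n, f (i+1) := by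
  induction n with
  | zero => simp
  | succ n ih => rw [Finset.sum_Icc_succ_top (by omega), ih, Finset.sum_range_succ]


theorem harm_succ (n : ℕ) : harm (n+1) = harm n + ((n:ℚ)+1)⁻¹ := by
  unfold harm
  rw [Finset.sum_Icc_succ_top (by omega)]
  norm_num

theorem harm_sub {a b : ℕ} (h : a ≤ b) :
    harm b - harm a = ∑ j ∈ Finset.Icc (a+1) b, (j:ℚ)⁻¹ := by
  have h1 : ∀ n : ℕ, harm n = ∑ j ∈ Finset.Ico 1 (n+1), (j:ℚ)⁻¹ := by
    intro n; rw [Finset.Ico_add_one_right_eq_Icc]; rfl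
  rw [h1, h1, ← Finset.Ico_add_one_right_eq_Icc,
    ← Finset.sum_Ico_consecutive _ (by omega : 1 ≤ a+1) (by omega : a+1 ≤ b+1)]
  ring

theorem not_dvd_of_lt {p j : ℕ} (h0 : 0 < j) (h1 : j < p) : ¬ p ∣ j :=
  fun hd => by have := Nat.le_of_dvd h0 hd; omega

theorem pint_harm {p : ℕ} (hp : p.Prime) {n : ℕ} (hn : n < p) : pint p (harm n) :=
  pint.sum hp fun i hi => by
    rw [Finset.mem_Icc] at hi
    exact pint.inv_nat hp (not_dvd_of_lt (by omega) (by omega))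

open Finset in
theorem prod_one_add {p : ℕ} (hp : p.Prime) {ι : Type*} (s : Finset ι) (a : ι → ℚ)
    (ha : ∀ i ∈ s, pint p (a i)) :
    pcong p 2 (∏ i ∈ s, (1 + (p:ℚ) * a i)) (1 + (p:ℚ) * ∑ i ∈ s, a i) := by
  classical
  induction s using Finset.induction_on with
  | empty => simpa using pcong.refl hp 2 1
  | @insert b s' hb ih =>
    rw [Finset.prod_insert hb, Finset.sum_insert hb]
    have hS : pint p (∑ i ∈ s', a i) :=
      pint.sum hp (fun i hi => ha i (Finset.mem_insert_of_mem hi))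
    have hab : pint p (a b) := ha b (Finset.mem_insert_self _ _)
    have h1 : pcong p 2 ((1 + (p:ℚ) * a b) * ∏ i ∈ s', (1 + (p:ℚ) * a i))
        ((1 + (p:ℚ)* a b) * (1 + (p:ℚ) * ∑ i ∈ s', a i)) :=
      pcong.mul_left hp
        (pint.add hp (pint.one hp) (pint.mul hp (pint.natCast hp p) hab))
        (ih (fun i hi => ha i (Finset.mem_insert_of_mem hi)))
    refine pcong.trans hp h1 ?_
    refine pcong.intro (z := a b * ∑ i ∈ s', a i) (pint.mul hp hab hS) (by ring)

open Finset in
theorem prod_linear {p : ℕ} (hp : p.Prime) {ι : Type*} (s : Finset ι) (c : ι → ℤ)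
    (hc : ∀ i ∈ s, ¬ (p:ℤ) ∣ c i) {t : ℚ} (ht : pint p t) :
    pcong p 2 (∏ i ∈ s, ((p:ℚ) * t + (c i : ℚ)))
      ((∏ i ∈ s, (c i : ℚ)) * (1 + (p:ℚ) * t * ∑ i ∈ s, ((c i : ℚ))⁻¹)) := by
  have hc0 : ∀ i ∈ s, (c i : ℚ) ≠ 0 := fun i hi =>
    Int.cast_ne_zero.2 (fun h => hc i hi (h ▸ dvd_zero _))
  have h1 : ∏ i ∈ s, ((p:ℚ)*t + (c i:ℚ))
      = (∏ i ∈ s, (c i:ℚ)) * ∏ i ∈ s, (1 + (p:ℚ) * (t * ((c i:ℚ))⁻¹)) := by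
    rw [← Finset.prod_mul_distrib]
    refine Finset.prod_congr rfl fun i hi => ?_
    have hcc := hc0 i hi
    field_simp
    ring
  rw [h1]
  have h2 := prod_one_add hp s (fun i => t * ((c i:ℚ))⁻¹)
    (fun i hi => pint.mul hp ht (pint.inv_int hp (hc i hi)))
  have h3 : ∑ i ∈ s, t * ((c i:ℚ))⁻¹ = t * ∑ i ∈ s, ((c i:ℚ))⁻¹ :=
    (Finset.mul_sum _ _ _).symm
  rw [h3] at h2
  refine pcong.mul_left hp (pint.prod hp fun i hi => pint.intCast hp (c i)) ?_
  rw [mul_assoc]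
  exact h2

theorem three_factor {p : ℕ} (hp : p.Prime) {a b c : ℚ}
    (ha : pint p a) (hb : pint p b) (hc : pint p c) :
    pcong p 2 ((1+(p:ℚ)*a)*(1+(p:ℚ)*b)*(1+(p:ℚ)*c)) (1 + (p:ℚ)*(a+b+c)) := by
  refine pcong.intro (z := a*b + a*c + b*c + (p:ℚ)*(a*b*c)) ?_ (by ring)
  have hP := pint.natCast hp p
  exact pint.add hp (pint.add hp (pint.add hp (pint.mul hp ha hb) (pint.mul hp ha hc))
    (pint.mul hp hb hc)) (pint.mul hp hP (pint.mul hp (pint.mul hp ha hb) hc))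

open Finset in
theorem sum_inv_symm {p : ℕ} (hp : p.Prime) (hodd : p ≠ 2) (s : Finset ℕ)
    (hmem : ∀ j ∈ s, 0 < j ∧ j < p) (hsym : ∀ j ∈ s, p - j ∈ s) :
    pcong p 1 (∑ j ∈ s, (j:ℚ)⁻¹) 0 := by
  have hbij : ∑ j ∈ s, ((j:ℚ))⁻¹ = ∑ j ∈ s, (((p - j : ℕ):ℚ))⁻¹ := by
    refine Finset.sum_nbij' (i := fun j => p - j) (j := fun j => p - j) hsym hsym
      (fun a ha => by have := hmem a ha; show p - (p - a) = a; omega)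
      (fun a ha => by have := hmem a ha; show p - (p - a) = a; omega)
      (fun a ha => ?_)
    show ((a:ℚ))⁻¹ = (((p - (p - a) : ℕ):ℚ))⁻¹
    have h1 := hmem a ha
    have hpa : p - (p - a) = a := by omega
    rw [hpa]
  have h2 : (2:ℚ) * (∑ j ∈ s, (j:ℚ)⁻¹) - (2:ℚ) * 0
      = (p:ℚ)^1 * ∑ j ∈ s, (((j * (p - j) : ℕ)):ℚ)⁻¹ := by
    rw [mul_zero, sub_zero, two_mul]
    nth_rewrite 2 [hbij]
    rw [← Finset.sum_add_distrib, Finset.mul_sum]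
    refine Finset.sum_congr rfl fun j hj => ?_
    have h1 := hmem j hj
    have hc1 : ((p - j:ℕ):ℚ) = (p:ℚ) - (j:ℚ) := by
      push_cast [Nat.cast_sub (le_of_lt h1.2)]; ring
    have hc2 : ((j * (p - j):ℕ):ℚ) = (j:ℚ) * ((p:ℚ) - (j:ℚ)) := by
      push_cast [Nat.cast_sub (le_of_lt h1.2)]; ring
    have hj0 : (j:ℚ) ≠ 0 := Nat.cast_ne_zero.2 (by omega)
    have hpj0 : (p:ℚ) - (j:ℚ) ≠ 0 := by
      have : ((p - j:ℕ):ℚ) ≠ 0 := Nat.cast_ne_zero.2 (by omega)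
      rwa [hc1] at this
    rw [hc1, hc2]
    field_simp
    try ring
  have hz : pint p (∑ j ∈ s, (((j * (p - j) : ℕ)):ℚ)⁻¹) := by
    refine pint.sum hp fun j hj => ?_
    have h1 := hmem j hj
    refine pint.inv_nat hp ?_
    intro hd
    rcases (Nat.Prime.dvd_mul hp).1 hd with h' | h'
    · exact not_dvd_of_lt h1.1 h1.2 h'
    · exact not_dvd_of_lt (by omega) (by omega) h'
  have h4 : pcong p 1 ((2:ℚ) * ∑ j ∈ s, (j:ℚ)⁻¹) ((2:ℚ) * 0) := pcong.intro hz h2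
  refine pcong.div_int hp (k := 2) ?_ (by norm_num) ?_
  · intro hd
    have h5 := Int.le_of_dvd (by norm_num) hd
    have h6 := hp.two_le
    omega
  · exact_mod_cast h4

open Finset in
theorem choose_neg_one_pow {p : ℕ} (hp : p.Prime) (k : ℕ) (hk : k ≤ p - 1) :
    (p:ℤ) ∣ ((p-1).choose k : ℤ) - (-1)^k := by
  induction k with
  | zero => simp
  | succ k ih =>
    have hp2 := hp.two_le
    have ih' := ih (by omega)
    have hpas : p.choose (k+1) = (p-1).choose k + (p-1).choose (k+1) := by
      conv_lhs => rw [show p = (p-1)+1 by omega]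
      exact Nat.choose_succ_succ _ _
    have hdvd : (p:ℤ) ∣ (p.choose (k+1) : ℤ) :=
      Int.natCast_dvd_natCast.2 (hp.dvd_choose_self (by omega) (by omega))
    have key : ((p-1).choose (k+1) : ℤ) - (-1)^(k+1)
        = ((p.choose (k+1) : ℤ)) - (((p-1).choose k : ℤ) - (-1)^k) := by
      have h7 : ((p.choose (k+1)) : ℤ) = ((p-1).choose k : ℤ) + ((p-1).choose (k+1) : ℤ) := by
        exact_mod_cast congrArg (fun n : ℕ => (n : ℤ)) hpas
      rw [pow_succ]
      linarith
    rw [key]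
    exact dvd_sub hdvd ih'

theorem fermat_q_int {p : ℕ} (hp : p.Prime) (h3 : 3 < p) :
    ∃ k : ℤ, (2:ℤ)^(p-1) - 1 = p * k := by
  haveI : Fact p.Prime := ⟨hp⟩
  have h2 : (2 : ZMod p) ≠ 0 := by
    have h4 : ((2:ℕ) : ZMod p) ≠ 0 := by
      rw [Ne, ZMod.natCast_eq_zero_iff]
      exact fun hd => by have := Nat.le_of_dvd (by norm_num) hd; omega
    simpa using h4
  have h5 := ZMod.pow_card_sub_one_eq_one h2
  have h4 : (((2:ℤ)^(p-1) - 1 : ℤ) : ZMod p) = 0 := by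
    push_cast
    rw [h5]
    ring
  obtain ⟨k, hk⟩ := (ZMod.intCast_zmod_eq_zero_iff_dvd _ _).1 h4
  exact ⟨k, hk⟩

theorem pint_q {p : ℕ} (hp : p.Prime) (h3 : 3 < p) :
    pint p (((2:ℚ)^(p-1) - 1)/p) := by
  obtain ⟨k, hk⟩ := fermat_q_int hp h3
  have hp0 : (p:ℚ) ≠ 0 := Nat.cast_ne_zero.2 hp.pos.ne'
  have h1 : ((2:ℚ)^(p-1) - 1)/p = (k:ℚ) := by
    have h2 : ((2:ℚ)^(p-1) - 1) = (p:ℚ) * k := by exact_mod_cast congrArg (fun z : ℤ => (z:ℚ)) hk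
    rw [h2]
    field_simp
  rw [h1]
  exact pint.intCast hp k

open Finset in
theorem choose_p_cong {p : ℕ} (hp : p.Prime) {k : ℕ} (hk1 : 1 ≤ k) (hk2 : k ≤ p - 1) :
    pcong p 2 ((p.choose k : ℚ)) ((p:ℚ) * (-1:ℚ)^(k-1) * ((k:ℚ))⁻¹) := by
  have hp2 := hp.two_le
  obtain ⟨z, hz⟩ := choose_neg_one_pow hp (k-1) (by omega)
  have hid : p * (p-1).choose (k-1) = p.choose k * k := by
    have h := Nat.add_one_mul_choose_eq (p-1) (k-1)
    have e1 : p - 1 + 1 = p := by omega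
    have e2 : k - 1 + 1 = k := by omega
    rw [e1, e2] at h
    exact h
  have hk0 : (k:ℚ) ≠ 0 := Nat.cast_ne_zero.2 (by omega)
  have hidQ : (p:ℚ) * ((p-1).choose (k-1) : ℚ) = (p.choose k : ℚ) * k := by
    exact_mod_cast congrArg (fun n : ℕ => (n:ℚ)) hid
  obtain ⟨z, hz⟩ := (choose_neg_one_pow hp (k-1) (by omega) : _)
  have hzQ : ((p-1).choose (k-1) : ℚ) = (-1:ℚ)^(k-1) + (p:ℚ) * (z:ℚ) := by
    have h6 := congrArg (fun n : ℤ => (n:ℚ)) hz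
    push_cast at h6
    linarith
  have h5 : (p.choose k : ℚ) = (p:ℚ) * ((-1:ℚ)^(k-1) + (p:ℚ)*z) * (k:ℚ)⁻¹ := by
    rw [← hzQ, hidQ, mul_inv_cancel_right₀ hk0]
  refine pcong.intro (z := (z:ℚ) * (k:ℚ)⁻¹)
    (pint.mul hp (pint.intCast hp z) (pint.inv_nat hp (not_dvd_of_lt (by omega) (by omega)))) ?_
  rw [h5]
  ring

open Finset in
theorem sum_choose_middle {p : ℕ} (hp : p.Prime) :
    ∑ k ∈ Finset.Icc 1 (p-1), (p.choose k : ℚ) = (2:ℚ)^p - 2 := by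
  have hp2 := hp.two_le
  have h0 : (∑ k ∈ Finset.range (p+1), (p.choose k : ℚ)) = (2:ℚ)^p := by
    have := Nat.sum_range_choose p
    have h1 := congrArg (fun n : ℕ => (n:ℚ)) this
    push_cast at h1
    exact h1
  rw [Finset.sum_range_succ] at h0
  have e1 : p = (p-1) + 1 := by omega
  rw [e1, Finset.sum_range_succ'] at h0
  rw [← e1] at h0
  have h2 : ∑ i ∈ Finset.range (p-1), ((p.choose (i+1) : ℕ) : ℚ)
      = ∑ k ∈ Finset.Icc 1 (p-1), (p.choose k : ℚ)
      := (sum_Icc_one (fun k => ((p.choose k : ℕ) : ℚ)) (p-1)).symm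
  rw [h2] at h0
  simp only [Nat.choose_zero_right, Nat.choose_self, Nat.cast_one] at h0
  linarith

open Finset in
theorem alt_sum (M : ℕ) :
    ∑ k ∈ Finset.Icc 1 (2*M), (-1:ℚ)^(k-1) * (k:ℚ)⁻¹ = harm (2*M) - harm M := by
  induction M with
  | zero => simp [harm]
  | succ M ih =>
    have e1 : 2*(M+1) = (2*M+1)+1 := by ring
    have o1 : (-1:ℚ)^(2*M+1-1) = 1 := Even.neg_one_pow ⟨M, by omega⟩
    have o2 : (-1:ℚ)^(2*M+1+1-1) = -1 := Odd.neg_one_pow ⟨M, by omega⟩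
    rw [e1, Finset.sum_Icc_succ_top (by omega), Finset.sum_Icc_succ_top (by omega), ih,
      harm_succ, harm_succ, harm_succ, o1, o2]
    have f1 : ((2*M+1+1:ℕ):ℚ) = 2*((M:ℚ)+1) := by push_cast; ring
    have f2 : ((2*M+1:ℕ):ℚ) = 2*(M:ℚ)+1 := by push_cast; ring
    have f3 : ((2*M:ℕ):ℚ) = 2*(M:ℚ) := by push_cast; ring
    rw [f1, f2, f3]
    have hM1 : ((M:ℚ)+1) ≠ 0 := by positivity
    have e5 : (2*((M:ℚ)+1))⁻¹ * 2 = ((M:ℚ)+1)⁻¹ := by field_simp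
    rw [show (2*(M:ℚ)+1+1) = 2*((M:ℚ)+1) by ring]
    linarith [e5]

open Finset in
theorem harm_half {p M : ℕ} (hp : p.Prime) (h3 : 3 < p) (hM : 2*M + 1 = p) :
    pcong p 1 (harm M) (-(2 * (((2:ℚ)^(p-1) - 1)/p))) := by
  have hp0 : (p:ℚ) ≠ 0 := Nat.cast_ne_zero.2 hp.pos.ne'
  set q : ℚ := ((2:ℚ)^(p-1) - 1)/p with hq
  set A : ℚ := ∑ k ∈ Finset.Icc 1 (p-1), (-1:ℚ)^(k-1) * (k:ℚ)⁻¹ with hA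
  have step1 : pcong p 2 ((2:ℚ)^p - 2) ((p:ℚ) * A) := by
    rw [← sum_choose_middle hp, hA, Finset.mul_sum]
    refine pcong.sum hp fun k hk => ?_
    rw [Finset.mem_Icc] at hk
    have := choose_p_cong hp hk.1 hk.2
    rw [← mul_assoc]
    exact this
  have step2 : pcong p 2 ((p:ℚ) * (2*q)) ((p:ℚ) * A) := by
    have e2 : (p:ℚ) * (2*q) = (2:ℚ)^p - 2 := by
      have hpq : (p:ℚ) * q = (2:ℚ)^(p-1) - 1 := by rw [hq]; field_simp
      have hpp : (2:ℚ)^p = 2^(p-1) * 2 := by rw [← pow_succ]; congr 1; omega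
      rw [hpp]
      linear_combination 2*hpq
    rw [e2]
    exact step1
  have step3 : pcong p 1 (2*q) A := pcong.div_p hp step2
  have step4 : pcong p 1 A (-(harm M)) := by
    have e3 : A = harm (2*M) - harm M := by
      rw [hA, show p - 1 = 2*M by omega]
      exact alt_sum M
    rw [e3]
    have h4 : pcong p 1 (harm (2*M)) 0 := by
      refine sum_inv_symm hp (by omega) (Finset.Icc 1 (2*M))
        (fun j hj => by rw [Finset.mem_Icc] at hj; omega)
        (fun j hj => by rw [Finset.mem_Icc] at hj ⊢; omega)
    have h5 := pcong.sub hp h4 (pcong.refl hp 1 (harm M))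
    refine pcong.trans hp h5 (pcong.of_eq hp (by ring))
  have step5 : pcong p 1 (2*q) (-(harm M)) := pcong.trans hp step3 step4
  have step6 := pcong.neg hp step5
  refine pcong.trans hp ?_ (pcong.symm step6)
  exact pcong.of_eq hp (by ring)

open Finset in
theorem odd_sum {p M r : ℕ} (hp : p.Prime) (h3 : 3 < p) (hM : 2*M+1 = p)
    (hr1 : 1 ≤ r) (hrM : r ≤ M) :
    pcong p 1 (2 * ∑ j ∈ Finset.Icc 1 r, (((2*j-1:ℕ)):ℚ)⁻¹) (harm (M-r) - harm M) := by
  have hz : pint p (∑ j ∈ Finset.Icc 1 r, ((((2*j-1)*(M+1-j) :ℕ)):ℚ)⁻¹) := by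
    refine pint.sum hp fun j hj => ?_
    rw [Finset.mem_Icc] at hj
    refine pint.inv_nat hp ?_
    intro hd
    rcases (Nat.Prime.dvd_mul hp).1 hd with h' | h'
    · exact not_dvd_of_lt (by omega) (by omega) h'
    · exact not_dvd_of_lt (by omega) (by omega) h'
  refine pcong.intro (z := ∑ j ∈ Finset.Icc 1 r, ((((2*j-1)*(M+1-j) :ℕ)):ℚ)⁻¹) hz ?_
  have e1 : harm M - harm (M-r) = ∑ j ∈ Finset.Icc 1 r, (((M+1-j:ℕ)):ℚ)⁻¹ := by
    rw [harm_sub (by omega : M - r ≤ M)]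
    refine (Finset.sum_nbij' (i := fun j => M+1-j) (j := fun j => M+1-j) ?_ ?_ ?_ ?_ ?_).symm
    · intro a ha; rw [Finset.mem_Icc] at ha; show M+1-a ∈ Finset.Icc (M-r+1) M
      rw [Finset.mem_Icc]; omega
    · intro a ha; rw [Finset.mem_Icc] at ha; show M+1-a ∈ Finset.Icc 1 r
      rw [Finset.mem_Icc]; omega
    · intro a ha; rw [Finset.mem_Icc] at ha; show M+1-(M+1-a) = a; omega
    · intro a ha; rw [Finset.mem_Icc] at ha; show M+1-(M+1-a) = a; omega
    · intro a ha; rfl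
  have e2 : 2 * (∑ j ∈ Finset.Icc 1 r, (((2*j-1:ℕ)):ℚ)⁻¹) - (harm (M-r) - harm M)
      = ∑ j ∈ Finset.Icc 1 r, (2 * (((2*j-1:ℕ)):ℚ)⁻¹ + (((M+1-j:ℕ)):ℚ)⁻¹) := by
    rw [Finset.sum_add_distrib, ← Finset.mul_sum, ← e1]
    ring
  rw [e2, Finset.mul_sum]
  refine Finset.sum_congr rfl fun j hj => ?_
  rw [Finset.mem_Icc] at hj
  have c1 : ((2*j-1:ℕ):ℚ) = 2*(j:ℚ) - 1 := by
    push_cast [Nat.cast_sub (by omega : 1 ≤ 2*j)]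
    ring
  have c2 : ((M+1-j:ℕ):ℚ) = (M:ℚ)+1-(j:ℚ) := by
    push_cast [Nat.cast_sub (by omega : j ≤ M+1)]
    ring
  have c3 : (((2*j-1)*(M+1-j):ℕ):ℚ) = (2*(j:ℚ)-1) * ((M:ℚ)+1-(j:ℚ)) := by
    push_cast [Nat.cast_sub (by omega : 1 ≤ 2*j), Nat.cast_sub (by omega : j ≤ M+1)]
    ring
  have hpe : (p:ℚ) = 2*((M:ℚ)+1-(j:ℚ)) + (2*(j:ℚ)-1) := by
    have : ((2*M+1:ℕ):ℚ) = (p:ℚ) := by exact_mod_cast congrArg (fun n : ℕ => (n:ℚ)) hM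
    push_cast at this
    linarith
  have n1 : (2*(j:ℚ)-1) ≠ 0 := by
    rw [← c1]; exact Nat.cast_ne_zero.2 (by omega)
  have n2 : ((M:ℚ)+1-(j:ℚ)) ≠ 0 := by
    rw [← c2]; exact Nat.cast_ne_zero.2 (by omega)
  rw [c1, c2, c3, pow_one, hpe]
  field_simp
  try ring

open Finset Nat in
theorem num1_eq (x : ℚ) (r M : ℕ) (hr1 : 1 ≤ r) (hrM : r ≤ M) :
    ∏ i ∈ Finset.range M, (x + r - 1 - i)
    = (∏ j ∈ Finset.Icc 1 (r-1), (x + j)) * x * ∏ j ∈ Finset.Icc 1 (M-r), (x - j) := by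
  rw [Finset.range_eq_Ico, ← Finset.prod_Ico_consecutive _ (Nat.zero_le r) hrM]
  have part1 : ∏ i ∈ Finset.Ico 0 r, (x + r - 1 - i) = (∏ j ∈ Finset.Icc 1 (r-1), (x + j)) * x := by
    have h1 : ∏ i ∈ Finset.Ico 0 r, (x + r - 1 - i) = ∏ i ∈ Finset.range r, (x + ((r-1-i:ℕ):ℚ)) := by
      rw [← Finset.range_eq_Ico]
      refine Finset.prod_congr rfl fun i hi => ?_
      rw [Finset.mem_range] at hi
      push_cast [Nat.cast_sub (by omega : i ≤ r - 1), Nat.cast_sub (by omega : 1 ≤ r)]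
      ring
    have h2 : ∏ i ∈ Finset.range r, (x + ((r-1-i:ℕ):ℚ)) = ∏ i ∈ Finset.range r, (x + (i:ℚ)) :=
      Finset.prod_range_reflect (fun i => x + (i:ℚ)) r
    rw [h1, h2, show r = (r-1)+1 by omega, Finset.prod_range_succ']
    rw [← prod_Icc_one (fun j => x + (j:ℚ)) (r-1)]
    push_cast
    ring
  have part2 : ∏ i ∈ Finset.Ico r M, (x + r - 1 - i) = ∏ j ∈ Finset.Icc 1 (M-r), (x - j) := by
    rw [Finset.prod_Ico_eq_prod_range]
    rw [prod_Icc_one (fun j => x - (j:ℚ)) (M-r)]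
    refine Finset.prod_congr rfl fun i hi => ?_
    rw [Finset.mem_range] at hi
    push_cast
    ring
  rw [part1, part2]

open Finset Nat in
theorem num2_eq (x : ℚ) (r M : ℕ) :
    ∏ i ∈ Finset.range M, (-x - r - 1 - i)
    = (-1:ℚ)^M * ∏ i ∈ Finset.range M, (x + ((r+1+i:ℕ):ℚ)) := by
  have h1 : ∀ i ∈ Finset.range M, (-x - r - 1 - (i:ℚ)) = (-1) * (x + ((r+1+i:ℕ):ℚ)) := by
    intro i hi; push_cast; ring
  rw [Finset.prod_congr rfl h1, Finset.prod_mul_distrib, Finset.prod_const, Finset.card_range]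

open Finset Nat in
theorem prod_shift_factorial (r M : ℕ) :
    (∏ i ∈ Finset.range M, (r+1+i)) * r ! = (M+r)! := by
  induction M with
  | zero => simp
  | succ M ih =>
    rw [Finset.prod_range_succ, show M+1+r = (M+r)+1 by ring, Nat.factorial_succ,
      mul_right_comm, ih]
    ring

open Finset Nat in
theorem prod_Icc_cast_factorial (n : ℕ) : ∏ j ∈ Finset.Icc 1 n, (j:ℚ) = ((n ! : ℕ):ℚ) := by
  rw [prod_Icc_one (fun j => (j:ℚ)) n]
  rw [← Finset.prod_range_add_one_eq_factorial n]
  push_cast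
  rfl

open Finset Nat in
theorem prod_Icc_sub_factorial {r M : ℕ} (hrM : r ≤ M) :
    (∏ j ∈ Finset.Icc 1 r, (M+1-j)) * (M-r)! = M ! := by
  induction r with
  | zero => simp
  | succ r ih =>
    have ih' := ih (by omega)
    rw [Finset.prod_Icc_succ_top (by omega), mul_right_comm,
      show M - (r+1) = M - r - 1 by omega]
    have e1 : (M+1-(r+1)) * (M-r-1)! = (M-r)! := by
      rw [show M+1-(r+1) = (M-r-1)+1 by omega, ← Nat.factorial_succ,
        show M-r-1+1 = M-r by omega]
    rw [mul_assoc, mul_comm ((M-r-1)!) _, e1, ih']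

open Finset Nat in
theorem hP1_cong {p r : ℕ} (hp : p.Prime) (hrp : r ≤ p) {t : ℚ} (ht : pint p t) :
    pcong p 2 (∏ j ∈ Finset.Icc 1 (r-1), ((p:ℚ)*t + j))
      ((((r-1)! : ℕ):ℚ) * (1 + (p:ℚ)*(t * harm (r-1)))) := by
  have e1 : ∏ j ∈ Finset.Icc 1 (r-1), ((p:ℚ)*t + (j:ℚ))
      = ∏ j ∈ Finset.Icc 1 (r-1), ((p:ℚ)*t + (((j:ℤ)):ℚ)) := by push_cast; rfl
  have hc : ∀ j ∈ Finset.Icc 1 (r-1), ¬ (p:ℤ) ∣ ((j:ℤ)) := by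
    intro j hj
    rw [Finset.mem_Icc] at hj
    rw [Int.natCast_dvd_natCast]
    exact not_dvd_of_lt (by omega) (by omega)
  have h := prod_linear hp (Finset.Icc 1 (r-1)) (fun j => (j:ℤ)) hc ht
  have e2 : (∏ j ∈ Finset.Icc 1 (r-1), (((j:ℤ)):ℚ)) = (((r-1)!:ℕ):ℚ) := by
    rw [← prod_Icc_cast_factorial]
    push_cast
    rfl
  have e3 : (∑ j ∈ Finset.Icc 1 (r-1), ((((j:ℤ)):ℚ))⁻¹) = harm (r-1) := by
    unfold harm
    push_cast
    rfl
  rw [e2, e3] at h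
  rw [e1]
  exact pcong.trans hp h (pcong.of_eq hp (by ring))

open Finset Nat in
theorem hP2_cong {p M r : ℕ} (hp : p.Prime) (hMp : M - r < p) {t : ℚ} (ht : pint p t) :
    pcong p 2 (∏ j ∈ Finset.Icc 1 (M-r), ((p:ℚ)*t - j))
      (((-1:ℚ)^(M-r) * (((M-r)! : ℕ):ℚ)) * (1 + (p:ℚ)*(t * (-(harm (M-r)))))) := by
  have hc : ∀ j ∈ Finset.Icc 1 (M-r), ¬ (p:ℤ) ∣ (-(j:ℤ)) := by
    intro j hj
    rw [Finset.mem_Icc] at hj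
    rw [Int.dvd_neg, Int.natCast_dvd_natCast]
    exact not_dvd_of_lt (by omega) (by omega)
  have h := prod_linear hp (Finset.Icc 1 (M-r)) (fun j => -(j:ℤ)) hc ht
  push_cast at h
  have e1 : ∏ j ∈ Finset.Icc 1 (M-r), ((p:ℚ)*t - (j:ℚ))
      = ∏ j ∈ Finset.Icc 1 (M-r), ((p:ℚ)*t + -(j:ℚ)) :=
    Finset.prod_congr rfl fun j hj => by ring
  have e2 : (∏ j ∈ Finset.Icc 1 (M-r), -(j:ℚ)) = (-1:ℚ)^(M-r) * (((M-r)!:ℕ):ℚ) := by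
    have h6 : ∀ j ∈ Finset.Icc 1 (M-r), -(j:ℚ) = (-1) * (j:ℚ) := by
      intro j hj; ring
    rw [Finset.prod_congr rfl h6, Finset.prod_mul_distrib, Finset.prod_const,
      Nat.card_Icc, prod_Icc_cast_factorial]
    norm_num
  have e3 : (∑ j ∈ Finset.Icc 1 (M-r), (-(j:ℚ))⁻¹) = -(harm (M-r)) := by
    unfold harm
    rw [← Finset.sum_neg_distrib (f := fun j : ℕ => ((j:ℚ))⁻¹)]
    refine Finset.sum_congr rfl fun j hj => ?_
    rw [inv_neg]
  rw [e2, e3] at h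
  rw [e1]
  exact pcong.trans hp h (pcong.of_eq hp (by ring))

open Finset Nat in
theorem hP3_cong {p M r : ℕ} (hp : p.Prime) (hMrp : M + r < p) {t : ℚ} (ht : pint p t) :
    pcong p 2 (∏ i ∈ Finset.range M, ((p:ℚ)*t + ((r+1+i:ℕ):ℚ)))
      (((((M+r)! : ℕ):ℚ) * (((r ! : ℕ):ℚ))⁻¹) * (1 + (p:ℚ)*(t * (harm (M+r) - harm r)))) := by
  have hc : ∀ i ∈ Finset.range M, ¬ (p:ℤ) ∣ ((r+1+i:ℕ):ℤ) := by
    intro i hi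
    rw [Finset.mem_range] at hi
    rw [Int.natCast_dvd_natCast]
    exact not_dvd_of_lt (by omega) (by omega)
  have h := prod_linear hp (Finset.range M) (fun i => ((r+1+i:ℕ):ℤ)) hc ht
  have e1 : ∏ i ∈ Finset.range M, ((p:ℚ)*t + ((r+1+i:ℕ):ℚ))
      = ∏ i ∈ Finset.range M, ((p:ℚ)*t + ((((r+1+i:ℕ):ℤ)):ℚ)) := by push_cast; rfl
  have hr0 : ((r ! : ℕ):ℚ) ≠ 0 := Nat.cast_ne_zero.2 (Nat.factorial_ne_zero r)
  have e2 : (∏ i ∈ Finset.range M, ((((r+1+i:ℕ):ℤ)):ℚ)) = (((M+r)!:ℕ):ℚ) * (((r !:ℕ):ℚ))⁻¹ := by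
    have h4 := congrArg (fun n : ℕ => (n:ℚ)) (prod_shift_factorial r M)
    push_cast at h4
    rw [eq_mul_inv_iff_mul_eq₀ hr0]
    push_cast
    exact h4
  have e3 : (∑ i ∈ Finset.range M, (((((r+1+i:ℕ):ℤ)):ℚ))⁻¹) = harm (M+r) - harm r := by
    rw [harm_sub (by omega : r ≤ M+r), ← Finset.Ico_add_one_right_eq_Icc, Finset.sum_Ico_eq_sum_range,
      show M+r+1-(r+1) = M by omega]
    push_cast
    rfl
  rw [e2, e3] at h
  rw [e1]
  exact pcong.trans hp h (pcong.of_eq hp (by ring))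

open Finset Nat in
theorem S_cong {p M r : ℕ} (hp : p.Prime) (h3 : 3 < p) (hM : 2*M+1 = p)
    (hr1 : 1 ≤ r) (hrM : r ≤ M) :
    pcong p 1 (harm (r-1) + (-(harm (M-r))) + (harm (M+r) - harm r)) (-((r:ℚ))⁻¹) := by
  have hsym : pcong p 1 (harm (M+r) - harm (M-r)) 0 := by
    rw [harm_sub (by omega : M-r ≤ M+r)]
    refine sum_inv_symm hp (by omega) _ ?_ ?_
    · intro j hj; rw [Finset.mem_Icc] at hj; omega
    · intro j hj; rw [Finset.mem_Icc] at hj ⊢; omega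
  have hrr : harm r = harm (r-1) + ((r:ℚ))⁻¹ := by
    have h1 := harm_succ (r-1)
    rw [show r-1+1 = r by omega] at h1
    have e : ((r-1:ℕ):ℚ)+1 = (r:ℚ) := by
      push_cast [Nat.cast_sub (by omega : 1 ≤ r)]; ring
    rw [e] at h1
    exact h1
  have e4 : harm (r-1) + (-(harm (M-r))) + (harm (M+r) - harm r)
      = (harm (M+r) - harm (M-r)) + (-((r:ℚ))⁻¹) := by
    rw [hrr]; ring
  rw [e4]
  refine pcong.trans hp (pcong.add hp hsym (pcong.refl hp 1 (-((r:ℚ))⁻¹)))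
    (pcong.of_eq hp (by ring))

open Finset Nat in
theorem ratio_cong {p M j : ℕ} (hp : p.Prime) (h3 : 3 < p) (hM : 2*M+1 = p)
    (hj1 : 1 ≤ j) (hjM : j ≤ M) :
    pcong p 2 (((M:ℚ)+(j:ℚ)) * (((M:ℚ)+1-(j:ℚ)))⁻¹)
      (-(1 + (p:ℚ)*(2*((((2*j-1:ℕ)):ℚ))⁻¹))) := by
  have hMQ : (M:ℚ) = ((p:ℚ)-1)/2 := by
    have h1 := congrArg (fun n : ℕ => (n:ℚ)) hM
    push_cast at h1
    linarith
  have hd : ((2*j-1:ℕ):ℚ) = 2*(j:ℚ)-1 := by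
    push_cast [Nat.cast_sub (by omega : 1 ≤ 2*j)]
    ring
  have hd0' : (2*j-1 : ℕ) ≠ 0 := by omega
  have hd0 : (2*(j:ℚ)-1) ≠ 0 := by rw [← hd]; exact Nat.cast_ne_zero.2 hd0'
  have hpdc : ((p-(2*j-1):ℕ):ℚ) = (p:ℚ) - (2*(j:ℚ)-1) := by
    push_cast [Nat.cast_sub (by omega : 2*j-1 ≤ p), Nat.cast_sub (by omega : 1 ≤ 2*j)]
    ring
  have hpd0 : (p:ℚ) - (2*(j:ℚ)-1) ≠ 0 := by
    rw [← hpdc]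
    exact Nat.cast_ne_zero.2 (by omega)
  have hM1j : (M:ℚ)+1-(j:ℚ) = ((p:ℚ) - (2*(j:ℚ)-1))/2 := by
    rw [hMQ]; ring
  have hM1j0 : (M:ℚ)+1-(j:ℚ) ≠ 0 := by
    rw [hM1j]
    intro h
    exact hpd0 (by linarith)
  refine pcong.intro
    (z := 2 * (((((2*j-1:ℕ)):ℚ))⁻¹ * ((((p-(2*j-1):ℕ)):ℚ))⁻¹)) ?_ ?_
  · exact pint.mul hp (pint.natCast hp 2)
      (pint.mul hp (pint.inv_nat hp (not_dvd_of_lt (by omega) (by omega)))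
        (pint.inv_nat hp (not_dvd_of_lt (by omega) (by omega))))
  · rw [hd, hpdc, hM1j, hMQ]
    field_simp
    ring

open Finset Nat in
theorem const_cong {p M r : ℕ} (hp : p.Prime) (h3 : 3 < p) (hM : 2*M+1 = p)
    (hr1 : 1 ≤ r) (hrM : r ≤ M) :
    pcong p 2
      ((-1:ℚ)^M * ((((r-1)! : ℕ):ℚ) * ((-1:ℚ)^(M-r) * (((M-r)! : ℕ):ℚ))
          * ((((M+r)! : ℕ):ℚ) * (((r ! : ℕ):ℚ))⁻¹))
        * ((((M ! : ℕ):ℚ))⁻¹ * (((M ! : ℕ):ℚ))⁻¹))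
      (((r:ℚ))⁻¹ * (1 + (p:ℚ) * (2*(((2:ℚ)^(p-1) - 1)/p) + harm (M-r)))) := by
  set q : ℚ := ((2:ℚ)^(p-1) - 1)/p with hq
  set D : ℚ := ∑ j ∈ Finset.Icc 1 r, ((((2*j-1:ℕ)):ℚ))⁻¹ with hD
  set Lexp : ℚ := (-1:ℚ)^M * ((((r-1)! : ℕ):ℚ) * ((-1:ℚ)^(M-r) * (((M-r)! : ℕ):ℚ))
          * ((((M+r)! : ℕ):ℚ) * (((r ! : ℕ):ℚ))⁻¹))
        * ((((M ! : ℕ):ℚ))⁻¹ * (((M ! : ℕ):ℚ))⁻¹) with hLexp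
  have hM0 : ((M ! : ℕ):ℚ) ≠ 0 := Nat.cast_ne_zero.2 (Nat.factorial_ne_zero M)
  have hr0 : ((r ! : ℕ):ℚ) ≠ 0 := Nat.cast_ne_zero.2 (Nat.factorial_ne_zero r)
  have hMr0 : (((M-r)! : ℕ):ℚ) ≠ 0 := Nat.cast_ne_zero.2 (Nat.factorial_ne_zero (M-r))
  have hrQ : (r:ℚ) ≠ 0 := Nat.cast_ne_zero.2 (by omega)
  have hA : (∏ j ∈ Finset.Icc 1 r, ((M:ℚ)+(j:ℚ))) * ((M ! : ℕ):ℚ) = (((M+r)! : ℕ):ℚ) := by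
    have h8 := congrArg (fun n : ℕ => (n:ℚ)) (prod_shift_factorial M r)
    push_cast at h8
    rw [prod_Icc_one (fun j => (M:ℚ)+(j:ℚ)) r]
    have e9 : ∏ i ∈ Finset.range r, ((M:ℚ)+(((i+1:ℕ)):ℚ))
        = ∏ i ∈ Finset.range r, ((M:ℚ)+1+(i:ℚ)) :=
      Finset.prod_congr rfl fun i hi => by push_cast; ring
    rw [e9, show M+r = r+M by omega]
    exact h8
  have hB : (∏ j ∈ Finset.Icc 1 r, ((M:ℚ)+1-(j:ℚ))) * (((M-r)! : ℕ):ℚ) = ((M ! : ℕ):ℚ) := by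
    have e10 : ∏ j ∈ Finset.Icc 1 r, ((M:ℚ)+1-(j:ℚ))
        = ((∏ j ∈ Finset.Icc 1 r, (M+1-j) : ℕ):ℚ) := by
      rw [Nat.cast_prod]
      refine Finset.prod_congr rfl fun j hj => ?_
      rw [Finset.mem_Icc] at hj
      rw [Nat.cast_sub (by omega : j ≤ M+1)]
      push_cast
      ring
    rw [e10, ← Nat.cast_mul, prod_Icc_sub_factorial hrM]
  set R : ℚ := ∏ j ∈ Finset.Icc 1 r, (((M:ℚ)+(j:ℚ)) * (((M:ℚ)+1-(j:ℚ)))⁻¹) with hRdef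
  have hprodB0 : (∏ j ∈ Finset.Icc 1 r, ((M:ℚ)+1-(j:ℚ))) ≠ 0 := by
    intro h
    rw [h, zero_mul] at hB
    exact hM0 hB.symm
  have hR : R = (((M+r)! : ℕ):ℚ) * (((M-r)! : ℕ):ℚ) * (((M ! : ℕ):ℚ))⁻¹ * (((M ! : ℕ):ℚ))⁻¹ := by
    have hA' : (∏ j ∈ Finset.Icc 1 r, ((M:ℚ)+(j:ℚ))) = (((M+r)! : ℕ):ℚ) * (((M ! : ℕ):ℚ))⁻¹ :=
      (eq_mul_inv_iff_mul_eq₀ hM0).2 hA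
    have hB' : (∏ j ∈ Finset.Icc 1 r, ((M:ℚ)+1-(j:ℚ))) = ((M ! : ℕ):ℚ) * ((((M-r)! : ℕ):ℚ))⁻¹ :=
      (eq_mul_inv_iff_mul_eq₀ hMr0).2 hB
    rw [hRdef, Finset.prod_mul_distrib, Finset.prod_inv_distrib, hA', hB', mul_inv, inv_inv]
    field_simp
  have hfr : (r:ℚ) * (((r-1)! : ℕ):ℚ) = ((r ! : ℕ):ℚ) := by
    have h11 : r ! = r * (r-1)! := by
      conv_lhs => rw [show r = (r-1)+1 by omega]
      rw [Nat.factorial_succ, show r-1+1 = r by omega]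
    rw [h11]
    push_cast
    ring
  have hsgn : (-1:ℚ)^M * (-1:ℚ)^(M-r) = (-1:ℚ)^r := by
    rw [← pow_add, show M+(M-r) = 2*(M-r)+r by omega, pow_add, pow_mul]
    norm_num
  have hrL : (r:ℚ) * Lexp = (-1:ℚ)^r * R := by
    rw [hR, hLexp]
    have expand : (r:ℚ) * ((-1:ℚ)^M * ((((r-1)! : ℕ):ℚ) * ((-1:ℚ)^(M-r) * (((M-r)! : ℕ):ℚ))
          * ((((M+r)! : ℕ):ℚ) * (((r ! : ℕ):ℚ))⁻¹))
        * ((((M ! : ℕ):ℚ))⁻¹ * (((M ! : ℕ):ℚ))⁻¹))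
        = ((-1:ℚ)^M * (-1:ℚ)^(M-r)) * (((r:ℚ) * (((r-1)! : ℕ):ℚ)) * (((r ! : ℕ):ℚ))⁻¹)
          * ((((M-r)! : ℕ):ℚ) * (((M+r)! : ℕ):ℚ) * (((M ! : ℕ):ℚ))⁻¹ * (((M ! : ℕ):ℚ))⁻¹) := by
      ring
    rw [expand, hfr, mul_inv_cancel₀ hr0, hsgn]
    ring
  have hRfac : pcong p 2 R ((-1:ℚ)^r * (1 + (p:ℚ)*(2*D))) := by
    have hper : ∀ j ∈ Finset.Icc 1 r, pcong p 2 (((M:ℚ)+(j:ℚ)) * (((M:ℚ)+1-(j:ℚ)))⁻¹)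
        (-(1 + (p:ℚ)*(2*((((2*j-1:ℕ)):ℚ))⁻¹))) := by
      intro j hj
      rw [Finset.mem_Icc] at hj
      exact ratio_cong hp h3 hM (by omega) (by omega)
    have hfpint : ∀ j ∈ Finset.Icc 1 r, pint p (((M:ℚ)+(j:ℚ)) * (((M:ℚ)+1-(j:ℚ)))⁻¹) := by
      intro j hj
      rw [Finset.mem_Icc] at hj
      have e : ((M:ℚ)+(j:ℚ)) * (((M:ℚ)+1-(j:ℚ)))⁻¹
          = (((M+j:ℕ)):ℚ) * ((((M+1-j:ℕ)):ℚ))⁻¹ := by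
        rw [Nat.cast_sub (by omega : j ≤ M+1)]
        push_cast
        ring_nf
      rw [e]
      exact pint.mul hp (pint.natCast hp _) (pint.inv_nat hp (not_dvd_of_lt (by omega) (by omega)))
    have hgpint : ∀ j ∈ Finset.Icc 1 r, pint p (-(1 + (p:ℚ)*(2*((((2*j-1:ℕ)):ℚ))⁻¹))) := by
      intro j hj
      rw [Finset.mem_Icc] at hj
      refine pint.neg (pint.add hp (pint.one hp) (pint.mul hp (pint.natCast hp p)
        (pint.mul hp (pint.natCast hp 2) (pint.inv_nat hp (not_dvd_of_lt (by omega) (by omega))))))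
    have h1 := pcong.prod hp hper hfpint hgpint
    have h2 : ∏ j ∈ Finset.Icc 1 r, (-(1 + (p:ℚ)*(2*((((2*j-1:ℕ)):ℚ))⁻¹)))
        = (-1:ℚ)^r * ∏ j ∈ Finset.Icc 1 r, (1 + (p:ℚ)*(2*((((2*j-1:ℕ)):ℚ))⁻¹)) := by
      have h6 : ∀ j ∈ Finset.Icc 1 r, (-(1 + (p:ℚ)*(2*((((2*j-1:ℕ)):ℚ))⁻¹)))
          = (-1) * (1 + (p:ℚ)*(2*((((2*j-1:ℕ)):ℚ))⁻¹)) := fun j hj => by ring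
      rw [Finset.prod_congr rfl h6, Finset.prod_mul_distrib, Finset.prod_const, Nat.card_Icc,
        show r+1-1 = r by omega]
    have h3' := prod_one_add hp (Finset.Icc 1 r) (fun j => 2*((((2*j-1:ℕ)):ℚ))⁻¹)
      (fun j hj => by
        rw [Finset.mem_Icc] at hj
        exact pint.mul hp (pint.natCast hp 2) (pint.inv_nat hp (not_dvd_of_lt (by omega) (by omega))))
    have h4 : ∑ j ∈ Finset.Icc 1 r, 2*((((2*j-1:ℕ)):ℚ))⁻¹ = 2*D := by
      rw [hD, Finset.mul_sum]
    rw [h4] at h3'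
    refine pcong.trans hp (pcong.trans hp h1 (pcong.of_eq hp h2)) ?_
    exact pcong.mul_left hp (pint.pow hp (pint.neg_one hp) r) h3'
  have hDq : pcong p 2 (1 + (p:ℚ)*(2*D)) (1 + (p:ℚ)*(2*q + harm (M-r))) := by
    have h7 : pcong p 1 (2*D) (harm (M-r) - harm M) := odd_sum hp h3 hM hr1 hrM
    have h9 := harm_half hp h3 hM
    have h8 : pcong p 1 (harm (M-r) - harm M) (2*q + harm (M-r)) := by
      refine pcong.trans hp (pcong.sub hp (pcong.refl hp 1 (harm (M-r))) h9)
        (pcong.of_eq hp (by rw [hq]; ring))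
    exact pcong.add hp (pcong.refl hp 2 1) (pcong.mul_p hp (pcong.trans hp h7 h8))
  have hrc : pcong p 2 ((r:ℚ) * Lexp) (1 + (p:ℚ)*(2*q + harm (M-r))) := by
    rw [hrL]
    have h12 := pcong.mul_left hp (pint.pow hp (pint.neg_one hp) r) hRfac
    have h13 : (-1:ℚ)^r * ((-1:ℚ)^r * (1 + (p:ℚ)*(2*D))) = 1 + (p:ℚ)*(2*D) := by
      rw [← mul_assoc, ← pow_add]
      have : (-1:ℚ)^(r+r) = 1 := Even.neg_one_pow ⟨r, by omega⟩
      rw [this, one_mul]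
    refine pcong.trans hp (pcong.trans hp h12 (pcong.of_eq hp h13)) hDq
  have hdvdr : ¬ (p:ℤ) ∣ (r:ℤ) := by
    rw [Int.natCast_dvd_natCast]
    exact not_dvd_of_lt (by omega) (by omega)
  refine pcong.div_int hp (k := (r:ℤ)) hdvdr (by exact_mod_cast (show r ≠ 0 by omega)) ?_
  have hcast : (((r:ℤ)):ℚ) = (r:ℚ) := by push_cast; rfl
  rw [hcast, mul_inv_cancel_left₀ hrQ]
  exact hrc

theorem key_lemma_small_r (p : ℕ) (hp : p.Prime) (h3 : 3 < p)
    (r : ℕ) (hr1 : 1 ≤ r) (hr2 : r ≤ p - 1) (hr : 2*r < p)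
    (t : ℚ) (ht : ¬ (p ∣ t.den)) :
    pcong p 3
      (qchoose ((p:ℚ)*t + r - 1) ((p-1)/2) * qchoose (-((p:ℚ)*t) - r - 1) ((p-1)/2))
      ((p:ℚ)*t/r
        + (p:ℚ)^2*t/r * (2*(((2:ℚ)^(p-1) - 1)/p) + harm ((p-1)/2 - r))
        - (p:ℚ)^2*t^2/r^2) := by
  have ht' : pint p t := ht
  have hodd : Odd p := hp.odd_of_ne_two (by omega)
  obtain ⟨m0, hm0⟩ := hodd
  set M := (p-1)/2 with hMdef
  have hM : 2*M+1 = p := by omega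
  have hrM : r ≤ M := by omega
  have hrp : r < p := by omega
  have hM0 : ((Nat.factorial M : ℕ):ℚ) ≠ 0 := Nat.cast_ne_zero.2 (Nat.factorial_ne_zero M)
  have hrQ : (r:ℚ) ≠ 0 := Nat.cast_ne_zero.2 (by omega)
  set x : ℚ := (p:ℚ)*t with hx
  set P1 : ℚ := ∏ j ∈ Finset.Icc 1 (r-1), (x + (j:ℚ)) with hP1def
  set P2 : ℚ := ∏ j ∈ Finset.Icc 1 (M-r), (x - (j:ℚ)) with hP2def
  set P3 : ℚ := ∏ i ∈ Finset.range M, (x + ((r+1+i:ℕ):ℚ)) with hP3def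
  set u : ℚ := (-1:ℚ)^M * t * (((Nat.factorial M : ℕ):ℚ))⁻¹ * (((Nat.factorial M : ℕ):ℚ))⁻¹ with hu
  have hAB : qchoose ((p:ℚ)*t + r - 1) M * qchoose (-((p:ℚ)*t) - r - 1) M
      = (p:ℚ)^1 * u * (P1 * P2 * P3) := by
    unfold qchoose
    rw [show ((p:ℚ)*t + r - 1) = (x + r - 1) from rfl]
    rw [num1_eq x r M hr1 hrM]
    rw [show (-((p:ℚ)*t) - r - 1) = (-x - r - 1) from rfl]
    rw [num2_eq x r M]
    rw [← hP1def, ← hP2def, ← hP3def, hu, hx]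
    field_simp
  -- p-integrality facts
  have hpP : pint p ((p:ℚ)) := pint.natCast hp p
  have hxint : pint p x := pint.mul hp hpP ht'
  have hpintP2 : pint p P2 := pint.prod hp fun j hj =>
    pint.sub hp hxint (pint.natCast hp j)
  have hpintP3 : pint p P3 := pint.prod hp fun i hi =>
    pint.add hp hxint (pint.natCast hp _)
  have hharm1 : pint p (harm (r-1)) := pint_harm hp (by omega)
  have hharm2 : pint p (harm (M-r)) := pint_harm hp (by omega)
  have hharm3 : pint p (harm (M+r)) := pint_harm hp (by omega)
  have hharm4 : pint p (harm r) := pint_harm hp (by omega)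
  set a1 : ℚ := t * harm (r-1) with ha1
  set a2 : ℚ := t * (-(harm (M-r))) with ha2
  set a3 : ℚ := t * (harm (M+r) - harm r) with ha3
  have ha1int : pint p a1 := pint.mul hp ht' hharm1
  have ha2int : pint p a2 := pint.mul hp ht' (pint.neg hharm2)
  have ha3int : pint p a3 := pint.mul hp ht' (pint.sub hp hharm3 hharm4)
  set X1 : ℚ := 1 + (p:ℚ)*a1 with hX1
  set X2 : ℚ := 1 + (p:ℚ)*a2 with hX2
  set X3 : ℚ := 1 + (p:ℚ)*a3 with hX3
  have hX1int : pint p X1 := pint.add hp (pint.one hp) (pint.mul hp hpP ha1int)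
  have hX2int : pint p X2 := pint.add hp (pint.one hp) (pint.mul hp hpP ha2int)
  have hX3int : pint p X3 := pint.add hp (pint.one hp) (pint.mul hp hpP ha3int)
  set Q1 : ℚ := ((Nat.factorial (r-1) : ℕ):ℚ) with hQ1
  set Q2 : ℚ := (-1:ℚ)^(M-r) * ((Nat.factorial (M-r) : ℕ):ℚ) with hQ2
  set Q3 : ℚ := ((Nat.factorial (M+r) : ℕ):ℚ) * (((Nat.factorial r : ℕ):ℚ))⁻¹ with hQ3
  have hQ1int : pint p Q1 := pint.natCast hp _
  have hQ2int : pint p Q2 := pint.mul hp (pint.pow hp (pint.neg_one hp) _) (pint.natCast hp _)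
  have hQ3int : pint p Q3 := pint.mul hp (pint.natCast hp _)
    (pint.inv_nat hp (by rw [hp.dvd_factorial]; omega))
  have h1 : pcong p 2 P1 (Q1 * X1) := hP1_cong hp (by omega) ht'
  have h2 : pcong p 2 P2 (Q2 * X2) := hP2_cong hp (by omega) ht'
  have h3' : pcong p 2 P3 (Q3 * X3) := hP3_cong hp (by omega) ht'
  have hmul12 := pcong.mul hp h1 h2
    (pint.mul hp hQ1int hX1int) hpintP2
  have hmul123 := pcong.mul hp hmul12 h3'
    (pint.mul hp (pint.mul hp hQ1int hX1int) (pint.mul hp hQ2int hX2int)) hpintP3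
  set Sval : ℚ := harm (r-1) + (-(harm (M-r))) + (harm (M+r) - harm r) with hSval
  set Qval : ℚ := Q1 * Q2 * Q3 with hQval
  have hQvalint : pint p Qval := pint.mul hp (pint.mul hp hQ1int hQ2int) hQ3int
  have h3f := three_factor hp ha1int ha2int ha3int
  have hNQ : pcong p 2 (P1 * P2 * P3) (Qval * (1 + (p:ℚ)*(t*Sval))) := by
    refine pcong.trans hp hmul123 ?_
    refine pcong.trans hp (pcong.of_eq hp (show (Q1*X1)*(Q2*X2)*(Q3*X3)
      = Qval * (X1*X2*X3) by rw [hQval]; ring)) ?_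
    refine pcong.trans hp (pcong.mul_left hp hQvalint (by rw [hX1, hX2, hX3]; exact h3f)) ?_
    refine pcong.of_eq hp ?_
    rw [hSval, ha1, ha2, ha3]
    ring
  have huint : pint p u := by
    rw [hu]
    have hMfac : ¬ p ∣ Nat.factorial M := by rw [hp.dvd_factorial]; omega
    exact pint.mul hp (pint.mul hp (pint.mul hp (pint.pow hp (pint.neg_one hp) M) ht')
      (pint.inv_nat hp hMfac)) (pint.inv_nat hp hMfac)
  have hstep := pcong.mul_pk hp (k := 1) huint hNQ
  have hchain1 : pcong p 3 (qchoose ((p:ℚ)*t + r - 1) M * qchoose (-((p:ℚ)*t) - r - 1) M)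
      ((p:ℚ)^1 * u * (Qval * (1 + (p:ℚ)*(t*Sval)))) := by
    refine pcong.trans hp (pcong.of_eq hp hAB) ?_
    exact hstep
  set cQ : ℚ := (-1:ℚ)^M * Qval * (((Nat.factorial M : ℕ):ℚ))⁻¹ * (((Nat.factorial M : ℕ):ℚ))⁻¹ with hcQ
  have hsplit : (p:ℚ)^1 * u * (Qval * (1 + (p:ℚ)*(t*Sval)))
      = (p:ℚ)*t*cQ + (p:ℚ)^2*(t*t)*(cQ*Sval) := by
    rw [hcQ, hu]
    ring
  have hconst0 := const_cong hp h3 hM hr1 hrM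
  have hconst : pcong p 2 cQ
      (((r:ℚ))⁻¹ * (1 + (p:ℚ) * (2*(((2:ℚ)^(p-1) - 1)/p) + harm (M-r)))) := by
    refine pcong.trans hp (pcong.of_eq hp ?_) hconst0
    rw [hcQ, hQval, hQ1, hQ2, hQ3]
    ring
  have hterm1 : pcong p 3 ((p:ℚ)*t*cQ)
      ((p:ℚ)*t*(((r:ℚ))⁻¹ * (1 + (p:ℚ) * (2*(((2:ℚ)^(p-1) - 1)/p) + harm (M-r))))) := by
    have h5 := pcong.mul_pk hp (k := 1) ht' hconst
    refine pcong.trans hp (pcong.of_eq hp (by ring)) (pcong.trans hp h5 (pcong.of_eq hp (by ring)))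
  have hqint := pint_q hp h3
  have hwint : pint p (2*(((2:ℚ)^(p-1) - 1)/p) + harm (M-r)) :=
    pint.add hp (pint.mul hp (pint.natCast hp 2) hqint) hharm2
  have hrinv : pint p (((r:ℚ))⁻¹) := pint.inv_nat hp (not_dvd_of_lt (by omega) hrp)
  have hcq1 : pcong p 1 cQ (((r:ℚ))⁻¹) := by
    refine pcong.trans hp (pcong.mono hp (by omega) hconst) ?_
    refine pcong.intro (z := ((r:ℚ))⁻¹ * (2*(((2:ℚ)^(p-1) - 1)/p) + harm (M-r)))
      (pint.mul hp hrinv hwint) ?_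
    ring
  have hS : pcong p 1 Sval (-((r:ℚ))⁻¹) := by
    rw [hSval]
    exact S_cong hp h3 hM hr1 hrM
  have hSint : pint p Sval := by
    rw [hSval]
    exact pint.add hp (pint.add hp hharm1 (pint.neg hharm2)) (pint.sub hp hharm3 hharm4)
  have hcs := pcong.mul hp hcq1 hS hrinv hSint
  have hterm2 : pcong p 3 ((p:ℚ)^2*(t*t)*(cQ*Sval))
      ((p:ℚ)^2*(t*t)*(((r:ℚ))⁻¹ * (-((r:ℚ))⁻¹))) :=
    pcong.mul_pk hp (k := 2) (pint.mul hp ht' ht') hcs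
  have hsum := pcong.add hp hterm1 hterm2
  refine pcong.trans hp hchain1 ?_
  refine pcong.trans hp (pcong.of_eq hp hsplit) ?_
  refine pcong.trans hp hsum (pcong.of_eq hp ?_)
  field_simp
  ring
end
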